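/- arXiv:math/9611205 — 4 statements merged into one kernel-verified Lean document; each statement's English description precedes it below -/
import Mathlib

section
/- If H is a subgroup of finite index in a group G and H has a finite complete rewriting system, then G has a finite complete rewriting system. -/
/-- One step of rewriting: `w` rewrites to `w'` by replacing a factor `u`
(the left-hand side of a rule in `R`) with `v` (the right-hand side). -/
def RewStep {α : Type} (R : Set (FreeMonoid α × FreeMonoid α))
    (w w' : FreeMonoid α) : Prop :=
  ∃ x u v y : FreeMonoid α, (u, v) ∈ R ∧ w = x * u * y ∧ w' = x * v * y

/-- A word is irreducible if it contains no left-hand side of a rule as a factor. -/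
def RewIrreducible {α : Type} (R : Set (FreeMonoid α × FreeMonoid α))
    (w : FreeMonoid α) : Prop :=
  ¬ ∃ x u v y : FreeMonoid α, (u, v) ∈ R ∧ w = x * u * y

/-- `(π, R)` is a complete rewriting system for the group `G`:
(i) the induced monoid homomorphism `A* → G` is surjective and the monoid presented by
`⟨A ∣ u = v, (u,v) ∈ R⟩` maps isomorphically onto `G` (its defining congruence is exactly
the kernel congruence of the evaluation);
(ii) there is no infinite sequence of rewritings (Noetherian);
(iii) every element of `G` has exactly one irreducible representative word. -/
def IsCompleteRewritingSystem {α : Type} {G : Type*} [Group G] (π : α → G)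
    (R : Set (FreeMonoid α × FreeMonoid α)) : Prop :=
  Function.Surjective (FreeMonoid.lift π) ∧
  (∀ u v : FreeMonoid α,
      FreeMonoid.lift π u = FreeMonoid.lift π v ↔
        conGen (fun w w' => (w, w') ∈ R) u v) ∧
  (∀ f : ℕ → FreeMonoid α, ¬ ∀ m : ℕ, RewStep R (f m) (f (m + 1))) ∧
  (∀ g : G, ∃! w : FreeMonoid α, FreeMonoid.lift π w = g ∧ RewIrreducible R w)

/-- A group has a finite complete rewriting system if there are a finite alphabet `α`,
a map `π : α → G` and a finite set of rules `R` forming a complete rewriting system. -/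
def HasFiniteCompleteRewritingSystem (G : Type*) [Group G] : Prop :=
  ∃ (α : Type) (_ : Finite α) (π : α → G)
    (R : Set (FreeMonoid α × FreeMonoid α)),
    R.Finite ∧ IsCompleteRewritingSystem π R

namespace FcrsAux


variable {α : Type} {R : Set (FreeMonoid α × FreeMonoid α)}

theorem rewStep_context {u u' : FreeMonoid α} (x y : FreeMonoid α)
    (h : RewStep R u u') : RewStep R (x * u * y) (x * u' * y) := by
  obtain ⟨a, b, c, d, hR, rfl, rfl⟩ := h
  exact ⟨x * a, b, c, d * y, hR, by group, by group⟩

theorem irreducible_factor {u : FreeMonoid α} (x y : FreeMonoid α)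
    (h : RewIrreducible R (x * u * y)) : RewIrreducible R u := by
  rintro ⟨a, b, c, d, hR, rfl⟩
  exact h ⟨x * a, b, c, d * y, hR, by group⟩

/-- from no infinite rewriting sequences to well-foundedness of the reversed step relation. -/
theorem wf_of_noInf
    (h : ∀ f : ℕ → FreeMonoid α, ¬ ∀ m : ℕ, RewStep R (f m) (f (m + 1))) :
    WellFounded (fun a b => RewStep R b a) := by
  by_contra hwf
  have : ∃ a, ¬ Acc (fun a b => RewStep R b a) a := by
    by_contra h'
    push_neg at h'
    exact hwf ⟨h'⟩
  obtain ⟨a0, ha0⟩ := this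
  have step : ∀ a : {a : FreeMonoid α // ¬ Acc (fun a b => RewStep R b a) a},
      ∃ b : {a : FreeMonoid α // ¬ Acc (fun a b => RewStep R b a) a}, RewStep R a.1 b.1 := by
    rintro ⟨a, ha⟩
    by_contra hb
    push_neg at hb
    refine ha (Acc.intro a ?_)
    intro b hba
    by_contra hb'
    exact hb ⟨b, hb'⟩ hba
  choose nxt hnxt using step
  exact h (fun n => (nxt^[n] ⟨a0, ha0⟩).1) (fun m => by
    show RewStep R (nxt^[m] ⟨a0, ha0⟩).1 (nxt^[m+1] ⟨a0, ha0⟩).1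
    rw [show m + 1 = m + 1 from rfl, Function.iterate_succ_apply']
    exact hnxt _)

theorem noInf_of_wf (h : WellFounded (fun a b : FreeMonoid α => RewStep R b a)) :
    ∀ f : ℕ → FreeMonoid α, ¬ ∀ m : ℕ, RewStep R (f m) (f (m + 1)) := by
  intro f hf
  have hacc := h.apply (f 0)
  have : ∀ a, Acc (fun a b => RewStep R b a) a → ∀ n, f n = a → False := by
    intro a hacc
    induction hacc with
    | intro a _ ih =>
      intro n hn
      exact ih (f (n+1)) (hn ▸ hf n) (n+1) rfl
  exact this (f 0) hacc 0 rfl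

/-- there is no rule with empty left-hand side, provided something irreducible exists. -/
theorem no_eps_rule {w : FreeMonoid α} (hw : RewIrreducible R w)
    {v : FreeMonoid α} (hv : ((1 : FreeMonoid α), v) ∈ R) : False :=
  hw ⟨1, 1, v, w, hv, by group⟩



variable {α : Type} {R : Set (FreeMonoid α × FreeMonoid α)}

theorem rewStep_context' {u u' : FreeMonoid α} (x y : FreeMonoid α)
    (h : RewStep R u u') : RewStep R (x * u * y) (x * u' * y) := by
  obtain ⟨a, b, c, d, hR, rfl, rfl⟩ := h
  exact ⟨x * a, b, c, d * y, hR, by group, by group⟩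

/-- The relation on segments: one rewriting step, or dropping the last letter.
`SegRel R s t` means `s` is "smaller" (obtained from) `t`. -/
def SegRel (R : Set (FreeMonoid α × FreeMonoid α)) (s t : List α) : Prop :=
  RewStep R (FreeMonoid.ofList t) (FreeMonoid.ofList s) ∨ ∃ a, t = s ++ [a]

theorem segRel_wf (hwf : WellFounded (fun a b : FreeMonoid α => RewStep R b a)) :
    WellFounded (SegRel R) := by
  have hstep : ∀ (t t' : List α) (a : α), RewStep R (FreeMonoid.ofList t) (FreeMonoid.ofList t') →
      RewStep R (FreeMonoid.ofList (t ++ [a])) (FreeMonoid.ofList (t' ++ [a])) := by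
    intro t t' a h
    have := rewStep_context' (R := R) 1 (FreeMonoid.of a) h
    simpa [FreeMonoid.ofList_append, FreeMonoid.ofList_singleton] using this
  have aux : ∀ n : ℕ, ∀ t : List α, t.length ≤ n →
      (∀ s, RewStep R (FreeMonoid.ofList t) (FreeMonoid.ofList s) → Acc (SegRel R) s) →
      Acc (SegRel R) t := by
    intro n
    induction n with
    | zero =>
      intro t ht hstep'
      constructor
      intro s hs
      rcases hs with h | ⟨a, ha⟩
      · exact hstep' s h
      · rw [List.length_eq_zero_iff.mp (Nat.le_zero.mp ht)] at ha
        exact absurd ha.symm (List.append_ne_nil_of_right_ne_nil _ (by simp))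
    | succ n ih =>
      intro t ht hstep'
      constructor
      intro s hs
      rcases hs with h | ⟨a, ha⟩
      · exact hstep' s h
      · -- t = s ++ [a]
        refine ih s (by subst ha; simp at ht ⊢; omega) ?_
        intro s' hs'
        have h2 : RewStep R (FreeMonoid.ofList t) (FreeMonoid.ofList (s' ++ [a])) := by
          subst ha; exact hstep _ _ _ hs'
        have h3 : Acc (SegRel R) (s' ++ [a]) := hstep' _ h2
        exact h3.inv (Or.inr ⟨a, rfl⟩)
  have main : ∀ t : FreeMonoid α, Acc (fun a b => RewStep R b a) t → Acc (SegRel R) (FreeMonoid.toList t) := by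
    intro t ht
    induction ht with
    | intro t _ ih =>
      refine aux (FreeMonoid.toList t).length _ le_rfl ?_
      intro s hs
      exact ih (FreeMonoid.ofList s) (by simpa using hs)
  exact ⟨fun t => main (FreeMonoid.ofList t) (hwf.apply _)⟩



inductive LLex {W : Type*} (r : W → W → Prop) : List W → List W → Prop
  | head {a b : W} {t s : List W} : r a b → t.length = s.length → LLex r (a :: t) (b :: s)
  | tail {a : W} {t s : List W} : LLex r t s → LLex r (a :: t) (a :: s)

theorem LLex.length_eq {W : Type*} {r : W → W → Prop} :
    ∀ {l₁ l₂ : List W}, LLex r l₁ l₂ → l₁.length = l₂.length := by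
  intro l₁ l₂ h
  induction h with
  | head h hl => simpa using hl
  | tail h ih => simpa using ih


theorem LLex.wf {W : Type*} {r : W → W → Prop} (hr : WellFounded r) :
    WellFounded (LLex r) := by
  constructor
  intro l
  generalize hn : l.length = n
  induction n generalizing l with
  | zero =>
    have : l = [] := List.length_eq_zero_iff.mp hn
    subst this
    constructor
    intro l' h
    cases h
  | succ n ih =>
    match l, hn with
    | a :: t, hn =>
      have hn' : t.length = n := by simpa using hn
      have main : ∀ a : W, Acc r a → ∀ t : List W, t.length = n →
          Acc (LLex r) t → Acc (LLex r) (a :: t) := by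
        intro a ha
        induction ha with
        | intro a _ iha =>
          intro t htn hat
          induction hat with
          | intro t _ iht =>
            constructor
            rintro l' hl'
            cases hl' with
            | head hr' hlen =>
              rename_i b s
              exact iha b hr' s (by omega) (ih s (by omega))
            | tail h' =>
              rename_i s
              exact iht s h' (by have := h'.length_eq; omega)
      exact main a (hr.apply a) t hn' (ih t hn')

variable {γ δ : Type*}

/-- Splits a word over `γ ⊕ δ` into the list of maximal `γ`-segments. -/
def segs : List (γ ⊕ δ) → List (List γ)
  | [] => [[]]
  | Sum.inl a :: l => (a :: (segs l).headI) :: (segs l).tail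
  | Sum.inr _ :: l => [] :: segs l

theorem segs_ne_nil (l : List (γ ⊕ δ)) : segs l ≠ [] := by
  cases l with
  | nil => simp [segs]
  | cons c l => cases c <;> simp [segs]

theorem segs_cons_inl (a : γ) (l : List (γ ⊕ δ)) :
    segs (Sum.inl a :: l) = (a :: (segs l).headI) :: (segs l).tail := rfl

theorem segs_cons_inr (q : δ) (l : List (γ ⊕ δ)) :
    segs (Sum.inr q :: l) = [] :: segs l := rfl

theorem segs_inl_append (u : List γ) (l : List (γ ⊕ δ)) :
    segs (u.map Sum.inl ++ l) = (u ++ (segs l).headI) :: (segs l).tail := by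
  induction u with
  | nil =>
    simp
    obtain ⟨h0, t0, e0⟩ := List.exists_cons_of_ne_nil (segs_ne_nil l)
    rw [e0]; simp
  | cons a u ih =>
    simp only [List.map_cons, List.cons_append, segs_cons_inl, ih]
    simp

/-- the measure relation on segment lists -/
def MeasRel (r : List γ → List γ → Prop) (S' S : List (List γ)) : Prop :=
  S'.length < S.length ∨ LLex r S' S

theorem measRel_wf {r : List γ → List γ → Prop} (hr : WellFounded r) :
    WellFounded (MeasRel r) := by
  have h := (Nat.lt_wfRel.wf).prod_lex (LLex.wf hr)
  refine Subrelation.wf ?_ (InvImage.wf (fun S => ((S.length, S) : ℕ × List (List γ))) h)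
  intro S' S hS
  rcases hS with h1 | h2
  · exact Prod.Lex.left _ _ h1
  · have := h2.length_eq
    show Prod.Lex _ _ (S'.length, S') (S.length, S)
    rw [this]
    exact Prod.Lex.right _ h2

theorem measRel_cons {r : List γ → List γ → Prop}
    (hr : ∀ (a : γ) (s t : List γ), r s t → r (a :: s) (a :: t))
    (c : γ ⊕ δ) {m' m : List (γ ⊕ δ)} (h : MeasRel r (segs m') (segs m)) :
    MeasRel r (segs (c :: m')) (segs (c :: m)) := by
  cases c with
  | inr q =>
    rw [segs_cons_inr, segs_cons_inr]
    rcases h with h1 | h2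
    · exact Or.inl (by simpa using h1)
    · exact Or.inr (LLex.tail h2)
  | inl a =>
    obtain ⟨h0, t0, e0⟩ := List.exists_cons_of_ne_nil (segs_ne_nil m)
    obtain ⟨h1, t1, e1⟩ := List.exists_cons_of_ne_nil (segs_ne_nil m')
    rw [segs_cons_inl, segs_cons_inl, e0, e1]
    simp only [List.headI_cons, List.tail_cons]
    rw [e0, e1] at h
    rcases h with hl | hx
    · simp at hl
      exact Or.inl (by simpa using hl)
    · cases hx with
      | head hr' hlen => exact Or.inr (LLex.head (hr a _ _ hr') hlen)
      | tail h' => exact Or.inr (LLex.tail h')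

theorem measRel_append_left {r : List γ → List γ → Prop}
    (hr : ∀ (a : γ) (s t : List γ), r s t → r (a :: s) (a :: t))
    {m' m : List (γ ⊕ δ)} (h : MeasRel r (segs m') (segs m)) (x : List (γ ⊕ δ)) :
    MeasRel r (segs (x ++ m')) (segs (x ++ m)) := by
  induction x with
  | nil => simpa using h
  | cons c x ih => simpa using measRel_cons hr c ih



section Main

variable {G : Type} [Group G] (H : Subgroup G) {α : Type} (π : α → H)
  (R : Set (FreeMonoid α × FreeMonoid α))

/-- the distinguished coset `H` in `G ⧸ H`. -/
def q0 : G ⧸ H := QuotientGroup.mk 1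

open Classical in
/-- a section of the quotient map sending the trivial coset to `1`. -/
noncomputable def sec (q : G ⧸ H) : G := if q = q0 H then 1 else q.out

open Classical in
theorem sec_spec (q : G ⧸ H) : QuotientGroup.mk (sec H q) = q := by
  unfold sec
  split
  · rename_i h; rw [h]; rfl
  · exact QuotientGroup.out_eq' q

open Classical in
theorem sec_q0 : sec H (q0 H) = 1 := by simp [sec]

theorem sec_inv_mem (g : G) : (sec H (QuotientGroup.mk g))⁻¹ * g ∈ H := by
  rw [← QuotientGroup.eq]
  exact sec_spec H _

/-- the new alphabet -/
abbrev Beta (H : Subgroup G) (α : Type) : Type := α ⊕ {q : G ⧸ H // q ≠ q0 H}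

/-- letter evaluation in `G` -/
noncomputable def pi' : Beta H α → G :=
  Sum.elim (fun a => ((π a : H) : G)) (fun q => sec H q.1)

/-- embedding of old words into new words -/
def iota : FreeMonoid α →* FreeMonoid (Beta H α) := FreeMonoid.map Sum.inl

variable (huniq : ∀ g : H, ∃! w : FreeMonoid α,
    FreeMonoid.lift π w = g ∧ RewIrreducible R w)

/-- the chosen irreducible representative of an element of `H` -/
noncomputable def rep (h : H) : FreeMonoid α := (huniq h).exists.choose

theorem rep_lift (h : H) : FreeMonoid.lift π (rep H π R huniq h) = h :=
  (huniq h).exists.choose_spec.1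

theorem rep_irr (h : H) : RewIrreducible R (rep H π R huniq h) :=
  (huniq h).exists.choose_spec.2

theorem rep_unique {h : H} {w : FreeMonoid α} (h1 : FreeMonoid.lift π w = h)
    (h2 : RewIrreducible R w) : w = rep H π R huniq h := by
  obtain ⟨w', hw', hu⟩ := huniq h
  rw [hu w ⟨h1, h2⟩, hu (rep H π R huniq h) ⟨rep_lift H π R huniq h, rep_irr H π R huniq h⟩]

open Classical in
/-- head letter of the normal form of `g`. -/
noncomputable def hdw (g : G) : FreeMonoid (Beta H α) :=
  if h : (QuotientGroup.mk g : G ⧸ H) = q0 H then 1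
  else FreeMonoid.of (Sum.inr ⟨QuotientGroup.mk g, h⟩)

/-- the normal form of `g : G` in the new system. -/
noncomputable def tw (g : G) : FreeMonoid (Beta H α) :=
  hdw H g * iota H (rep H π R huniq ⟨(sec H (QuotientGroup.mk g))⁻¹ * g, sec_inv_mem H g⟩)

/-- the new rule set -/
noncomputable def Rules : Set (FreeMonoid (Beta H α) × FreeMonoid (Beta H α)) :=
  ((fun p : FreeMonoid α × FreeMonoid α => (iota H p.1, iota H p.2)) '' R) ∪
  (Set.range fun p : α × {q : G ⧸ H // q ≠ q0 H} =>
    ((FreeMonoid.of (Sum.inl p.1) * FreeMonoid.of (Sum.inr p.2) : FreeMonoid (Beta H α)),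
      tw H π R huniq (pi' H π (Sum.inl p.1) * pi' H π (Sum.inr p.2)))) ∪
  (Set.range fun p : {q : G ⧸ H // q ≠ q0 H} × {q : G ⧸ H // q ≠ q0 H} =>
    ((FreeMonoid.of (Sum.inr p.1) * FreeMonoid.of (Sum.inr p.2) : FreeMonoid (Beta H α)),
      tw H π R huniq (pi' H π (Sum.inr p.1) * pi' H π (Sum.inr p.2))))

theorem lift_iota (w : FreeMonoid α) :
    FreeMonoid.lift (pi' H π) (iota H w) = ((FreeMonoid.lift π w : H) : G) := by
  have : (FreeMonoid.lift (pi' H π)).comp (iota H) = H.subtype.comp (FreeMonoid.lift π) :=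
    FreeMonoid.hom_eq (fun a => rfl)
  exact DFunLike.congr_fun this w

theorem lift_hdw (g : G) :
    FreeMonoid.lift (pi' H π) (hdw H g) = sec H (QuotientGroup.mk g) := by
  unfold hdw
  split
  · rename_i h
    rw [h, sec_q0]
    simp
  · simp [pi']

theorem lift_tw (g : G) :
    FreeMonoid.lift (pi' H π) (tw H π R huniq g) = g := by
  unfold tw
  rw [map_mul, lift_hdw, lift_iota, rep_lift]
  simp

theorem rules_lift (hliftR : ∀ u v : FreeMonoid α, (u, v) ∈ R →
      FreeMonoid.lift π u = FreeMonoid.lift π v)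
    {p : FreeMonoid (Beta H α) × FreeMonoid (Beta H α)}
    (hp : p ∈ Rules H π R huniq) :
    FreeMonoid.lift (pi' H π) p.1 = FreeMonoid.lift (pi' H π) p.2 := by
  rcases hp with (⟨⟨u, v⟩, huv, rfl⟩ | ⟨⟨a, q⟩, rfl⟩) | ⟨⟨q, r⟩, rfl⟩
  · simp only [lift_iota]
    rw [hliftR u v huv]
  · simp only [map_mul, lift_tw]
    rfl
  · simp only [map_mul, lift_tw]
    rfl

theorem conGen_lift (hliftR : ∀ u v : FreeMonoid α, (u, v) ∈ R →
      FreeMonoid.lift π u = FreeMonoid.lift π v)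
    {u v : FreeMonoid (Beta H α)}
    (h : conGen (fun w w' => (w, w') ∈ Rules H π R huniq) u v) :
    FreeMonoid.lift (pi' H π) u = FreeMonoid.lift (pi' H π) v := by
  have hle : conGen (fun w w' => (w, w') ∈ Rules H π R huniq) ≤
      Con.ker (FreeMonoid.lift (pi' H π)) := by
    apply Con.conGen_le.mpr
    intro x y hxy
    exact rules_lift H π R huniq hliftR hxy
  exact hle h


/-! ### structure of irreducible words -/

theorem two_letter_rule (c : Beta H α) (q : {q : G ⧸ H // q ≠ q0 H}) :
    ∃ v, ((FreeMonoid.of c * FreeMonoid.of (Sum.inr q) : FreeMonoid (Beta H α)), v) ∈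
      Rules H π R huniq := by
  cases c with
  | inl a => exact ⟨_, Or.inl (Or.inr ⟨(a, q), rfl⟩)⟩
  | inr r => exact ⟨_, Or.inr ⟨(r, q), rfl⟩⟩

theorem irr_no_inr_inside {w : FreeMonoid (Beta H α)}
    (hw : RewIrreducible (Rules H π R huniq) w) (l₁ : List (Beta H α)) (c : Beta H α)
    (q : {q : G ⧸ H // q ≠ q0 H}) (l₂ : List (Beta H α))
    (h : FreeMonoid.toList w = l₁ ++ c :: Sum.inr q :: l₂) : False := by
  obtain ⟨v, hv⟩ := two_letter_rule H π R huniq c q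
  refine hw ⟨FreeMonoid.ofList l₁, _, v, FreeMonoid.ofList l₂, hv, ?_⟩
  apply FreeMonoid.toList.injective
  simp only [FreeMonoid.toList_mul, h]
  simp [FreeMonoid.toList_ofList]

theorem all_left_eq_map {l : List (Beta H α)} (h : ∀ x ∈ l, x.isLeft) :
    ∃ w₀ : List α, l = w₀.map Sum.inl := by
  induction l with
  | nil => exact ⟨[], rfl⟩
  | cons c l ih =>
    obtain ⟨w₀, rfl⟩ := ih (fun x hx => h x (List.mem_cons_of_mem _ hx))
    cases c with
    | inl a => exact ⟨a :: w₀, rfl⟩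
    | inr q => simpa using h (Sum.inr q) List.mem_cons_self

theorem shape_of_no_inr_inside {l : List (Beta H α)}
    (h : ∀ (l₁ : List (Beta H α)) (c : Beta H α) (q : {q : G ⧸ H // q ≠ q0 H})
      (l₂ : List (Beta H α)), l ≠ l₁ ++ c :: Sum.inr q :: l₂) :
    ∃ (p : List (Beta H α)) (w₀ : List α),
      l = p ++ w₀.map Sum.inl ∧ (p = [] ∨ ∃ q, p = [Sum.inr q]) := by
  cases l with
  | nil => exact ⟨[], [], rfl, Or.inl rfl⟩
  | cons c l' =>
    have hl' : ∀ x ∈ l', x.isLeft := by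
      intro x hx
      by_contra hx'
      have : ∃ q : {q : G ⧸ H // q ≠ q0 H}, x = Sum.inr q := by
        cases x with
        | inl a => simp at hx'
        | inr q => exact ⟨q, rfl⟩
      obtain ⟨q, rfl⟩ := this
      obtain ⟨l₁, l₂, rfl⟩ := List.append_of_mem hx
      rcases List.eq_nil_or_concat l₁ with rfl | ⟨l₁', c', rfl⟩
      · exact h [] c q l₂ rfl
      · exact h (c :: l₁') c' q l₂ (by simp)
    obtain ⟨w₀, rfl⟩ := all_left_eq_map H (h := hl')
    cases c with
    | inl a => exact ⟨[], a :: w₀, rfl, Or.inl rfl⟩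
    | inr q => exact ⟨[Sum.inr q], w₀, rfl, Or.inr ⟨q, rfl⟩⟩

theorem irr_iota_factor {w₀ : FreeMonoid α} (p : FreeMonoid (Beta H α))
    (hw : RewIrreducible (Rules H π R huniq) (p * iota H w₀)) :
    RewIrreducible R w₀ := by
  rintro ⟨x, u, v, y, hR, rfl⟩
  refine hw ⟨p * iota H x, iota H u, iota H v, iota H y, Or.inl (Or.inl ⟨(u, v), hR, rfl⟩), ?_⟩
  simp [map_mul, mul_assoc]

theorem irr_structure {w : FreeMonoid (Beta H α)}
    (hw : RewIrreducible (Rules H π R huniq) w) :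
    ∃ w₀ : FreeMonoid α, RewIrreducible R w₀ ∧
      (w = iota H w₀ ∨ ∃ q, w = FreeMonoid.of (Sum.inr q) * iota H w₀) := by
  obtain ⟨p, w₀, hl, hp⟩ := shape_of_no_inr_inside H
    (l := FreeMonoid.toList w)
    (fun l₁ c q l₂ hcontra => irr_no_inr_inside H π R huniq hw l₁ c q l₂ hcontra)
  have hw_eq : w = FreeMonoid.ofList p * iota H (FreeMonoid.ofList w₀) := by
    apply FreeMonoid.toList.injective
    simp only [FreeMonoid.toList_mul, hl, FreeMonoid.toList_ofList]
    rw [show FreeMonoid.toList ((iota H) (FreeMonoid.ofList w₀)) = List.map Sum.inl w₀ from rfl]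
  refine ⟨FreeMonoid.ofList w₀, ?_, ?_⟩
  · exact irr_iota_factor H π R huniq (FreeMonoid.ofList p) (hw_eq ▸ hw)
  · rcases hp with rfl | ⟨q, rfl⟩
    · left; rw [hw_eq]; simp
    · right; exact ⟨q, by rw [hw_eq]; rfl⟩


/-! ### irreducibility of the normal forms `tw g` -/

theorem no_eps {w : FreeMonoid α} (hirr : RewIrreducible R w)
    {v : FreeMonoid α} (hv : ((1 : FreeMonoid α), v) ∈ R) : False :=
  hirr ⟨1, 1, v, w, hv, by simp⟩

theorem inr_pos_lt (p : List (Beta H α)) (r₀ : List α) (x : List (Beta H α))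
    (q : {q : G ⧸ H // q ≠ q0 H}) (y : List (Beta H α))
    (h : p ++ r₀.map Sum.inl = x ++ Sum.inr q :: y) : x.length < p.length := by
  by_contra hc
  push_neg at hc
  have hlen : x.length < (p ++ r₀.map Sum.inl).length := by
    rw [h]; simp
  have h1 : (p ++ r₀.map Sum.inl)[x.length]'hlen = Sum.inr q := by
    simp only [h]
    rw [List.getElem_append_right le_rfl]
    simp
  rw [List.getElem_append_right hc] at h1
  rw [List.getElem_map] at h1
  exact Sum.inl_ne_inr h1

theorem hdw_shape (g : G) : FreeMonoid.toList (hdw H g : FreeMonoid (Beta H α)) = [] ∨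
    ∃ q, FreeMonoid.toList (hdw H g : FreeMonoid (Beta H α)) = [Sum.inr q] := by
  unfold hdw
  split
  · exact Or.inl rfl
  · exact Or.inr ⟨_, rfl⟩

theorem mem_map_inl_isLeft {x : Beta H α} {l : List α} (h : x ∈ List.map Sum.inl l) :
    x.isLeft := by
  simp only [List.mem_map] at h
  obtain ⟨a, _, rfl⟩ := h
  rfl

theorem map_inl_eq_append {r₀ : List α} {X Y : List (Beta H α)} {U : List α}
    (h : List.map Sum.inl r₀ = X ++ List.map Sum.inl U ++ Y) :
    ∃ x₀ y₀, X = List.map Sum.inl x₀ ∧ Y = List.map Sum.inl y₀ ∧ r₀ = x₀ ++ U ++ y₀ := by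
  have hX : ∀ x ∈ X, Sum.isLeft x := fun x hx =>
    mem_map_inl_isLeft H (h ▸ (by simp [hx] : x ∈ X ++ List.map Sum.inl U ++ Y))
  have hY : ∀ x ∈ Y, Sum.isLeft x := fun x hx =>
    mem_map_inl_isLeft H (h ▸ (by simp [hx] : x ∈ X ++ List.map Sum.inl U ++ Y))
  obtain ⟨x₀, rfl⟩ := all_left_eq_map H hX
  obtain ⟨y₀, rfl⟩ := all_left_eq_map H hY
  refine ⟨x₀, y₀, rfl, rfl, ?_⟩
  have : List.map Sum.inl r₀ = List.map (Sum.inl : α → Beta H α) (x₀ ++ U ++ y₀) := by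
    simpa using h
  exact List.map_injective_iff.mpr Sum.inl_injective this

theorem tw_irr (g : G) : RewIrreducible (Rules H π R huniq) (tw H π R huniq g) := by
  rintro ⟨x, u, v, y, hrule, heq⟩
  have heq' : FreeMonoid.toList (hdw H g : FreeMonoid (Beta H α)) ++
      List.map Sum.inl (FreeMonoid.toList (rep H π R huniq
        ⟨(sec H (QuotientGroup.mk g))⁻¹ * g, sec_inv_mem H g⟩)) =
      FreeMonoid.toList x ++ FreeMonoid.toList u ++ FreeMonoid.toList y := by
    have := congrArg FreeMonoid.toList heq
    simpa [tw, FreeMonoid.toList_mul, iota, FreeMonoid.toList_map] using this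
  set P := FreeMonoid.toList (hdw H g : FreeMonoid (Beta H α)) with hP
  set r₀ := FreeMonoid.toList (rep H π R huniq
    ⟨(sec H (QuotientGroup.mk g))⁻¹ * g, sec_inv_mem H g⟩) with hr₀
  have hPlen : P.length ≤ 1 := by
    rcases hdw_shape H (α := α) g with h | ⟨q, h⟩ <;> rw [← hP] at h <;> simp [h]
  rcases hrule with (⟨⟨u₀, v₀⟩, hu₀v₀, huv⟩ | ⟨⟨a, q⟩, huv⟩) | ⟨⟨r, q⟩, huv⟩
  · -- type 1
    cases huv
    rcases hrep : FreeMonoid.toList u₀ with _ | ⟨a₀, u₀'⟩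
    · exact no_eps R (rep_irr H π R huniq 1) (show ((1 : FreeMonoid α), v₀) ∈ R from
        (FreeMonoid.toList.injective (by simp [hrep]) : u₀ = 1) ▸ hu₀v₀)
    · have heq2 : P ++ List.map Sum.inl r₀ =
          FreeMonoid.toList x ++ List.map Sum.inl (FreeMonoid.toList u₀) ++
            FreeMonoid.toList y := heq'
      have key : ∃ X' : List (Beta H α),
          List.map Sum.inl r₀ =
            X' ++ List.map Sum.inl (FreeMonoid.toList u₀) ++ FreeMonoid.toList y := by
        rcases (hP ▸ hdw_shape H (α := α) g) with h0 | ⟨q', h0⟩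
        · rw [h0] at heq2
          exact ⟨FreeMonoid.toList x, by simpa using heq2⟩
        · rw [h0] at heq2
          rcases hX : FreeMonoid.toList x with _ | ⟨c, X'⟩
          · rw [hX, hrep] at heq2
            simp only [List.nil_append, List.map_cons, List.cons_append,
              List.singleton_append, List.cons.injEq] at heq2
            exact absurd heq2.1 (by simp)
          · rw [hX] at heq2
            simp only [List.singleton_append, List.cons_append, List.cons.injEq] at heq2
            exact ⟨X', by simpa using heq2.2⟩
      obtain ⟨X', hmain⟩ := key
      obtain ⟨x₀, y₀, hx₀, hy₀, hr⟩ := map_inl_eq_append H hmain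
      refine rep_irr H π R huniq ⟨(sec H (QuotientGroup.mk g))⁻¹ * g, sec_inv_mem H g⟩
        ⟨FreeMonoid.ofList x₀, u₀, v₀, FreeMonoid.ofList y₀, hu₀v₀, ?_⟩
      apply FreeMonoid.toList.injective
      simpa using hr
  · -- type 2
    cases huv
    have : (FreeMonoid.toList x ++ [Sum.inl a]).length < P.length :=
      inr_pos_lt H P r₀ (FreeMonoid.toList x ++ [Sum.inl a]) q (FreeMonoid.toList y)
        (by rw [heq']; simp [FreeMonoid.toList_mul, FreeMonoid.toList_of])
    simp at this
    omega
  · -- type 3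
    cases huv
    have : (FreeMonoid.toList x ++ [Sum.inr r]).length < P.length :=
      inr_pos_lt H P r₀ (FreeMonoid.toList x ++ [Sum.inr r]) q (FreeMonoid.toList y)
        (by rw [heq']; simp [FreeMonoid.toList_mul, FreeMonoid.toList_of])
    simp at this
    omega


/-! ### existence and uniqueness of normal forms -/

open Classical in
theorem tw_of_mem {g : G} (hg : QuotientGroup.mk g = q0 H) :
    tw H π R huniq g = iota H (rep H π R huniq
      ⟨(sec H (QuotientGroup.mk g))⁻¹ * g, sec_inv_mem H g⟩) := by
  unfold tw hdw
  rw [dif_pos hg, one_mul]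

open Classical in
theorem tw_of_not_mem {g : G} (hg : QuotientGroup.mk g ≠ q0 H) :
    tw H π R huniq g = FreeMonoid.of (Sum.inr ⟨QuotientGroup.mk g, hg⟩) *
      iota H (rep H π R huniq ⟨(sec H (QuotientGroup.mk g))⁻¹ * g, sec_inv_mem H g⟩) := by
  unfold tw hdw
  rw [dif_neg hg]

theorem nf_exists_unique (g : G) :
    ∃! w : FreeMonoid (Beta H α),
      FreeMonoid.lift (pi' H π) w = g ∧ RewIrreducible (Rules H π R huniq) w := by
  refine ⟨tw H π R huniq g, ⟨lift_tw H π R huniq g, tw_irr H π R huniq g⟩, ?_⟩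
  rintro w ⟨hlift, hirr⟩
  obtain ⟨w₀, hw₀irr, hshape⟩ := irr_structure H π R huniq hirr
  rcases hshape with rfl | ⟨q, rfl⟩
  · -- w = iota w₀, so g ∈ H
    rw [lift_iota] at hlift
    have hgH : g ∈ H := by rw [← hlift]; exact (FreeMonoid.lift π w₀).2
    have hg : QuotientGroup.mk g = q0 H := by
      rw [q0]
      exact QuotientGroup.eq.mpr (by simpa using inv_mem hgH)
    rw [tw_of_mem H π R huniq hg]
    congr 1
    refine rep_unique H π R huniq ?_ hw₀irr
    apply Subtype.ext
    show ((FreeMonoid.lift π w₀ : H) : G) = (sec H (QuotientGroup.mk g))⁻¹ * g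
    rw [hg, sec_q0, hlift]
    simp
  · -- w = of (inr q) * iota w₀
    rw [map_mul, lift_iota] at hlift
    have hlift' : pi' H π (Sum.inr q) * ((FreeMonoid.lift π w₀ : H) : G) = g := by
      simpa using hlift
    have hsec : sec H q.1 * ((FreeMonoid.lift π w₀ : H) : G) = g := hlift'
    have hq : QuotientGroup.mk g = q.1 := by
      have hmem : (sec H q.1)⁻¹ * g ∈ H := by
        rw [← hsec]
        simp
      have h2 : (QuotientGroup.mk (sec H q.1) : G ⧸ H) = QuotientGroup.mk g :=
        QuotientGroup.eq.mpr hmem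
      rw [← h2, sec_spec]
    have hg : QuotientGroup.mk g ≠ q0 H := hq ▸ q.2
    rw [tw_of_not_mem H π R huniq hg]
    have hqeq : (⟨QuotientGroup.mk g, hg⟩ : {q : G ⧸ H // q ≠ q0 H}) = q := Subtype.ext hq
    rw [hqeq]
    refine congrArg _ (congrArg (iota H) ?_)
    refine rep_unique H π R huniq ?_ hw₀irr
    apply Subtype.ext
    show ((FreeMonoid.lift π w₀ : H) : G) = (sec H (QuotientGroup.mk g))⁻¹ * g
    rw [hq, ← hsec]
    simp


/-! ### termination of the new system -/

theorem segRel_cons (a : α) (st : List α × List α) (h : SegRel R st.1 st.2) :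
    SegRel R (a :: st.1) (a :: st.2) := by
  rcases h with h | ⟨b, hb⟩
  · left
    have := rewStep_context' (R := R) (FreeMonoid.of a) 1 h
    simpa [FreeMonoid.ofList_cons] using this
  · right
    exact ⟨b, by rw [hb]; rfl⟩

theorem tw_toList (g : G) :
    FreeMonoid.toList (tw H π R huniq g) =
      FreeMonoid.toList (hdw H g : FreeMonoid (Beta H α)) ++
        List.map Sum.inl (FreeMonoid.toList (rep H π R huniq
          ⟨(sec H (QuotientGroup.mk g))⁻¹ * g, sec_inv_mem H g⟩)) := by
  rw [tw, FreeMonoid.toList_mul]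
  rfl

theorem step_decreases {w w' : FreeMonoid (Beta H α)}
    (h : RewStep (Rules H π R huniq) w w') :
    MeasRel (SegRel R) (segs (FreeMonoid.toList w')) (segs (FreeMonoid.toList w)) := by
  obtain ⟨x, u, v, y, hrule, rfl, rfl⟩ := h
  have hxl : ∀ z : FreeMonoid (Beta H α), FreeMonoid.toList (x * z * y) =
      FreeMonoid.toList x ++ (FreeMonoid.toList z ++ FreeMonoid.toList y) := by
    intro z
    simp [FreeMonoid.toList_mul]
  rw [hxl u, hxl v]
  apply measRel_append_left (fun a s t h => segRel_cons R a (s, t) h)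
  set Y := FreeMonoid.toList y with hY
  obtain ⟨h0, t0, e0⟩ := List.exists_cons_of_ne_nil (segs_ne_nil Y)
  rcases hrule with (⟨⟨u₀, v₀⟩, hu₀v₀, huv⟩ | ⟨⟨a, q⟩, huv⟩) | ⟨⟨r, q⟩, huv⟩
  · -- type 1
    cases huv
    have hu : FreeMonoid.toList (iota H u₀) = List.map Sum.inl (FreeMonoid.toList u₀) := rfl
    have hv : FreeMonoid.toList (iota H v₀) = List.map Sum.inl (FreeMonoid.toList v₀) := rfl
    rw [hu, hv, segs_inl_append, segs_inl_append]
    right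
    refine LLex.head ?_ rfl
    left
    refine ⟨1, u₀, v₀, FreeMonoid.ofList ((segs Y).headI), hu₀v₀, ?_, ?_⟩
    · apply FreeMonoid.toList.injective; simp [FreeMonoid.toList_mul]
    · apply FreeMonoid.toList.injective; simp [FreeMonoid.toList_mul]
  · -- type 2
    cases huv
    have hu : FreeMonoid.toList
        (FreeMonoid.of (Sum.inl a) * FreeMonoid.of (Sum.inr q) : FreeMonoid (Beta H α)) ++ Y =
        Sum.inl a :: Sum.inr q :: Y := rfl
    rw [hu, segs_cons_inl, segs_cons_inr]
    simp only [List.headI_cons, List.tail_cons]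
    set g := pi' H π (Sum.inl a) * pi' H π (Sum.inr q) with hg
    rw [tw_toList]
    rcases hdw_shape H (α := α) g with hsh | ⟨q', hsh⟩
    · rw [hsh]
      simp only [List.nil_append]
      rw [segs_inl_append]
      left
      rw [e0]
      simp
    · rw [hsh]
      simp only [List.cons_append, List.nil_append]
      rw [segs_cons_inr, segs_inl_append]
      right
      rw [e0]
      refine LLex.head (Or.inr ⟨a, rfl⟩) ?_
      simp
  · -- type 3
    cases huv
    have hu : FreeMonoid.toList
        (FreeMonoid.of (Sum.inr r) * FreeMonoid.of (Sum.inr q) : FreeMonoid (Beta H α)) ++ Y =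
        Sum.inr r :: Sum.inr q :: Y := rfl
    rw [hu, segs_cons_inr, segs_cons_inr]
    set g := pi' H π (Sum.inr r) * pi' H π (Sum.inr q) with hg
    rw [tw_toList]
    rcases hdw_shape H (α := α) g with hsh | ⟨q', hsh⟩
    · rw [hsh]
      simp only [List.nil_append]
      rw [segs_inl_append]
      left
      rw [e0]
      simp
    · rw [hsh]
      simp only [List.cons_append, List.nil_append]
      rw [segs_cons_inr, segs_inl_append]
      left
      rw [e0]
      simp

theorem rules_wf
    (hnoeth : ∀ f : ℕ → FreeMonoid α, ¬ ∀ m : ℕ, RewStep R (f m) (f (m + 1))) :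
    WellFounded (fun a b : FreeMonoid (Beta H α) => RewStep (Rules H π R huniq) b a) := by
  have hwfR := wf_of_noInf hnoeth
  have hseg := segRel_wf hwfR
  have hM := measRel_wf hseg
  refine Subrelation.wf ?_ (InvImage.wf (fun w => segs (FreeMonoid.toList w)) hM)
  intro w' w h
  exact step_decreases H π R huniq h


/-! ### normal form reachability and the congruence condition -/

theorem conGen_rewStep {u v : FreeMonoid (Beta H α)}
    (h : RewStep (Rules H π R huniq) u v) :
    conGen (fun a b => (a, b) ∈ Rules H π R huniq) u v := by
  obtain ⟨x, a, b, y, hr, rfl, rfl⟩ := h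
  have hab : conGen (fun a b => (a, b) ∈ Rules H π R huniq) a b := ConGen.Rel.of a b hr
  have hx := (conGen (fun a b => (a, b) ∈ Rules H π R huniq)).refl x
  have hy := (conGen (fun a b => (a, b) ∈ Rules H π R huniq)).refl y
  exact (conGen (fun a b => (a, b) ∈ Rules H π R huniq)).mul
    ((conGen (fun a b => (a, b) ∈ Rules H π R huniq)).mul hx hab) hy

theorem nf_reachable
    (hnoeth : ∀ f : ℕ → FreeMonoid α, ¬ ∀ m : ℕ, RewStep R (f m) (f (m + 1)))
    (w : FreeMonoid (Beta H α)) :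
    ∃ w', RewIrreducible (Rules H π R huniq) w' ∧
      conGen (fun a b => (a, b) ∈ Rules H π R huniq) w w' := by
  refine WellFounded.induction (rules_wf H π R huniq hnoeth)
    (C := fun w => ∃ w', RewIrreducible (Rules H π R huniq) w' ∧
      conGen (fun a b => (a, b) ∈ Rules H π R huniq) w w') w ?_
  intro w ih
  by_cases hirr : RewIrreducible (Rules H π R huniq) w
  · exact ⟨w, hirr, (conGen _).refl w⟩
  · obtain ⟨x, u, v, y, hr, rfl⟩ := not_not.mp hirr
    have hstep : RewStep (Rules H π R huniq) (x * u * y) (x * v * y) :=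
      ⟨x, u, v, y, hr, rfl, rfl⟩
    obtain ⟨w', h1, h2⟩ := ih (x * v * y) hstep
    exact ⟨w', h1, (conGen _).trans (conGen_rewStep H π R huniq hstep) h2⟩

theorem new_cong
    (hcong : ∀ u v : FreeMonoid α, FreeMonoid.lift π u = FreeMonoid.lift π v ↔
      conGen (fun w w' => (w, w') ∈ R) u v)
    (hnoeth : ∀ f : ℕ → FreeMonoid α, ¬ ∀ m : ℕ, RewStep R (f m) (f (m + 1)))
    (u v : FreeMonoid (Beta H α)) :
    FreeMonoid.lift (pi' H π) u = FreeMonoid.lift (pi' H π) v ↔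
      conGen (fun w w' => (w, w') ∈ Rules H π R huniq) u v := by
  have hliftR : ∀ a b : FreeMonoid α, (a, b) ∈ R →
      FreeMonoid.lift π a = FreeMonoid.lift π b :=
    fun a b h => (hcong a b).mpr (ConGen.Rel.of _ _ h)
  constructor
  · intro h
    obtain ⟨u', hu'irr, hu'con⟩ := nf_reachable H π R huniq hnoeth u
    obtain ⟨v', hv'irr, hv'con⟩ := nf_reachable H π R huniq hnoeth v
    have hu'lift := conGen_lift H π R huniq hliftR hu'con
    have hv'lift := conGen_lift H π R huniq hliftR hv'con
    have huv' : u' = v' := by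
      have h1 := (nf_exists_unique H π R huniq (FreeMonoid.lift (pi' H π) u)).unique
        (y₁ := u') (y₂ := v') ⟨hu'lift.symm, hu'irr⟩ ⟨by rw [← hv'lift, h], hv'irr⟩
      exact h1
    exact (conGen _).trans hu'con (huv' ▸ ((conGen _).symm hv'con))
  · exact conGen_lift H π R huniq hliftR

theorem rules_finite [Finite α] [H.FiniteIndex] (hRfin : R.Finite) :
    (Rules H π R huniq).Finite :=
  ((hRfin.image _).union (Set.finite_range _)).union (Set.finite_range _)

end Main

end FcrsAux

/-- If H is a finite index subgroup of G and H has a finite complete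
rewriting system, then so does G. -/
theorem finiteIndex_hasFiniteCompleteRewritingSystem
    (G : Type) [Group G] (H : Subgroup G) (hfi : H.FiniteIndex)
    (hH : HasFiniteCompleteRewritingSystem H) :
    HasFiniteCompleteRewritingSystem G := by
  obtain ⟨α, hfinα, π, R, hRfin, hsurj, hcong, hnoeth, huniq⟩ := hH
  haveI := hfinα
  haveI := hfi
  refine ⟨FcrsAux.Beta H α, inferInstance, FcrsAux.pi' H π,
    FcrsAux.Rules H π R huniq, FcrsAux.rules_finite H π R huniq hRfin, ?_, ?_, ?_, ?_⟩
  · intro g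
    exact ⟨FcrsAux.tw H π R huniq g, FcrsAux.lift_tw H π R huniq g⟩
  · exact FcrsAux.new_cong H π R huniq hcong hnoeth
  · exact FcrsAux.noInf_of_wf (FcrsAux.rules_wf H π R huniq hnoeth)
  · exact FcrsAux.nf_exists_unique H π R huniq
end

section
/- If N is a normal subgroup of a group G such that both N and the quotient group G/N have finite complete rewriting systems, then G has a finite complete rewriting system. -/
namespace FCRSExt

/-- From a sequence that makes a `rel`-step whenever `P` holds and stays constant otherwise,
with `P` holding infinitely often, extract an infinite `rel`-chain. -/
lemma exists_chain_of_infinitely_many {X : Type*} {rel : X → X → Prop} {P : ℕ → Prop}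
    (g : ℕ → X) (hP : ∀ m, P m → rel (g m) (g (m + 1)))
    (hnP : ∀ m, ¬ P m → g (m + 1) = g m)
    (hinf : ∀ M, ∃ m, M ≤ m ∧ P m) :
    ∃ h : ℕ → X, ∀ i, rel (h i) (h (i + 1)) := by
  classical
  have gconst : ∀ (a d : ℕ), (∀ m, a ≤ m → m < a + d → ¬ P m) → g (a + d) = g a := by
    intro a d
    induction d with
    | zero => simp
    | succ d ih =>
      intro h
      rw [Nat.add_succ, hnP _ (h _ (Nat.le_add_right a d) (by omega))]
      exact ih fun m h1 h2 => h m h1 (by omega)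
  let next : ℕ → ℕ := fun M => Nat.find (hinf M)
  have hnext₁ : ∀ M, M ≤ next M ∧ P (next M) := fun M => Nat.find_spec (hinf M)
  have hnext₂ : ∀ M m, M ≤ m → m < next M → ¬ P m := by
    intro M m h1 h2 hp
    exact Nat.find_min (hinf M) h2 ⟨h1, hp⟩
  let φ : ℕ → ℕ := fun i => Nat.rec (next 0) (fun _ prev => next (prev + 1)) i
  have hPφ : ∀ i, P (φ i) := by
    intro i
    cases i with
    | zero => exact (hnext₁ 0).2
    | succ j => exact (hnext₁ _).2
  refine ⟨fun i => g (φ i), fun i => ?_⟩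
  have h1 : rel (g (φ i)) (g (φ i + 1)) := hP _ (hPφ i)
  have h2 : g (φ (i + 1)) = g (φ i + 1) := by
    have he : φ (i + 1) = next (φ i + 1) := rfl
    obtain ⟨d, hd⟩ := Nat.exists_eq_add_of_le (hnext₁ (φ i + 1)).1
    rw [he, hd]
    exact gconst _ _ fun m hm1 hm2 => hnext₂ _ m hm1 (by omega)
  rw [← h2] at h1
  exact h1

/-- If `rel` admits no infinite chain and `g` either steps or stays constant,
then `g` is eventually constant. -/
lemma eventually_const {X : Type*} {rel : X → X → Prop}
    (hNoe : ∀ f : ℕ → X, ¬ ∀ m, rel (f m) (f (m + 1)))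
    (g : ℕ → X) (hstep : ∀ m, rel (g m) (g (m + 1)) ∨ g (m + 1) = g m) :
    ∃ M, ∀ m, M ≤ m → g (m + 1) = g m := by
  by_contra hc
  push_neg at hc
  obtain ⟨h, hh⟩ := exists_chain_of_infinitely_many (P := fun m => g (m + 1) ≠ g m) g
    (fun m hm => (hstep m).resolve_right hm) (fun m hm => not_not.1 hm) hc
  exact hNoe h hh

/-- No infinite chains implies well-foundedness of the flipped relation. -/
lemma wf_flip_of_noChain {X : Type*} {rel : X → X → Prop}
    (h : ∀ f : ℕ → X, ¬ ∀ m, rel (f m) (f (m + 1))) :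
    WellFounded (fun x y => rel y x) := by
  classical
  by_contra hwf
  have hex : ∃ a, ¬ Acc (fun x y => rel y x) a := by
    by_contra h2
    push_neg at h2
    exact hwf ⟨h2⟩
  obtain ⟨a, ha⟩ := hex
  have key : ∀ x, ¬ Acc (fun x y => rel y x) x → ∃ y, rel x y ∧ ¬ Acc (fun x y => rel y x) y := by
    intro x hx
    by_contra h3
    push_neg at h3
    exact hx (Acc.intro x fun y hy => h3 y hy)
  let f : ℕ → {x // ¬ Acc (fun x y => rel y x) x} := fun n =>
    Nat.rec ⟨a, ha⟩ (fun _ p => ⟨(key p.1 p.2).choose, (key p.1 p.2).choose_spec.2⟩) n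
  exact h (fun n => (f n).1) fun m => (key (f m).1 (f m).2).choose_spec.1

/-- Left-hand sides of rules in a Noetherian system are nonempty. -/
lemma lhs_ne_one {α : Type} {R : Set (FreeMonoid α × FreeMonoid α)}
    (hNoe : ∀ f : ℕ → FreeMonoid α, ¬ ∀ m, RewStep R (f m) (f (m + 1)))
    {u v : FreeMonoid α} (h : (u, v) ∈ R) : u ≠ 1 := by
  rintro rfl
  refine hNoe (fun m => v ^ m) fun m => ⟨v ^ m, 1, v, 1, h, by simp, by simp [pow_succ]⟩

/-- A Noetherian system has no one-step loops. -/
lemma rewStep_irrefl {α : Type} {R : Set (FreeMonoid α × FreeMonoid α)}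
    (hNoe : ∀ f : ℕ → FreeMonoid α, ¬ ∀ m, RewStep R (f m) (f (m + 1)))
    {w : FreeMonoid α} (h : RewStep R w w) : False := by
  obtain ⟨x, u, v, y, hr, h1, h2⟩ := h
  have huv : u = v := by
    have h3 : FreeMonoid.toList x ++ (FreeMonoid.toList u ++ FreeMonoid.toList y)
        = FreeMonoid.toList x ++ (FreeMonoid.toList v ++ FreeMonoid.toList y) := by
      have := h1.symm.trans h2
      simpa [List.append_assoc] using congrArg FreeMonoid.toList this
    have h4 := List.append_cancel_left h3
    have h5 := List.append_cancel_right h4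
    exact FreeMonoid.toList.injective h5
  subst huv
  exact hNoe (fun _ => u) fun m => ⟨1, u, u, 1, hr, by simp, by simp⟩

end FCRSExt

namespace FCRSExt

open FreeMonoid

section Lists

variable {A B : Type}

/-- An occurrence of a factor `u` avoiding a letter `c`. -/
lemma factor_avoid {γ : Type*} {x u y p s : List γ} {c : γ}
    (h : x ++ u ++ y = p ++ c :: s) (hc : c ∉ u) :
    (∃ y₁, p = x ++ u ++ y₁ ∧ y = y₁ ++ c :: s) ∨
    (∃ x₁, x = p ++ c :: x₁ ∧ s = x₁ ++ u ++ y) := by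
  rw [List.append_assoc, List.append_eq_append_iff] at h
  rcases h with ⟨e, he1, he2⟩ | ⟨e, he1, he2⟩
  · -- p = x ++ e, u ++ y = e ++ c :: s
    rw [List.append_eq_append_iff] at he2
    rcases he2 with ⟨d, hd1, hd2⟩ | ⟨d, hd1, hd2⟩
    · exact Or.inl ⟨d, by rw [he1, hd1, List.append_assoc], hd2⟩
    · -- u = e ++ d, c :: s = d ++ y
      rcases d with _ | ⟨d0, d'⟩
      · obtain rfl : u = e := by simpa using hd1
        exact Or.inl ⟨[], by rw [he1]; simp, by simpa using hd2.symm⟩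
      · obtain ⟨rfl, -⟩ : c = d0 ∧ s = d' ++ y := by simpa using hd2
        exact absurd (hd1 ▸ List.mem_append_right e List.mem_cons_self) hc
  · -- x = p ++ e, c :: s = e ++ (u ++ y)
    rcases e with _ | ⟨e0, e'⟩
    · simp only [List.nil_append] at he2
      rcases u with _ | ⟨u0, u'⟩
      · exact Or.inl ⟨[], by simp [he1], by simpa using he2.symm⟩
      · obtain ⟨rfl, -⟩ : c = u0 ∧ s = u' ++ y := by simpa using he2
        exact absurd List.mem_cons_self hc
    · obtain ⟨rfl, hs⟩ : c = e0 ∧ s = e' ++ (u ++ y) := by simpa using he2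
      exact Or.inr ⟨e', by rw [he1], by rw [hs, List.append_assoc]⟩

lemma decomp_unique {z z' : List A} {b b' : B} {r r' : List (A ⊕ B)}
    (h : z.map Sum.inl ++ Sum.inr b :: r = z'.map Sum.inl ++ Sum.inr b' :: r') :
    z = z' ∧ b = b' ∧ r = r' := by
  induction z generalizing z' with
  | nil =>
    cases z' with
    | nil => simpa using h
    | cons a t => simp at h
  | cons a t ih =>
    cases z' with
    | nil => simp at h
    | cons a' t' =>
      simp only [List.map_cons, List.cons_append, List.cons.injEq, Sum.inl.injEq] at h
      obtain ⟨rfl, h2⟩ := h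
      obtain ⟨rfl, rfl, rfl⟩ := ih h2
      exact ⟨rfl, rfl, rfl⟩

/-- Projection to the `B`-letters. -/
def bProj : List (A ⊕ B) → List B :=
  List.filterMap (Sum.elim (fun _ => none) some)

@[simp] lemma bProj_nil : bProj ([] : List (A ⊕ B)) = [] := rfl

@[simp] lemma bProj_cons_inl (a : A) (l : List (A ⊕ B)) :
    bProj (Sum.inl a :: l) = bProj l := rfl

@[simp] lemma bProj_cons_inr (b : B) (l : List (A ⊕ B)) :
    bProj (Sum.inr b :: l) = b :: bProj l := rfl

@[simp] lemma bProj_append (l₁ l₂ : List (A ⊕ B)) :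
    bProj (l₁ ++ l₂) = bProj l₁ ++ bProj l₂ :=
  List.filterMap_append

@[simp] lemma bProj_map_inl (z : List A) : bProj (z.map Sum.inl : List (A ⊕ B)) = [] := by
  induction z with
  | nil => rfl
  | cons a t ih => simpa using ih

@[simp] lemma bProj_map_inr (u : List B) : bProj (u.map Sum.inr : List (A ⊕ B)) = u := by
  induction u with
  | nil => rfl
  | cons b t ih => simpa using ih

lemma eq_map_inl_of_bProj_nil {l : List (A ⊕ B)} (h : bProj l = []) :
    ∃ z : List A, l = z.map Sum.inl := by
  induction l with
  | nil => exact ⟨[], rfl⟩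
  | cons c t ih =>
    cases c with
    | inl a =>
      obtain ⟨z, hz⟩ := ih (by simpa using h)
      exact ⟨a :: z, by simp [hz]⟩
    | inr b => simp at h

lemma decomp_of_bProj_ne_nil {l : List (A ⊕ B)} (h : bProj l ≠ []) :
    ∃ (z : List A) (b : B) (r : List (A ⊕ B)), l = z.map Sum.inl ++ Sum.inr b :: r := by
  induction l with
  | nil => simp at h
  | cons c t ih =>
    cases c with
    | inl a =>
      obtain ⟨z, b, r, hr⟩ := ih (by simpa using h)
      exact ⟨a :: z, b, r, by simp [hr]⟩
    | inr b => exact ⟨[], b, t, by simp⟩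

/-- Every list over `A ⊕ B` either has the shape `inr* ++ inl*` or contains
an adjacent pair `inl a, inr b`. -/
lemma shape_or_pair (l : List (A ⊕ B)) :
    (∃ (u : List B) (z : List A), l = u.map Sum.inr ++ z.map Sum.inl) ∨
    (∃ (x : List (A ⊕ B)) (a : A) (b : B) (y : List (A ⊕ B)),
      l = x ++ Sum.inl a :: Sum.inr b :: y) := by
  induction l with
  | nil => exact Or.inl ⟨[], [], rfl⟩
  | cons c t ih =>
    rcases ih with ⟨u, z, rfl⟩ | ⟨x, a, b, y, rfl⟩
    · cases c with
      | inl a =>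
        cases u with
        | nil => exact Or.inl ⟨[], a :: z, by simp⟩
        | cons b u' => exact Or.inr ⟨[], a, b, u'.map Sum.inr ++ z.map Sum.inl, by simp⟩
      | inr b => exact Or.inl ⟨b :: u, z, by simp⟩
    · exact Or.inr ⟨c :: x, a, b, y, by simp⟩

end Lists

end FCRSExt

namespace FCRSExt

section Construction

variable {G : Type} [Group G] {N : Subgroup G} {A B : Type}

/-- The evaluation map on the combined alphabet. -/
def piG (πN : A → ↥N) (gb : B → G) : A ⊕ B → G :=
  Sum.elim (fun a => ((πN a : ↥N) : G)) gb

variable (T : Set (FreeMonoid A × FreeMonoid A)) (S : Set (FreeMonoid B × FreeMonoid B))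
variable (corr2 : A → B → FreeMonoid A) (corr3 : FreeMonoid B × FreeMonoid B → FreeMonoid A)

/-- Rules of the subgroup system, transported to the combined alphabet. -/
def RulesA : Set (FreeMonoid (A ⊕ B) × FreeMonoid (A ⊕ B)) :=
  (fun p => (FreeMonoid.map Sum.inl p.1, FreeMonoid.map Sum.inl p.2)) '' T

/-- Commutation rules `a · b → b · corr2 a b`. -/
def RulesC : Set (FreeMonoid (A ⊕ B) × FreeMonoid (A ⊕ B)) :=
  Set.range fun ab : A × B =>
    (FreeMonoid.of (Sum.inl ab.1) * FreeMonoid.of (Sum.inr ab.2),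
     FreeMonoid.of (Sum.inr ab.2) * FreeMonoid.map Sum.inl (corr2 ab.1 ab.2))

/-- Rules of the quotient system, with corrections in the subgroup letters. -/
def RulesS : Set (FreeMonoid (A ⊕ B) × FreeMonoid (A ⊕ B)) :=
  (fun p => (FreeMonoid.map Sum.inr p.1,
      FreeMonoid.map Sum.inr p.2 * FreeMonoid.map Sum.inl (corr3 p))) '' S

/-- The combined rewriting system. -/
def Rules : Set (FreeMonoid (A ⊕ B) × FreeMonoid (A ⊕ B)) :=
  RulesA T ∪ RulesC corr2 ∪ RulesS S corr3

variable {T S corr2 corr3}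

lemma rules_finite (hT : T.Finite) (hS : S.Finite) [Finite A] [Finite B] :
    (Rules T S corr2 corr3).Finite := by
  refine Set.Finite.union (Set.Finite.union (hT.image _) ?_) (hS.image _)
  exact Set.finite_range _

variable (πN : A → ↥N) (gb : B → G)

@[simp] lemma piG_inl (a : A) : piG πN gb (Sum.inl a) = ((πN a : ↥N) : G) := rfl
@[simp] lemma piG_inr (b : B) : piG πN gb (Sum.inr b) = gb b := rfl

lemma evG_mapInl (z : FreeMonoid A) :
    FreeMonoid.lift (piG πN gb) (FreeMonoid.map Sum.inl z)
      = ((FreeMonoid.lift πN z : ↥N) : G) := by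
  induction z using FreeMonoid.recOn with
  | one => simp
  | of_mul a z ih =>
    simp only [map_mul, FreeMonoid.map_of, FreeMonoid.lift_eval_of, ih, Subgroup.coe_mul,
      piG_inl]

lemma mk_evG_mapInr [N.Normal] (πQ : B → G ⧸ N) (hgb : ∀ b, ((gb b : G) : G ⧸ N) = πQ b)
    (u : FreeMonoid B) :
    ((FreeMonoid.lift (piG πN gb) (FreeMonoid.map Sum.inr u) : G) : G ⧸ N)
      = FreeMonoid.lift πQ u := by
  induction u using FreeMonoid.recOn with
  | one => simp
  | of_mul b u ih =>
    simp only [map_mul, FreeMonoid.map_of, FreeMonoid.lift_eval_of]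
    rw [QuotientGroup.mk_mul, ih, piG_inr, hgb]

lemma rules_preserve [N.Normal]
    (hcorr2 : ∀ a b, ((FreeMonoid.lift πN (corr2 a b) : ↥N) : G)
        = (gb b)⁻¹ * ((πN a : ↥N) : G) * gb b)
    (hcorr3 : ∀ p ∈ S, FreeMonoid.lift (piG πN gb) (FreeMonoid.map Sum.inr p.2)
        * ((FreeMonoid.lift πN (corr3 p) : ↥N) : G)
        = FreeMonoid.lift (piG πN gb) (FreeMonoid.map Sum.inr p.1))
    (hTker : ∀ u v : FreeMonoid A, (u, v) ∈ T → FreeMonoid.lift πN u = FreeMonoid.lift πN v) :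
    ∀ p ∈ Rules T S corr2 corr3,
      FreeMonoid.lift (piG πN gb) p.1 = FreeMonoid.lift (piG πN gb) p.2 := by
  rintro p ((hA | hC) | hS3)
  · obtain ⟨⟨t, t'⟩, ht, rfl⟩ := hA
    simp only [evG_mapInl]
    rw [hTker _ _ ht]
  · obtain ⟨⟨a, b⟩, rfl⟩ := hC
    simp only [map_mul, FreeMonoid.lift_eval_of, evG_mapInl, hcorr2]
    show ((πN a : ↥N) : G) * gb b = gb b * ((gb b)⁻¹ * ((πN a : ↥N) : G) * gb b)
    group
  · obtain ⟨q, hq, rfl⟩ := hS3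
    simp only [map_mul, evG_mapInl]
    exact (hcorr3 q hq).symm

end Construction

end FCRSExt

namespace FCRSExt

section Termination

variable {A B : Type}
variable {T : Set (FreeMonoid A × FreeMonoid A)} {S : Set (FreeMonoid B × FreeMonoid B)}
variable {corr2 : A → B → FreeMonoid A} {corr3 : FreeMonoid B × FreeMonoid B → FreeMonoid A}

lemma rewStep_mul_right {α : Type} {R : Set (FreeMonoid α × FreeMonoid α)}
    {w w' c : FreeMonoid α} (h : RewStep R w w') : RewStep R (w * c) (w' * c) := by
  obtain ⟨x, u, v, y, hr, h1, h2⟩ := h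
  exact ⟨x, u, v, y * c, hr, by rw [h1, mul_assoc, mul_assoc], by rw [h2, mul_assoc, mul_assoc]⟩

/-- "Rewrite by `T` or delete the last letter" admits no infinite chain,
provided `T` admits none. -/
lemma delOrT_noChain
    (hT : ∀ f : ℕ → FreeMonoid A, ¬ ∀ m, RewStep T (f m) (f (m + 1))) :
    ∀ f : ℕ → FreeMonoid A,
      ¬ ∀ m, RewStep T (f m) (f (m + 1)) ∨ ∃ a, f m = f (m + 1) * FreeMonoid.of a := by
  intro z hz
  classical
  let s : ℕ → FreeMonoid A := fun n =>
    Nat.rec 1 (fun m sm =>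
      if h : ∃ a, z m = z (m + 1) * FreeMonoid.of a then FreeMonoid.of h.choose * sm else sm) n
  let W : ℕ → FreeMonoid A := fun m => z m * s m
  have hWs : ∀ m, (¬ ∃ a, z m = z (m + 1) * FreeMonoid.of a) →
      RewStep T (W m) (W (m + 1)) := by
    intro m hm
    have hss : s (m + 1) = s m := by
      show (if h : _ then _ else _) = s m
      rw [dif_neg hm]
    have hstep := (hz m).resolve_right hm
    show RewStep T (z m * s m) (z (m + 1) * s (m + 1))
    rw [hss]
    exact rewStep_mul_right hstep
  have hWe : ∀ m, (∃ a, z m = z (m + 1) * FreeMonoid.of a) → W (m + 1) = W m := by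
    intro m hm
    have hss : s (m + 1) = FreeMonoid.of hm.choose * s m := by
      show (if h : _ then _ else _) = _
      rw [dif_pos hm]
    show z (m + 1) * s (m + 1) = z m * s m
    rw [hss, ← mul_assoc, ← hm.choose_spec]
  by_cases hinf : ∀ M, ∃ m, M ≤ m ∧ ¬ ∃ a, z m = z (m + 1) * FreeMonoid.of a
  · obtain ⟨h, hh⟩ := exists_chain_of_infinitely_many
      (P := fun m => ¬ ∃ a, z m = z (m + 1) * FreeMonoid.of a) W hWs
      (fun m hm => hWe m (not_not.1 hm)) hinf
    exact hT h hh
  · push_neg at hinf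
    obtain ⟨M, hM⟩ := hinf
    have hdel : ∀ m, M ≤ m → ∃ a, z m = z (m + 1) * FreeMonoid.of a :=
      fun m hm => hM m hm
    have hlen : ∀ i, ((z (M + i)).toList.length + i ≤ (z M).toList.length) := by
      intro i
      induction i with
      | zero => simp
      | succ i ih =>
        obtain ⟨a, ha⟩ := hdel (M + i) (Nat.le_add_right _ _)
        have : (z (M + i)).toList.length = (z (M + i + 1)).toList.length + 1 := by
          rw [ha]
          simp [FreeMonoid.toList_mul]
        rw [this] at ih
        rw [show M + (i + 1) = M + i + 1 from rfl]
        omega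
    have := hlen ((z M).toList.length + 1)
    omega

/-- The `A`-rules and commutation rules do not change the `B`-projection. -/
lemma step12_bProj {w w' : FreeMonoid (A ⊕ B)}
    (h : RewStep (RulesA T ∪ RulesC corr2) w w') :
    bProj (FreeMonoid.toList w') = bProj (FreeMonoid.toList w) := by
  obtain ⟨x, u, v, y, hr, h1, h2⟩ := h
  rcases hr with hA | hC
  · obtain ⟨⟨t, t'⟩, _, heq⟩ := hA
    cases heq
    rw [h1, h2]
    simp [FreeMonoid.toList_mul, FreeMonoid.toList_map]
  · obtain ⟨⟨a, b⟩, heq⟩ := hC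
    cases heq
    rw [h1, h2]
    simp [FreeMonoid.toList_mul, FreeMonoid.toList_map, FreeMonoid.toList_of]

/-- Any rewriting step is either an `A`/commutation step, or induces an `S`-step on
the `B`-projection. -/
lemma step_cases {w w' : FreeMonoid (A ⊕ B)}
    (h : RewStep (Rules T S corr2 corr3) w w') :
    RewStep (RulesA T ∪ RulesC corr2) w w' ∨
      RewStep S (FreeMonoid.ofList (bProj (FreeMonoid.toList w)))
        (FreeMonoid.ofList (bProj (FreeMonoid.toList w'))) := by
  obtain ⟨x, u, v, y, hr, h1, h2⟩ := h
  rcases hr with hAC | hS3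
  · exact Or.inl ⟨x, u, v, y, hAC, h1, h2⟩
  · obtain ⟨⟨p, p'⟩, hp, heq⟩ := hS3
    cases heq
    refine Or.inr ⟨FreeMonoid.ofList (bProj (FreeMonoid.toList x)), p, p',
      FreeMonoid.ofList (bProj (FreeMonoid.toList y)), hp, ?_, ?_⟩
    · apply FreeMonoid.toList.injective
      rw [h1]
      simp [FreeMonoid.toList_mul, FreeMonoid.toList_map]
    · apply FreeMonoid.toList.injective
      rw [h2]
      simp [FreeMonoid.toList_mul, FreeMonoid.toList_map]

end Termination

end FCRSExt

namespace FCRSExt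

section Analysis

variable {A B : Type}
variable {T : Set (FreeMonoid A × FreeMonoid A)} {S : Set (FreeMonoid B × FreeMonoid B)}
variable {corr2 : A → B → FreeMonoid A} {corr3 : FreeMonoid B × FreeMonoid B → FreeMonoid A}

/-- How an `A`-rule or commutation step interacts with the decomposition
`w = (inl-prefix) ++ inr b :: rest`. -/
lemma step12_analysis {w w' : FreeMonoid (A ⊕ B)}
    (h : RewStep (RulesA T ∪ RulesC corr2) w w')
    {z : List A} {b : B} {r : List (A ⊕ B)}
    (hw : FreeMonoid.toList w = z.map Sum.inl ++ Sum.inr b :: r) :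
    (∃ r' : List (A ⊕ B), FreeMonoid.toList w' = z.map Sum.inl ++ Sum.inr b :: r' ∧
        RewStep (RulesA T ∪ RulesC corr2) (.ofList r) (.ofList r')) ∨
    (∃ z' : List A, FreeMonoid.toList w' = z'.map Sum.inl ++ Sum.inr b :: r ∧
        RewStep T (.ofList z) (.ofList z')) ∨
    (∃ (z' : List A) (a : A) (c : List (A ⊕ B)), z = z' ++ [a] ∧
        FreeMonoid.toList w' = z'.map Sum.inl ++ Sum.inr b :: c) := by
  obtain ⟨x, u, v, y, hr, h1, h2⟩ := h
  rw [h1] at hw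
  simp only [FreeMonoid.toList_mul] at hw
  have hw2 : FreeMonoid.toList w' =
      FreeMonoid.toList x ++ FreeMonoid.toList v ++ FreeMonoid.toList y := by
    rw [h2]; simp [FreeMonoid.toList_mul]
  rcases hr with hA | hC
  · obtain ⟨⟨t, t'⟩, ht, heq⟩ := hA
    cases heq
    have hc : (Sum.inr b : A ⊕ B) ∉ FreeMonoid.toList (FreeMonoid.map Sum.inl t) := by
      simp [FreeMonoid.toList_map]
    rcases factor_avoid hw hc with ⟨y₁, hp, hy⟩ | ⟨x₁, hx, hs⟩
    · -- the redex lies in the `inl`-prefix : a `T`-step on `z`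
      rw [List.append_assoc] at hp
      obtain ⟨z₁, z₂, rfl, hz₁, hz₂⟩ := List.map_eq_append_iff.1 hp
      rw [FreeMonoid.toList_map] at hz₂
      obtain ⟨z₃, z₄, rfl, hz₃, hz₄⟩ := List.map_eq_append_iff.1 hz₂
      have hz₃' : z₃ = FreeMonoid.toList t :=
        List.map_injective_iff.2 Sum.inl_injective hz₃
      refine Or.inr (Or.inl ⟨z₁ ++ FreeMonoid.toList t' ++ z₄, ?_, ?_⟩)
      · rw [hw2, hy, ← hz₁, ← hz₄]
        simp [FreeMonoid.toList_map]
      · refine ⟨.ofList z₁, t, t', .ofList z₄, ht, ?_, ?_⟩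
        · apply FreeMonoid.toList.injective
          simp [FreeMonoid.toList_mul, hz₃']
        · apply FreeMonoid.toList.injective
          simp [FreeMonoid.toList_mul]
    · -- the redex lies in the rest
      refine Or.inl ⟨x₁ ++ FreeMonoid.toList (FreeMonoid.map Sum.inl t') ++ FreeMonoid.toList y,
        ?_, ?_⟩
      · rw [hw2, hx]
        simp
      · refine ⟨.ofList x₁, FreeMonoid.map Sum.inl t, FreeMonoid.map Sum.inl t',
          .ofList (FreeMonoid.toList y), Or.inl ⟨(t, t'), ht, rfl⟩, ?_, ?_⟩
        · apply FreeMonoid.toList.injective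
          rw [hs]
          simp [FreeMonoid.toList_mul]
        · apply FreeMonoid.toList.injective
          simp [FreeMonoid.toList_mul]
  · obtain ⟨⟨a, b'⟩, heq⟩ := hC
    cases heq
    have hu : FreeMonoid.toList (FreeMonoid.of (Sum.inl a) * FreeMonoid.of (Sum.inr b') :
        FreeMonoid (A ⊕ B)) = [Sum.inl a, Sum.inr b'] := rfl
    rw [hu, List.append_assoc, List.append_eq_append_iff] at hw
    rcases hw with ⟨e, he1, he2⟩ | ⟨e, he1, he2⟩
    · -- `z.map inl = x ++ e` and `[inl a, inr b'] ++ y = e ++ inr b :: r`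
      obtain ⟨z₁, z₂, rfl, hz₁, hz₂⟩ := List.map_eq_append_iff.1 he1
      rw [← hz₂] at he2
      cases z₂ with
      | nil => simp at he2
      | cons a₁ z₃ =>
        simp only [List.map_cons, List.cons_append, List.cons.injEq, Sum.inl.injEq] at he2
        obtain ⟨ha₁, he3⟩ := he2
        cases z₃ with
        | cons a₂ z₄ => simp at he3
        | nil =>
          simp only [List.map_nil, List.nil_append, List.cons.injEq, Sum.inr.injEq] at he3
          obtain ⟨hb, hyr⟩ := he3
          subst ha₁ hb
          refine Or.inr (Or.inr ⟨z₁, a,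
            FreeMonoid.toList (FreeMonoid.map Sum.inl (corr2 a b')) ++ r, by simp, ?_⟩)
          rw [hw2, ← hz₁, ← hyr]
          simp [FreeMonoid.toList_mul, FreeMonoid.toList_of]
    · -- the redex lies in the rest
      cases e with
      | nil => simp at he2
      | cons c e₁ =>
        simp only [List.cons_append, List.cons.injEq] at he2
        obtain ⟨hc, hr'⟩ := he2
        refine Or.inl ⟨e₁ ++ FreeMonoid.toList (FreeMonoid.of (Sum.inr b') *
            FreeMonoid.map Sum.inl (corr2 a b')) ++ FreeMonoid.toList y, ?_, ?_⟩
        · rw [hw2, he1, ← hc]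
          simp
        · refine ⟨.ofList e₁, FreeMonoid.of (Sum.inl a) * FreeMonoid.of (Sum.inr b'),
            FreeMonoid.of (Sum.inr b') * FreeMonoid.map Sum.inl (corr2 a b'),
            .ofList (FreeMonoid.toList y), Or.inr ⟨(a, b'), rfl⟩, ?_, ?_⟩
          · apply FreeMonoid.toList.injective
            rw [hr']
            simp [FreeMonoid.toList_mul, hu]
          · apply FreeMonoid.toList.injective
            simp [FreeMonoid.toList_mul]

end Analysis

end FCRSExt

namespace FCRSExt

section Noetherian

variable {A B : Type}
variable {T : Set (FreeMonoid A × FreeMonoid A)} {S : Set (FreeMonoid B × FreeMonoid B)}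
variable {corr2 : A → B → FreeMonoid A} {corr3 : FreeMonoid B × FreeMonoid B → FreeMonoid A}

/-- No infinite chains of `A`-rule / commutation steps. -/
lemma step12_noChain
    (hT : ∀ f : ℕ → FreeMonoid A, ¬ ∀ m, RewStep T (f m) (f (m + 1))) :
    ∀ (k : ℕ) (f : ℕ → FreeMonoid (A ⊕ B)),
      (∀ m, RewStep (RulesA T ∪ RulesC corr2) (f m) (f (m + 1))) →
      (bProj (FreeMonoid.toList (f 0))).length = k → False := by
  intro k
  induction k with
  | zero =>
    intro f hf h0
    have hproj : ∀ m, bProj (FreeMonoid.toList (f m)) = bProj (FreeMonoid.toList (f 0)) := by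
      intro m
      induction m with
      | zero => rfl
      | succ m ih => rw [step12_bProj (hf m), ih]
    have hpure : ∀ m, ∃ z : List A, FreeMonoid.toList (f m) = z.map Sum.inl := by
      intro m
      refine eq_map_inl_of_bProj_nil ?_
      rw [hproj m]
      exact List.length_eq_zero_iff.1 h0
    choose zs hzs using hpure
    refine hT (fun m => .ofList (zs m)) fun m => ?_
    obtain ⟨x, u, v, y, hr, h1, h2⟩ := hf m
    have hl1 : FreeMonoid.toList x ++ FreeMonoid.toList u ++ FreeMonoid.toList y
        = (zs m).map Sum.inl := by
      rw [← hzs m, h1]; simp [FreeMonoid.toList_mul]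
    rcases hr with hA | hC
    · obtain ⟨⟨t, t'⟩, ht, heq⟩ := hA
      cases heq
      rw [List.append_assoc] at hl1
      obtain ⟨z₁, z₂, hz, hz₁, hz₂⟩ := List.map_eq_append_iff.1 hl1.symm
      rw [FreeMonoid.toList_map] at hz₂
      obtain ⟨z₃, z₄, hz', hz₃, hz₄⟩ := List.map_eq_append_iff.1 hz₂
      have hz₃' : z₃ = FreeMonoid.toList t :=
        List.map_injective_iff.2 Sum.inl_injective hz₃
      have hnext : zs (m + 1) = z₁ ++ FreeMonoid.toList t' ++ z₄ := by
        have : FreeMonoid.toList (f (m + 1)) = (z₁ ++ FreeMonoid.toList t' ++ z₄).map Sum.inl := by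
          rw [h2]
          simp only [FreeMonoid.toList_mul, FreeMonoid.toList_map]
          rw [← hz₁, ← hz₄]
          simp
        have h4 := (hzs (m + 1)).symm.trans this
        exact List.map_injective_iff.2 Sum.inl_injective h4
      refine ⟨.ofList z₁, t, t', .ofList z₄, ht, ?_, ?_⟩
      · apply FreeMonoid.toList.injective
        simp [FreeMonoid.toList_mul, hz, hz', hz₃']
      · apply FreeMonoid.toList.injective
        simp [FreeMonoid.toList_mul, hnext]
    · obtain ⟨⟨a, b⟩, heq⟩ := hC
      cases heq
      exfalso
      have : (Sum.inr b : A ⊕ B) ∈ (zs m).map Sum.inl := by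
        rw [← hl1]
        simp [FreeMonoid.toList_mul, FreeMonoid.toList_of]
      simp at this
  | succ k ih =>
    intro f hf h0
    have hproj : ∀ m, bProj (FreeMonoid.toList (f m)) = bProj (FreeMonoid.toList (f 0)) := by
      intro m
      induction m with
      | zero => rfl
      | succ m ih' => rw [step12_bProj (hf m), ih']
    have hdec : ∀ m, ∃ (z : List A) (b : B) (r : List (A ⊕ B)),
        FreeMonoid.toList (f m) = z.map Sum.inl ++ Sum.inr b :: r := by
      intro m
      refine decomp_of_bProj_ne_nil ?_
      rw [hproj m]
      intro hh
      simp [hh] at h0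
    choose zf bf rf hzbr using hdec
    have tri : ∀ m,
        (zf (m + 1) = zf m ∧ RewStep (RulesA T ∪ RulesC corr2)
          (.ofList (rf m)) (.ofList (rf (m + 1)))) ∨
        (RewStep T (.ofList (zf m)) (.ofList (zf (m + 1)))) ∨
        (∃ a, zf m = zf (m + 1) ++ [a]) := by
      intro m
      rcases step12_analysis (hf m) (hzbr m) with
        ⟨r', hshape, hstep⟩ | ⟨z', hshape, hstep⟩ | ⟨z', a, c, hza, hshape⟩
      · obtain ⟨h1, h2, h3⟩ := decomp_unique ((hzbr (m + 1)).symm.trans hshape)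
        exact Or.inl ⟨h1, h3 ▸ hstep⟩
      · obtain ⟨h1, h2, h3⟩ := decomp_unique ((hzbr (m + 1)).symm.trans hshape)
        exact Or.inr (Or.inl (h1 ▸ hstep))
      · obtain ⟨h1, h2, h3⟩ := decomp_unique ((hzbr (m + 1)).symm.trans hshape)
        exact Or.inr (Or.inr ⟨a, by rw [hza, h1]⟩)
    have hzrel : ∀ m,
        (RewStep T (FreeMonoid.ofList (zf m)) (FreeMonoid.ofList (zf (m + 1))) ∨
          ∃ a, FreeMonoid.ofList (zf m) = FreeMonoid.ofList (zf (m + 1)) * FreeMonoid.of a) ∨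
        FreeMonoid.ofList (zf (m + 1)) = FreeMonoid.ofList (zf m) := by
      intro m
      rcases tri m with ⟨h1, _⟩ | h1 | ⟨a, ha⟩
      · right; rw [h1]
      · exact Or.inl (Or.inl h1)
      · refine Or.inl (Or.inr ⟨a, ?_⟩)
        apply FreeMonoid.toList.injective
        simp [FreeMonoid.toList_mul, ha]
    obtain ⟨M, hM⟩ := eventually_const (rel := fun z z' => RewStep T z z' ∨ ∃ a, z = z' * FreeMonoid.of a) (delOrT_noChain hT)
      (fun m => FreeMonoid.ofList (zf m)) hzrel
    have hAcase : ∀ m, M ≤ m →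
        RewStep (RulesA T ∪ RulesC corr2) (.ofList (rf m)) (.ofList (rf (m + 1))) := by
      intro m hm
      have hzeq : zf (m + 1) = zf m := FreeMonoid.ofList.injective (hM m hm)
      rcases tri m with ⟨_, h3⟩ | h1 | ⟨a, ha⟩
      · exact h3
      · exfalso
        rw [hzeq] at h1
        exact rewStep_irrefl hT h1
      · exfalso
        rw [hzeq] at ha
        have := congrArg List.length ha
        simp at this
    refine ih (fun i => .ofList (rf (M + i))) (fun i => ?_) ?_
    · have := hAcase (M + i) (Nat.le_add_right _ _)
      rwa [show M + i + 1 = M + (i + 1) from rfl] at this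
    · have hsplit : bProj (FreeMonoid.toList (f M)) = bf M :: bProj (rf M) := by
        rw [hzbr M]; simp
      rw [hproj M] at hsplit
      have : (bProj (FreeMonoid.toList (f 0))).length = (bProj (rf M)).length + 1 := by
        rw [hsplit]; simp
      simp only [Nat.add_zero, FreeMonoid.toList_ofList]
      omega

/-- The combined system admits no infinite rewriting sequence. -/
theorem rules_noChain
    (hT : ∀ f : ℕ → FreeMonoid A, ¬ ∀ m, RewStep T (f m) (f (m + 1)))
    (hS : ∀ f : ℕ → FreeMonoid B, ¬ ∀ m, RewStep S (f m) (f (m + 1))) :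
    ∀ f : ℕ → FreeMonoid (A ⊕ B),
      ¬ ∀ m, RewStep (Rules T S corr2 corr3) (f m) (f (m + 1)) := by
  intro f hf
  by_cases hinf : ∀ M, ∃ m, M ≤ m ∧ ¬ RewStep (RulesA T ∪ RulesC corr2) (f m) (f (m + 1))
  · obtain ⟨h, hh⟩ := exists_chain_of_infinitely_many
      (P := fun m => ¬ RewStep (RulesA T ∪ RulesC corr2) (f m) (f (m + 1)))
      (fun m => FreeMonoid.ofList (bProj (FreeMonoid.toList (f m))))
      (fun m hm => (step_cases (hf m)).resolve_left hm)
      (fun m hm => congrArg FreeMonoid.ofList (step12_bProj (not_not.1 hm))) hinf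
    exact hS h hh
  · push_neg at hinf
    obtain ⟨M, hM⟩ := hinf
    exact step12_noChain hT (bProj (FreeMonoid.toList (f M))).length
      (fun i => f (M + i))
      (fun i => by
        have := hM (M + i) (Nat.le_add_right _ _)
        rwa [show M + i + 1 = M + (i + 1) from rfl] at this) rfl

end Noetherian

end FCRSExt

namespace FCRSExt

section Irreducible

variable {A B : Type}
variable {T : Set (FreeMonoid A × FreeMonoid A)} {S : Set (FreeMonoid B × FreeMonoid B)}
variable {corr2 : A → B → FreeMonoid A} {corr3 : FreeMonoid B × FreeMonoid B → FreeMonoid A}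

/-- An irreducible word for the combined system splits as an `S`-irreducible
`B`-part followed by a `T`-irreducible `A`-part. -/
lemma irred_shape {w : FreeMonoid (A ⊕ B)}
    (hw : RewIrreducible (Rules T S corr2 corr3) w) :
    ∃ (u : List B) (z : List A),
      FreeMonoid.toList w = u.map Sum.inr ++ z.map Sum.inl ∧
      RewIrreducible S (.ofList u) ∧ RewIrreducible T (.ofList z) := by
  rcases shape_or_pair (FreeMonoid.toList w) with ⟨u, z, hshape⟩ | ⟨x, a, b, y, hpair⟩
  · refine ⟨u, z, hshape, ?_, ?_⟩
    · rintro ⟨xs, us, vs, ys, hrule, heq⟩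
      apply hw
      refine ⟨.ofList ((FreeMonoid.toList xs).map Sum.inr), FreeMonoid.map Sum.inr us,
        FreeMonoid.map Sum.inr vs * FreeMonoid.map Sum.inl (corr3 (us, vs)),
        .ofList ((FreeMonoid.toList ys).map Sum.inr ++ z.map Sum.inl),
        Or.inr ⟨(us, vs), hrule, rfl⟩, ?_⟩
      apply FreeMonoid.toList.injective
      have : u = FreeMonoid.toList xs ++ FreeMonoid.toList us ++ FreeMonoid.toList ys := by
        have := congrArg FreeMonoid.toList heq
        simpa [FreeMonoid.toList_mul] using this
      rw [hshape, this]
      simp [FreeMonoid.toList_mul, FreeMonoid.toList_map]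
    · rintro ⟨xs, us, vs, ys, hrule, heq⟩
      apply hw
      refine ⟨.ofList (u.map Sum.inr ++ (FreeMonoid.toList xs).map Sum.inl),
        FreeMonoid.map Sum.inl us, FreeMonoid.map Sum.inl vs,
        .ofList ((FreeMonoid.toList ys).map Sum.inl),
        Or.inl (Or.inl ⟨(us, vs), hrule, rfl⟩), ?_⟩
      apply FreeMonoid.toList.injective
      have : z = FreeMonoid.toList xs ++ FreeMonoid.toList us ++ FreeMonoid.toList ys := by
        have := congrArg FreeMonoid.toList heq
        simpa [FreeMonoid.toList_mul] using this
      rw [hshape, this]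
      simp [FreeMonoid.toList_mul, FreeMonoid.toList_map]
  · exfalso
    apply hw
    refine ⟨.ofList x, FreeMonoid.of (Sum.inl a) * FreeMonoid.of (Sum.inr b),
      FreeMonoid.of (Sum.inr b) * FreeMonoid.map Sum.inl (corr2 a b), .ofList y,
      Or.inl (Or.inr ⟨(a, b), rfl⟩), ?_⟩
    apply FreeMonoid.toList.injective
    rw [hpair]
    simp [FreeMonoid.toList_mul, FreeMonoid.toList_of]

/-- Conversely, a word of that shape is irreducible for the combined system. -/
lemma irred_of_shape
    (hTnoe : ∀ f : ℕ → FreeMonoid A, ¬ ∀ m, RewStep T (f m) (f (m + 1)))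
    (hSnoe : ∀ f : ℕ → FreeMonoid B, ¬ ∀ m, RewStep S (f m) (f (m + 1)))
    {w : FreeMonoid (A ⊕ B)} {u : List B} {z : List A}
    (hw : FreeMonoid.toList w = u.map Sum.inr ++ z.map Sum.inl)
    (hu : RewIrreducible S (.ofList u)) (hz : RewIrreducible T (.ofList z)) :
    RewIrreducible (Rules T S corr2 corr3) w := by
  rintro ⟨x, u0, v0, y, hrule, heq⟩
  have hl : FreeMonoid.toList x ++ FreeMonoid.toList u0 ++ FreeMonoid.toList y
      = u.map Sum.inr ++ z.map Sum.inl := by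
    rw [← hw, heq]
    simp [FreeMonoid.toList_mul]
  rcases hrule with (hA | hC) | hS3
  · obtain ⟨⟨t, t'⟩, ht, heq2⟩ := hA
    cases heq2
    have htne : FreeMonoid.toList t ≠ [] := fun hh =>
      lhs_ne_one hTnoe ht (FreeMonoid.toList.injective hh)
    rw [List.append_assoc, List.append_eq_append_iff] at hl
    rcases hl with ⟨e, he1, he2⟩ | ⟨e, he1, he2⟩
    · obtain ⟨u₁, u₂, rfl, hu₁, hu₂⟩ := List.map_eq_append_iff.1 he1
      rw [← hu₂] at he2
      cases u₂ with
      | cons b u₃ =>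
        rw [FreeMonoid.toList_map] at he2
        cases hcc : FreeMonoid.toList t with
        | nil => exact htne hcc
        | cons c tl => rw [hcc] at he2; simp at he2
      | nil =>
        simp only [List.map_nil, List.nil_append] at he2
        rw [FreeMonoid.toList_map] at he2
        obtain ⟨l₁, l₂, hz12, hl₁, hl₂⟩ := List.append_eq_map_iff.1 he2
        have hl₁' : l₁ = FreeMonoid.toList t :=
          List.map_injective_iff.2 Sum.inl_injective hl₁
        apply hz
        refine ⟨1, t, t', .ofList l₂, ht, ?_⟩
        apply FreeMonoid.toList.injective
        simp [FreeMonoid.toList_mul, hz12, hl₁']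
    · obtain ⟨z₁, z₂, rfl, hz₁, hz₂⟩ := List.map_eq_append_iff.1 he2
      rw [FreeMonoid.toList_map] at hz₂
      obtain ⟨z₃, z₄, rfl, hz₃, hz₄⟩ := List.map_eq_append_iff.1 hz₂
      have hz₃' : z₃ = FreeMonoid.toList t :=
        List.map_injective_iff.2 Sum.inl_injective hz₃
      apply hz
      refine ⟨.ofList z₁, t, t', .ofList z₄, ht, ?_⟩
      apply FreeMonoid.toList.injective
      simp [FreeMonoid.toList_mul, hz₃']
  · obtain ⟨⟨a, b⟩, heq2⟩ := hC
    cases heq2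
    have hu0 : FreeMonoid.toList (FreeMonoid.of (Sum.inl a) * FreeMonoid.of (Sum.inr b) :
        FreeMonoid (A ⊕ B)) = [Sum.inl a, Sum.inr b] := rfl
    rw [hu0, List.append_assoc, List.append_eq_append_iff] at hl
    rcases hl with ⟨e, he1, he2⟩ | ⟨e, he1, he2⟩
    · obtain ⟨u₁, u₂, rfl, hu₁, hu₂⟩ := List.map_eq_append_iff.1 he1
      rw [← hu₂] at he2
      cases u₂ with
      | cons b' u₃ => simp at he2
      | nil =>
        have hmem : (Sum.inr b : A ⊕ B) ∈ List.map Sum.inr ([] : List B) ++ z.map Sum.inl := by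
          rw [← he2]; simp
        simp at hmem
    · have : (Sum.inr b : A ⊕ B) ∈ z.map Sum.inl := by
        rw [he2]; simp
      simp at this
  · obtain ⟨⟨p, p'⟩, hp, heq2⟩ := hS3
    cases heq2
    have hpne : FreeMonoid.toList p ≠ [] := fun hh =>
      lhs_ne_one hSnoe hp (FreeMonoid.toList.injective hh)
    rw [List.append_assoc, List.append_eq_append_iff] at hl
    rcases hl with ⟨e, he1, he2⟩ | ⟨e, he1, he2⟩
    · obtain ⟨u₁, u₂, rfl, hu₁, hu₂⟩ := List.map_eq_append_iff.1 he1
      rw [← hu₂, FreeMonoid.toList_map, List.append_eq_append_iff] at he2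
      rcases he2 with ⟨d, hd1, hd2⟩ | ⟨d, hd1, hd2⟩
      · obtain ⟨u₃, u₄, rfl, hu₃, hu₄⟩ := List.map_eq_append_iff.1 hd1
        have hu₃' : u₃ = FreeMonoid.toList p :=
          List.map_injective_iff.2 Sum.inr_injective hu₃
        apply hu
        refine ⟨.ofList u₁, p, p', .ofList u₄, hp, ?_⟩
        apply FreeMonoid.toList.injective
        simp [FreeMonoid.toList_mul, hu₃']
      · obtain ⟨p₁, p₂, hpp, hp₁, hp₂⟩ := List.map_eq_append_iff.1 hd1
        cases p₂ with
        | cons c p₃ =>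
          rw [← hp₂] at hd2
          cases z with
          | nil => simp at hd2
          | cons c' z' => simp at hd2
        | nil =>
          have hu₂' : u₂ = p₁ := List.map_injective_iff.2 Sum.inr_injective hp₁.symm
          apply hu
          refine ⟨.ofList u₁, p, p', 1, hp, ?_⟩
          apply FreeMonoid.toList.injective
          simp [FreeMonoid.toList_mul, hu₂', hpp]
    · obtain ⟨z₁, z₂, rfl, hz₁, hz₂⟩ := List.map_eq_append_iff.1 he2
      rw [FreeMonoid.toList_map] at hz₂
      cases hcc : FreeMonoid.toList p with
      | nil => exact hpne hcc
      | cons c pl =>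
        rw [hcc] at hz₂
        cases z₂ with
        | nil => simp at hz₂
        | cons c' z₃ => simp at hz₂

end Irreducible

end FCRSExt

namespace FCRSExt

section Assembly

variable {G : Type} [Group G] {N : Subgroup G} [N.Normal] {A B : Type}

theorem construction
    (πN : A → ↥N) (πQ : B → G ⧸ N) (gb : B → G)
    (hgb : ∀ b, ((gb b : G) : G ⧸ N) = πQ b)
    {T : Set (FreeMonoid A × FreeMonoid A)} {S : Set (FreeMonoid B × FreeMonoid B)}
    {corr2 : A → B → FreeMonoid A} {corr3 : FreeMonoid B × FreeMonoid B → FreeMonoid A}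
    (hCT : IsCompleteRewritingSystem πN T) (hCS : IsCompleteRewritingSystem πQ S)
    (hcorr2 : ∀ a b, ((FreeMonoid.lift πN (corr2 a b) : ↥N) : G)
        = (gb b)⁻¹ * ((πN a : ↥N) : G) * gb b)
    (hcorr3 : ∀ p ∈ S, FreeMonoid.lift (piG πN gb) (FreeMonoid.map Sum.inr p.2)
        * ((FreeMonoid.lift πN (corr3 p) : ↥N) : G)
        = FreeMonoid.lift (piG πN gb) (FreeMonoid.map Sum.inr p.1)) :
    IsCompleteRewritingSystem (piG πN gb) (Rules T S corr2 corr3) := by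
  have hpres : ∀ p ∈ Rules T S corr2 corr3,
      FreeMonoid.lift (piG πN gb) p.1 = FreeMonoid.lift (piG πN gb) p.2 :=
    rules_preserve πN gb hcorr2 hcorr3
      (fun u v huv => (hCT.2.1 u v).2 (ConGen.Rel.of _ _ huv))
  -- existence of irreducible representatives
  have hNF : ∀ g : G, ∃ w, FreeMonoid.lift (piG πN gb) w = g ∧
      RewIrreducible (Rules T S corr2 corr3) w := by
    intro g
    obtain ⟨u, ⟨huval, huirr⟩, -⟩ := hCS.2.2.2 ((g : G) : G ⧸ N)
    have hmem : (FreeMonoid.lift (piG πN gb) (FreeMonoid.map Sum.inr u))⁻¹ * g ∈ N := by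
      rw [← QuotientGroup.eq_one_iff]
      rw [QuotientGroup.mk_mul, QuotientGroup.mk_inv, mk_evG_mapInr πN gb πQ hgb u, huval]
      simp
    obtain ⟨z, ⟨hzval, hzirr⟩, -⟩ := hCT.2.2.2 ⟨_, hmem⟩
    refine ⟨FreeMonoid.map Sum.inr u * FreeMonoid.map Sum.inl z, ?_, ?_⟩
    · rw [map_mul, evG_mapInl, hzval]
      exact mul_inv_cancel_left _ g
    · refine irred_of_shape hCT.2.2.1 hCS.2.2.1
        (u := FreeMonoid.toList u) (z := FreeMonoid.toList z) ?_ ?_ ?_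
      · simp [FreeMonoid.toList_mul, FreeMonoid.toList_map]
      · exact huirr
      · exact hzirr
  -- uniqueness of irreducible representatives
  have hUniq : ∀ w₁ w₂, FreeMonoid.lift (piG πN gb) w₁ = FreeMonoid.lift (piG πN gb) w₂ →
      RewIrreducible (Rules T S corr2 corr3) w₁ →
      RewIrreducible (Rules T S corr2 corr3) w₂ → w₁ = w₂ := by
    intro w₁ w₂ hval h1 h2
    obtain ⟨u₁, z₁, hs₁, hu₁, hz₁⟩ := irred_shape h1
    obtain ⟨u₂, z₂, hs₂, hu₂, hz₂⟩ := irred_shape h2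
    have hw₁ : w₁ = FreeMonoid.map Sum.inr (.ofList u₁) * FreeMonoid.map Sum.inl (.ofList z₁) := by
      apply FreeMonoid.toList.injective
      rw [hs₁]
      simp [FreeMonoid.toList_mul, FreeMonoid.toList_map]
    have hw₂ : w₂ = FreeMonoid.map Sum.inr (.ofList u₂) * FreeMonoid.map Sum.inl (.ofList z₂) := by
      apply FreeMonoid.toList.injective
      rw [hs₂]
      simp [FreeMonoid.toList_mul, FreeMonoid.toList_map]
    have hqval : ∀ (u : List B) (z : List A),
        ((FreeMonoid.lift (piG πN gb)
            (FreeMonoid.map Sum.inr (.ofList u) * FreeMonoid.map Sum.inl (.ofList z)) : G) :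
              G ⧸ N)
          = FreeMonoid.lift πQ (.ofList u) := by
      intro u z
      rw [map_mul, QuotientGroup.mk_mul, evG_mapInl, mk_evG_mapInr πN gb πQ hgb]
      rw [(QuotientGroup.eq_one_iff _).2 (SetLike.coe_mem _), mul_one]
    have hq : FreeMonoid.lift πQ (FreeMonoid.ofList u₁) = FreeMonoid.lift πQ (.ofList u₂) := by
      rw [← hqval u₁ z₁, ← hqval u₂ z₂, ← hw₁, ← hw₂, hval]
    have huu : (FreeMonoid.ofList u₁ : FreeMonoid B) = .ofList u₂ := by
      obtain ⟨w₀, -, hwuniq⟩ := hCS.2.2.2 (FreeMonoid.lift πQ (.ofList u₁))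
      rw [hwuniq (.ofList u₁) ⟨rfl, hu₁⟩, hwuniq (.ofList u₂) ⟨hq.symm, hu₂⟩]
    rw [hw₁, hw₂, huu] at hval ⊢
    rw [map_mul, map_mul, evG_mapInl, evG_mapInl] at hval
    have hzeq : FreeMonoid.lift πN (FreeMonoid.ofList z₁) = FreeMonoid.lift πN (.ofList z₂) :=
      Subtype.coe_injective (mul_left_cancel hval)
    have hzz : (FreeMonoid.ofList z₁ : FreeMonoid A) = .ofList z₂ := by
      obtain ⟨w₀, -, hwuniq⟩ := hCT.2.2.2 (FreeMonoid.lift πN (.ofList z₁))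
      rw [hwuniq (.ofList z₁) ⟨rfl, hz₁⟩, hwuniq (.ofList z₂) ⟨hzeq.symm, hz₂⟩]
    rw [hzz]
  have hNoe := rules_noChain (corr2 := corr2) (corr3 := corr3) hCT.2.2.1 hCS.2.2.1
  -- one rewriting step is in the congruence and preserves the value
  set c := conGen (fun w w' : FreeMonoid (A ⊕ B) => (w, w') ∈ Rules T S corr2 corr3) with hc
  have hstep_c : ∀ w w', RewStep (Rules T S corr2 corr3) w w' →
      c w w' ∧ FreeMonoid.lift (piG πN gb) w' = FreeMonoid.lift (piG πN gb) w := by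
    rintro w w' ⟨x, u, v, y, hr, rfl, rfl⟩
    constructor
    · exact c.mul (c.mul (c.refl x) (ConGen.Rel.of u v hr)) (c.refl y)
    · have := hpres (u, v) hr
      simp only [map_mul]
      rw [this]
  -- every word rewrites (within the congruence) to an irreducible one
  have hto : ∀ w, ∃ w', c w w' ∧
      FreeMonoid.lift (piG πN gb) w' = FreeMonoid.lift (piG πN gb) w ∧
      RewIrreducible (Rules T S corr2 corr3) w' := by
    have wf := wf_flip_of_noChain hNoe
    intro w
    induction w using WellFounded.induction wf with
    | _ w ih =>
      by_cases hirr : RewIrreducible (Rules T S corr2 corr3) w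
      · exact ⟨w, c.refl w, rfl, hirr⟩
      · obtain ⟨x, u, v, y, hr, h1⟩ := not_not.1 hirr
        have hstep : RewStep (Rules T S corr2 corr3) w (x * v * y) := ⟨x, u, v, y, hr, h1, rfl⟩
        obtain ⟨w', hcw, hvw, hirrw⟩ := ih (x * v * y) hstep
        obtain ⟨hc1, hv1⟩ := hstep_c _ _ hstep
        exact ⟨w', hc1.trans hcw, hvw.trans hv1, hirrw⟩
  refine ⟨?_, ?_, hNoe, ?_⟩
  · intro g
    obtain ⟨w, h1, -⟩ := hNF g
    exact ⟨w, h1⟩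
  · intro u v
    constructor
    · intro h
      obtain ⟨u', hcu, hvu, hiu⟩ := hto u
      obtain ⟨v', hcv, hvv, hiv⟩ := hto v
      have : u' = v' := hUniq u' v' (by rw [hvu, hvv, h]) hiu hiv
      exact hcu.trans (this ▸ hcv.symm)
    · intro h
      have hle : c ≤ Con.ker (FreeMonoid.lift (piG πN gb)) :=
        Con.conGen_le.2 fun x y hxy => (Con.ker_rel _).2 (hpres (x, y) hxy)
      exact (Con.ker_rel _).1 (hle h)
  · intro g
    obtain ⟨w, h1, h2⟩ := hNF g
    exact ⟨w, ⟨h1, h2⟩, fun y hy => hUniq y w (by rw [hy.1, h1]) hy.2 h2⟩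

end Assembly

end FCRSExt

open FCRSExt in
/-- If N is normal in G and both N and G/N have finite complete
rewriting systems, then so does G. -/
theorem extension_hasFiniteCompleteRewritingSystem
    (G : Type) [Group G] (N : Subgroup G) [N.Normal]
    (hN : HasFiniteCompleteRewritingSystem N)
    (hQ : HasFiniteCompleteRewritingSystem (G ⧸ N)) :
    HasFiniteCompleteRewritingSystem G := by
  classical
  obtain ⟨A, hFinA, πN, T, hTfin, hCT⟩ := hN
  obtain ⟨B, hFinB, πQ, S, hSfin, hCS⟩ := hQ
  let gb : B → G := fun b => Quotient.out (πQ b)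
  have hgb : ∀ b, ((gb b : G) : G ⧸ N) = πQ b := fun b => QuotientGroup.out_eq' (πQ b)
  have hex2 : ∀ (a : A) (b : B), ∃ ca : FreeMonoid A,
      ((FreeMonoid.lift πN ca : ↥N) : G) = (gb b)⁻¹ * ((πN a : ↥N) : G) * gb b := by
    intro a b
    have hmem : (gb b)⁻¹ * ((πN a : ↥N) : G) * gb b ∈ N :=
      Subgroup.Normal.conj_mem' ‹N.Normal› _ (πN a).2 (gb b)
    obtain ⟨ca, hca⟩ := hCT.1 ⟨_, hmem⟩
    exact ⟨ca, by rw [hca]⟩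
  choose corr2 hcorr2 using hex2
  have hex3 : ∀ p : FreeMonoid B × FreeMonoid B, ∃ cp : FreeMonoid A, p ∈ S →
      FreeMonoid.lift (piG πN gb) (FreeMonoid.map Sum.inr p.2)
          * ((FreeMonoid.lift πN cp : ↥N) : G)
        = FreeMonoid.lift (piG πN gb) (FreeMonoid.map Sum.inr p.1) := by
    intro p
    by_cases hp : p ∈ S
    · have hqeq : FreeMonoid.lift πQ p.1 = FreeMonoid.lift πQ p.2 :=
        (hCS.2.1 p.1 p.2).2 (ConGen.Rel.of _ _ hp)
      have hmem : (FreeMonoid.lift (piG πN gb) (FreeMonoid.map Sum.inr p.2))⁻¹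
          * FreeMonoid.lift (piG πN gb) (FreeMonoid.map Sum.inr p.1) ∈ N := by
        rw [← QuotientGroup.eq_one_iff]
        rw [QuotientGroup.mk_mul, QuotientGroup.mk_inv, mk_evG_mapInr πN gb πQ hgb,
          mk_evG_mapInr πN gb πQ hgb, hqeq]
        simp
      obtain ⟨cp, hcp⟩ := hCT.1 ⟨_, hmem⟩
      refine ⟨cp, fun _ => ?_⟩
      rw [hcp]
      exact mul_inv_cancel_left _ _
    · exact ⟨1, fun h => absurd h hp⟩
  choose corr3 hcorr3 using hex3
  haveI := hFinA
  haveI := hFinB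
  exact ⟨A ⊕ B, inferInstance, piG πN gb, Rules T S corr2 corr3,
    rules_finite hTfin hSfin,
    construction πN πQ gb hgb hCT hCS hcorr2 hcorr3⟩
end

section
/- If the groups G₁ and G₂ each have a finite complete rewriting system, then their free product G₁ * G₂ has a finite complete rewriting system. -/
namespace FPRS
variable {α : Type} {R : Set (FreeMonoid α × FreeMonoid α)}

lemma nil_not_lhs (h : ∀ f : ℕ → FreeMonoid α, ¬ ∀ m : ℕ, RewStep R (f m) (f (m + 1)))
    (v : FreeMonoid α) : ((1 : FreeMonoid α), v) ∉ R := by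
  intro hmem
  refine h (fun m => v ^ m) fun m => ⟨v ^ m, 1, v, 1, hmem, by simp, by simp [pow_succ]⟩

lemma wf_of_noInf (h : ∀ f : ℕ → FreeMonoid α, ¬ ∀ m : ℕ, RewStep R (f m) (f (m + 1))) :
    WellFounded (fun a b => RewStep R b a) := by
  set r : FreeMonoid α → FreeMonoid α → Prop := fun a b => RewStep R b a with hr
  by_contra hwf
  have hex : ∃ a, ¬ Acc r a := by
    by_contra hall
    push_neg at hall
    exact hwf ⟨hall⟩
  have key : ∀ x : {x : FreeMonoid α // ¬ Acc r x},
      ∃ y : {x : FreeMonoid α // ¬ Acc r x}, RewStep R x.1 y.1 := by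
    rintro ⟨x, hx⟩
    by_contra hy
    push_neg at hy
    refine hx (Acc.intro x fun y hyx => ?_)
    by_contra hacc
    exact hy ⟨y, hacc⟩ hyx
  choose g hg using key
  obtain ⟨a, ha⟩ := hex
  refine h (fun m => (g^[m] ⟨a, ha⟩).1) fun m => ?_
  show RewStep R (g^[m] ⟨a, ha⟩).1 (g^[m + 1] ⟨a, ha⟩).1
  rw [Function.iterate_succ_apply']
  exact hg _

lemma rtg_lift {G : Type*} [Group G] {π : α → G}
    (hpres : ∀ w w' : FreeMonoid α, (w, w') ∈ R → FreeMonoid.lift π w = FreeMonoid.lift π w')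
    {w w' : FreeMonoid α} (h : RewStep R w w') :
    FreeMonoid.lift π w = FreeMonoid.lift π w' := by
  obtain ⟨x, u, v, y, hR, rfl, rfl⟩ := h
  simp [hpres _ _ hR]

lemma exists_irred (h : ∀ f : ℕ → FreeMonoid α, ¬ ∀ m : ℕ, RewStep R (f m) (f (m + 1)))
    (w : FreeMonoid α) :
    ∃ w', Relation.ReflTransGen (RewStep R) w w' ∧ RewIrreducible R w' := by
  induction w using (wf_of_noInf h).induction with
  | _ w ih =>
    by_cases hw : RewIrreducible R w
    · exact ⟨w, .refl, hw⟩
    · rw [RewIrreducible, not_not] at hw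
      obtain ⟨x, u, v, y, hR, hxy⟩ := hw
      have hstep : RewStep R w (x * v * y) := ⟨x, u, v, y, hR, hxy, rfl⟩
      obtain ⟨w', h1, h2⟩ := ih _ hstep
      exact ⟨w', .head hstep h1, h2⟩


variable {A B : Type}

/-- A block: a pure word over `A` or over `B`. -/
abbrev Blk (A B : Type) := List A ⊕ List B

/-- Embed a block back into the mixed alphabet. -/
def emb : Blk A B → List (A ⊕ B) := Sum.elim (List.map .inl) (List.map .inr)

@[simp] lemma emb_inl (u : List A) : (emb (.inl u) : List (A ⊕ B)) = u.map .inl := rfl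
@[simp] lemma emb_inr (u : List B) : (emb (.inr u) : List (A ⊕ B)) = u.map .inr := rfl

/-- Prepend one letter to a block decomposition. -/
def consB : (A ⊕ B) → List (Blk A B) → List (Blk A B)
  | .inl a, .inl b :: r => .inl (a :: b) :: r
  | .inl a, r => .inl [a] :: r
  | .inr a, .inr b :: r => .inr (a :: b) :: r
  | .inr a, r => .inr [a] :: r

/-- The block decomposition of a word over `A ⊕ B`. -/
def blocks : List (A ⊕ B) → List (Blk A B)
  | [] => []
  | c :: t => consB c (blocks t)

@[simp] lemma blocks_nil : (blocks [] : List (Blk A B)) = [] := rfl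
lemma blocks_cons (c : A ⊕ B) (t : List (A ⊕ B)) : blocks (c :: t) = consB c (blocks t) := rfl

lemma flatMap_consB (c : A ⊕ B) (l : List (Blk A B)) :
    (consB c l).flatMap emb = c :: l.flatMap emb := by
  rcases c with a | a <;> rcases l with _ | ⟨b | b, r⟩ <;> simp [consB, emb]

lemma flatMap_blocks (w : List (A ⊕ B)) : (blocks w).flatMap emb = w := by
  induction w with
  | nil => rfl
  | cons c t ih => rw [blocks_cons, flatMap_consB, ih]

/-- Nonemptiness of a block. -/
def bne : Blk A B → Prop := fun b => b.elim (· ≠ ([] : List A)) (· ≠ ([] : List B))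

/-- A good block list: nonempty blocks, alternating sides. -/
structure Good (l : List (Blk A B)) : Prop where
  ne : ∀ b ∈ l, bne b
  alt : l.IsChain (fun b b' => b.isLeft ≠ b'.isLeft)

lemma good_nil : Good ([] : List (Blk A B)) := ⟨by simp, by simp⟩

lemma good_consB {l : List (Blk A B)} (hl : Good l) (c : A ⊕ B) : Good (consB c l) := by
  obtain ⟨hne, halt⟩ := hl
  rcases c with a | a <;> rcases l with _ | ⟨b | b, r⟩ <;> simp only [consB]
  · exact ⟨by simp [bne], by simp⟩
  · refine ⟨?_, ?_⟩
    · intro x hx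
      rcases List.mem_cons.1 hx with h | h
      · subst h; simp [bne]
      · exact hne _ (List.mem_cons_of_mem _ h)
    · rw [List.isChain_cons] at halt ⊢
      exact ⟨fun y hy => by simpa using (halt.1 y hy), halt.2⟩
  · refine ⟨?_, ?_⟩
    · intro x hx
      rcases List.mem_cons.1 hx with h | h
      · subst h; simp [bne]
      · exact hne _ h
    · rw [List.isChain_cons]
      refine ⟨fun y hy => ?_, halt⟩
      simp only [List.head?_cons, Option.mem_def, Option.some.injEq] at hy
      subst hy; simp
  · exact ⟨by simp [bne], by simp⟩
  · refine ⟨?_, ?_⟩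
    · intro x hx
      rcases List.mem_cons.1 hx with h | h
      · subst h; simp [bne]
      · exact hne _ h
    · rw [List.isChain_cons]
      refine ⟨fun y hy => ?_, halt⟩
      simp only [List.head?_cons, Option.mem_def, Option.some.injEq] at hy
      subst hy; simp
  · refine ⟨?_, ?_⟩
    · intro x hx
      rcases List.mem_cons.1 hx with h | h
      · subst h; simp [bne]
      · exact hne _ (List.mem_cons_of_mem _ h)
    · rw [List.isChain_cons] at halt ⊢
      exact ⟨fun y hy => by simpa using (halt.1 y hy), halt.2⟩

lemma good_blocks (w : List (A ⊕ B)) : Good (blocks w) := by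
  induction w with
  | nil => exact good_nil
  | cons c t ih => exact good_consB ih c

lemma Good.tail {b : Blk A B} {l : List (Blk A B)} (h : Good (b :: l)) : Good l :=
  ⟨fun x hx => h.ne _ (List.mem_cons_of_mem _ hx), h.alt.tail⟩

/-- Prepend a pure `A`-word to a block decomposition. -/
def consLB (u : List A) : List (Blk A B) → List (Blk A B)
  | .inl b :: r => .inl (u ++ b) :: r
  | l => .inl u :: l

/-- Prepend a pure `B`-word to a block decomposition. -/
def consRB (u : List B) : List (Blk A B) → List (Blk A B)
  | .inr b :: r => .inr (u ++ b) :: r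
  | l => .inr u :: l

lemma blocks_mapInl_append (u : List A) (hu : u ≠ []) (y : List (A ⊕ B)) :
    blocks (u.map .inl ++ y) = consLB u (blocks y) := by
  induction u with
  | nil => exact absurd rfl hu
  | cons a u' ih =>
    rcases eq_or_ne u' [] with h | h
    · subst h
      show consB (.inl a) (blocks y) = _
      rcases hby : blocks y with _ | ⟨b | b, r⟩ <;> simp [consB, consLB]
    · have : ((a :: u').map Sum.inl ++ y : List (A ⊕ B)) =
        .inl a :: (u'.map .inl ++ y) := by simp
      rw [this, blocks_cons, ih h]
      rcases hby : blocks y with _ | ⟨b | b, r⟩ <;>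
        rcases u' with _ | ⟨a', u''⟩ <;> simp_all [consB, consLB]

lemma blocks_mapInr_append (u : List B) (hu : u ≠ []) (y : List (A ⊕ B)) :
    blocks (u.map .inr ++ y) = consRB u (blocks y) := by
  induction u with
  | nil => exact absurd rfl hu
  | cons a u' ih =>
    rcases eq_or_ne u' [] with h | h
    · subst h
      show consB (.inr a) (blocks y) = _
      rcases hby : blocks y with _ | ⟨b | b, r⟩ <;> simp [consB, consRB]
    · have : ((a :: u').map Sum.inr ++ y : List (A ⊕ B)) =
        .inr a :: (u'.map .inr ++ y) := by simp
      rw [this, blocks_cons, ih h]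
      rcases hby : blocks y with _ | ⟨b | b, r⟩ <;>
        rcases u' with _ | ⟨a', u''⟩ <;> simp_all [consB, consRB]

lemma blocks_flat : ∀ {l : List (Blk A B)}, Good l → blocks (l.flatMap emb) = l := by
  intro l
  induction l with
  | nil => intro; rfl
  | cons b l' ih =>
    intro hl
    have hl' := hl.tail
    rcases b with u | u
    · have hu : u ≠ [] := hl.ne _ List.mem_cons_self
      have : ((Sum.inl u : Blk A B) :: l').flatMap emb = u.map .inl ++ l'.flatMap emb := by
        simp [emb]
      rw [this, blocks_mapInl_append u hu, ih hl']
      rcases hl'' : l' with _ | ⟨b₂ | b₂, r⟩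
      · rfl
      · exfalso
        have := hl.alt
        rw [hl'', List.isChain_cons_cons] at this
        exact this.1 rfl
      · rfl
    · have hu : u ≠ [] := hl.ne _ List.mem_cons_self
      have : ((Sum.inr u : Blk A B) :: l').flatMap emb = u.map .inr ++ l'.flatMap emb := by
        simp [emb]
      rw [this, blocks_mapInr_append u hu, ih hl']
      rcases hl'' : l' with _ | ⟨b₂ | b₂, r⟩
      · rfl
      · rfl
      · exfalso
        have := hl.alt
        rw [hl'', List.isChain_cons_cons] at this
        exact this.1 rfl

lemma consB_head_side (c : A ⊕ B) (l : List (Blk A B)) :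
    ∃ b r, consB c l = b :: r ∧ b.isLeft = c.isLeft := by
  rcases c with a | a <;> rcases l with _ | ⟨b | b, r⟩ <;> simp [consB]

lemma length_consB_le (c : A ⊕ B) (l : List (Blk A B)) :
    (consB c l).length ≤ l.length + 1 := by
  rcases c with a | a <;> rcases l with _ | ⟨b | b, r⟩ <;> simp [consB]

lemma length_consB_absorb {c : A ⊕ B} {b : Blk A B} {r : List (Blk A B)}
    (h : b.isLeft = c.isLeft) : (consB c (b :: r)).length = (b :: r).length := by
  rcases c with a | a <;> rcases b with u | u <;> simp_all [consB]

lemma length_consB_new {c : A ⊕ B} {b : Blk A B} {r : List (Blk A B)}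
    (h : b.isLeft ≠ c.isLeft) : (consB c (b :: r)).length = (b :: r).length + 1 := by
  rcases c with a | a <;> rcases b with u | u <;> simp_all [consB]

lemma length_blocks_append (s t : List (A ⊕ B)) :
    (blocks (s ++ t)).length ≤ (blocks s).length + (blocks t).length := by
  induction s with
  | nil => simp
  | cons c s' ih =>
    rcases s' with _ | ⟨d, s''⟩
    · show (consB c (blocks t)).length ≤ (blocks [c]).length + (blocks t).length
      have h1 := length_consB_le c (blocks t)
      have : (blocks [c] : List (Blk A B)).length = 1 := by
        rcases c with a | a <;> rfl
      omega
    · show (consB c (blocks (d :: s'' ++ t))).length ≤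
        (consB c (blocks (d :: s''))).length + (blocks t).length
      obtain ⟨b1, r1, hb1, hs1⟩ := consB_head_side d (blocks (s'' ++ t))
      obtain ⟨b2, r2, hb2, hs2⟩ := consB_head_side d (blocks s'')
      have e1 : blocks (d :: s'' ++ t) = b1 :: r1 := hb1
      have e2 : blocks (d :: s'') = b2 :: r2 := hb2
      have ihlen : (b1 :: r1).length ≤ (b2 :: r2).length + (blocks t).length := by
        rw [← e1, ← e2]; exact ih
      by_cases h : c.isLeft = d.isLeft
      · rw [e1, e2, length_consB_absorb (by rw [hs1, h]),
          length_consB_absorb (by rw [hs2, h])]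
        exact ihlen
      · rw [e1, e2, length_consB_new (by rw [hs1]; exact fun hh => h hh.symm),
          length_consB_new (by rw [hs2]; exact fun hh => h hh.symm)]
        omega

lemma exists_peelL {l : List (Blk A B)} (hl : Good l) :
    ∃ (P : List (Blk A B)) (p : List A),
      l.flatMap emb = P.flatMap emb ++ p.map .inl ∧ Good P ∧
      (∀ b ∈ P.getLast?, b.isLeft = false) ∧
      (p = [] → P = l) ∧ P.length ≤ l.length ∧ l.length ≤ P.length + 1 := by
  rcases List.eq_nil_or_concat l with rfl | ⟨l₀, b, rfl⟩
  · exact ⟨[], [], by simp, good_nil, by simp, fun _ => rfl, by simp, by simp⟩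
  · simp only [List.concat_eq_append] at hl ⊢
    rcases b with p | p
    · have halt := hl.alt
      rw [List.isChain_append] at halt
      refine ⟨l₀, p, by simp, ⟨fun b hb => hl.ne _ (by simp [hb]), halt.1⟩, ?_, ?_, by simp, by simp⟩
      · intro b hb
        have := halt.2.2 b hb (Sum.inl p) (by simp)
        simpa using this
      · intro hp
        exact absurd hp (hl.ne (Sum.inl p) (by simp))
    · refine ⟨l₀ ++ [Sum.inr p], [], by simp, hl, ?_, fun _ => rfl, by simp, by simp⟩
      intro b hb
      rw [List.getLast?_concat] at hb
      simp only [Option.mem_def, Option.some.injEq] at hb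
      subst hb; rfl

lemma exists_peelR {l : List (Blk A B)} (hl : Good l) :
    ∃ (P : List (Blk A B)) (p : List B),
      l.flatMap emb = P.flatMap emb ++ p.map .inr ∧ Good P ∧
      (∀ b ∈ P.getLast?, b.isLeft = true) ∧
      (p = [] → P = l) ∧ P.length ≤ l.length ∧ l.length ≤ P.length + 1 := by
  rcases List.eq_nil_or_concat l with rfl | ⟨l₀, b, rfl⟩
  · exact ⟨[], [], by simp, good_nil, by simp, fun _ => rfl, by simp, by simp⟩
  · simp only [List.concat_eq_append] at hl ⊢
    rcases b with p | p
    · refine ⟨l₀ ++ [Sum.inl p], [], by simp, hl, ?_, fun _ => rfl, by simp, by simp⟩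
      intro b hb
      rw [List.getLast?_concat] at hb
      simp only [Option.mem_def, Option.some.injEq] at hb
      subst hb; rfl
    · have halt := hl.alt
      rw [List.isChain_append] at halt
      refine ⟨l₀, p, by simp, ⟨fun b hb => hl.ne _ (by simp [hb]), halt.1⟩, ?_, ?_, by simp, by simp⟩
      · intro b hb
        have := halt.2.2 b hb (Sum.inr p) (by simp)
        simpa using this
      · intro hp
        exact absurd hp (hl.ne (Sum.inr p) (by simp))

lemma exists_beheadL {l : List (Blk A B)} (hl : Good l) :
    ∃ (Q : List (Blk A B)) (q : List A),
      l.flatMap emb = q.map .inl ++ Q.flatMap emb ∧ Good Q ∧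
      (∀ b ∈ Q.head?, b.isLeft = false) ∧
      (q = [] → Q = l) ∧ Q.length ≤ l.length ∧ l.length ≤ Q.length + 1 := by
  rcases l with _ | ⟨b, l₁⟩
  · exact ⟨[], [], by simp, good_nil, by simp, fun _ => rfl, by simp, by simp⟩
  · rcases b with q | q
    · have halt := hl.alt
      rw [List.isChain_cons] at halt
      refine ⟨l₁, q, by simp [emb], hl.tail, ?_, ?_, by simp, by simp⟩
      · intro b hb
        have := halt.1 b hb
        simpa using this
      · intro hq
        exact absurd hq (hl.ne (Sum.inl q) (by simp))
    · exact ⟨Sum.inr q :: l₁, [], by simp, hl, fun b hb => by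
        simp only [List.head?_cons, Option.mem_def, Option.some.injEq] at hb; subst hb; rfl,
        fun _ => rfl, by simp, by simp⟩

lemma exists_beheadR {l : List (Blk A B)} (hl : Good l) :
    ∃ (Q : List (Blk A B)) (q : List B),
      l.flatMap emb = q.map .inr ++ Q.flatMap emb ∧ Good Q ∧
      (∀ b ∈ Q.head?, b.isLeft = true) ∧
      (q = [] → Q = l) ∧ Q.length ≤ l.length ∧ l.length ≤ Q.length + 1 := by
  rcases l with _ | ⟨b, l₁⟩
  · exact ⟨[], [], by simp, good_nil, by simp, fun _ => rfl, by simp, by simp⟩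
  · rcases b with q | q
    · exact ⟨Sum.inl q :: l₁, [], by simp, hl, fun b hb => by
        simp only [List.head?_cons, Option.mem_def, Option.some.injEq] at hb; subst hb; rfl,
        fun _ => rfl, by simp, by simp⟩
    · have halt := hl.alt
      rw [List.isChain_cons] at halt
      refine ⟨l₁, q, by simp [emb], hl.tail, ?_, ?_, by simp, by simp⟩
      · intro b hb
        have := halt.1 b hb
        simpa using this
      · intro hq
        exact absurd hq (hl.ne (Sum.inr q) (by simp))

lemma step_blocksL (x y : List (A ⊕ B)) (u : List A) (hu : u ≠ []) :
    ∃ (P Q : List (Blk A B)) (p q : List A),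
      (∀ v : List A, p ++ v ++ q ≠ [] →
        blocks (x ++ v.map .inl ++ y) = P ++ .inl (p ++ v ++ q) :: Q) ∧
      (∀ v : List A, p ++ v ++ q = [] →
        (blocks (x ++ v.map .inl ++ y)).length < P.length + (Q.length + 1)) := by
  obtain ⟨P, p, hx, hPg, hPlast, hp0, -, -⟩ := exists_peelL (good_blocks x)
  obtain ⟨Q, q, hy, hQg, hQhead, hq0, -, -⟩ := exists_beheadL (good_blocks y)
  rw [flatMap_blocks] at hx hy
  refine ⟨P, Q, p, q, ?_, ?_⟩
  · intro v hv
    have hgood : Good (P ++ .inl (p ++ v ++ q) :: Q) := by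
      refine ⟨?_, ?_⟩
      · intro b hb
        rcases List.mem_append.1 hb with h | h
        · exact hPg.ne _ h
        · rcases List.mem_cons.1 h with h | h
          · subst h; exact hv
          · exact hQg.ne _ h
      · rw [List.isChain_append]
        refine ⟨hPg.alt, ?_, ?_⟩
        · rw [List.isChain_cons]
          refine ⟨fun b hb => ?_, hQg.alt⟩
          have := hQhead b hb
          simp [this]
        · intro a ha b hb
          simp only [List.head?_cons, Option.mem_def, Option.some.injEq] at hb
          subst hb
          have := hPlast a ha
          simp [this]
    have hflat : (P ++ .inl (p ++ v ++ q) :: Q).flatMap emb = x ++ v.map .inl ++ y := by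
      rw [hx, hy]
      simp [emb]
    rw [← hflat, blocks_flat hgood]
  · intro v hv
    have hp : p = [] := by
      rcases p with _ | _
      · rfl
      · simp at hv
    have hvnil : v = [] := by
      rcases v with _ | _
      · rfl
      · simp [hp] at hv
    have hq : q = [] := by simp [hp, hvnil] at hv; exact hv
    have hP : P = blocks x := hp0 hp
    have hQ : Q = blocks y := hq0 hq
    have hxy : x ++ v.map .inl ++ y = x ++ y := by simp [hvnil]
    rw [hxy, hP, hQ]
    have := length_blocks_append x y
    omega

lemma step_blocksR (x y : List (A ⊕ B)) (u : List B) (hu : u ≠ []) :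
    ∃ (P Q : List (Blk A B)) (p q : List B),
      (∀ v : List B, p ++ v ++ q ≠ [] →
        blocks (x ++ v.map .inr ++ y) = P ++ .inr (p ++ v ++ q) :: Q) ∧
      (∀ v : List B, p ++ v ++ q = [] →
        (blocks (x ++ v.map .inr ++ y)).length < P.length + (Q.length + 1)) := by
  obtain ⟨P, p, hx, hPg, hPlast, hp0, -, -⟩ := exists_peelR (good_blocks x)
  obtain ⟨Q, q, hy, hQg, hQhead, hq0, -, -⟩ := exists_beheadR (good_blocks y)
  rw [flatMap_blocks] at hx hy
  refine ⟨P, Q, p, q, ?_, ?_⟩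
  · intro v hv
    have hgood : Good (P ++ .inr (p ++ v ++ q) :: Q) := by
      refine ⟨?_, ?_⟩
      · intro b hb
        rcases List.mem_append.1 hb with h | h
        · exact hPg.ne _ h
        · rcases List.mem_cons.1 h with h | h
          · subst h; exact hv
          · exact hQg.ne _ h
      · rw [List.isChain_append]
        refine ⟨hPg.alt, ?_, ?_⟩
        · rw [List.isChain_cons]
          refine ⟨fun b hb => ?_, hQg.alt⟩
          have := hQhead b hb
          simp [this]
        · intro a ha b hb
          simp only [List.head?_cons, Option.mem_def, Option.some.injEq] at hb
          subst hb
          have := hPlast a ha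
          simp [this]
    have hflat : (P ++ .inr (p ++ v ++ q) :: Q).flatMap emb = x ++ v.map .inr ++ y := by
      rw [hx, hy]
      simp [emb]
    rw [← hflat, blocks_flat hgood]
  · intro v hv
    have hp : p = [] := by
      rcases p with _ | _
      · rfl
      · simp at hv
    have hvnil : v = [] := by
      rcases v with _ | _
      · rfl
      · simp [hp] at hv
    have hq : q = [] := by simp [hp, hvnil] at hv; exact hv
    have hP : P = blocks x := hp0 hp
    have hQ : Q = blocks y := hq0 hq
    have hxy : x ++ v.map .inr ++ y = x ++ y := by simp [hvnil]
    rw [hxy, hP, hQ]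
    have := length_blocks_append x y
    omega



section Main
open FreeMonoid Function
variable {α₁ α₂ : Type} {G₁ G₂ : Type} [Group G₁] [Group G₂]

def ι₁ : FreeMonoid α₁ →* FreeMonoid (α₁ ⊕ α₂) := FreeMonoid.map Sum.inl
def ι₂ : FreeMonoid α₂ →* FreeMonoid (α₁ ⊕ α₂) := FreeMonoid.map Sum.inr

def RR (R₁ : Set (FreeMonoid α₁ × FreeMonoid α₁)) (R₂ : Set (FreeMonoid α₂ × FreeMonoid α₂)) :
    Set (FreeMonoid (α₁ ⊕ α₂) × FreeMonoid (α₁ ⊕ α₂)) :=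
  (fun p : FreeMonoid α₁ × FreeMonoid α₁ => ((ι₁ p.1 : FreeMonoid (α₁ ⊕ α₂)), ι₁ p.2)) '' R₁ ∪
  (fun p : FreeMonoid α₂ × FreeMonoid α₂ => ((ι₂ p.1 : FreeMonoid (α₁ ⊕ α₂)), ι₂ p.2)) '' R₂

def piU (π₁ : α₁ → G₁) (π₂ : α₂ → G₂) : α₁ ⊕ α₂ → Monoid.Coprod G₁ G₂ :=
  Sum.elim (Monoid.Coprod.inl ∘ π₁) (Monoid.Coprod.inr ∘ π₂)

variable {π₁ : α₁ → G₁} {π₂ : α₂ → G₂}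
variable {R₁ : Set (FreeMonoid α₁ × FreeMonoid α₁)} {R₂ : Set (FreeMonoid α₂ × FreeMonoid α₂)}

lemma lift_piU_ι₁ (w : FreeMonoid α₁) :
    FreeMonoid.lift (piU π₁ π₂) (ι₁ w) = Monoid.Coprod.inl (FreeMonoid.lift π₁ w) := by
  have : (FreeMonoid.lift (piU π₁ π₂)).comp (ι₁ (α₂ := α₂)) =
      (Monoid.Coprod.inl : G₁ →* Monoid.Coprod G₁ G₂).comp (FreeMonoid.lift π₁) :=
    FreeMonoid.hom_eq fun a => rfl
  exact DFunLike.congr_fun this w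

lemma lift_piU_ι₂ (w : FreeMonoid α₂) :
    FreeMonoid.lift (piU π₁ π₂) (ι₂ w) = Monoid.Coprod.inr (FreeMonoid.lift π₂ w) := by
  have : (FreeMonoid.lift (piU π₁ π₂)).comp (ι₂ (α₁ := α₁)) =
      (Monoid.Coprod.inr : G₂ →* Monoid.Coprod G₁ G₂).comp (FreeMonoid.lift π₂) :=
    FreeMonoid.hom_eq fun a => rfl
  exact DFunLike.congr_fun this w

lemma RR_pres
    (hcon₁ : ∀ u v, FreeMonoid.lift π₁ u = FreeMonoid.lift π₁ v ↔
      conGen (fun w w' => (w, w') ∈ R₁) u v)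
    (hcon₂ : ∀ u v, FreeMonoid.lift π₂ u = FreeMonoid.lift π₂ v ↔
      conGen (fun w w' => (w, w') ∈ R₂) u v) :
    ∀ w w' : FreeMonoid (α₁ ⊕ α₂), (w, w') ∈ RR R₁ R₂ →
      FreeMonoid.lift (piU π₁ π₂) w = FreeMonoid.lift (piU π₁ π₂) w' := by
  rintro w w' (⟨⟨u, v⟩, hR, huv⟩ | ⟨⟨u, v⟩, hR, huv⟩) <;> cases huv
  · rw [lift_piU_ι₁, lift_piU_ι₁, (hcon₁ u v).2 (ConGen.Rel.of _ _ hR)]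
  · rw [lift_piU_ι₂, lift_piU_ι₂, (hcon₂ u v).2 (ConGen.Rel.of _ _ hR)]

lemma piU_surj (hsurj₁ : Surjective (FreeMonoid.lift π₁))
    (hsurj₂ : Surjective (FreeMonoid.lift π₂)) :
    Surjective (FreeMonoid.lift (piU π₁ π₂)) := by
  intro g
  induction g using Monoid.Coprod.induction_on with
  | inl m =>
    obtain ⟨w, hw⟩ := hsurj₁ m
    exact ⟨ι₁ w, by rw [lift_piU_ι₁, hw]⟩
  | inr m =>
    obtain ⟨w, hw⟩ := hsurj₂ m
    exact ⟨ι₂ w, by rw [lift_piU_ι₂, hw]⟩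
  | mul x y hx hy =>
    obtain ⟨w, hw⟩ := hx
    obtain ⟨w', hw'⟩ := hy
    exact ⟨w * w', by rw [map_mul, hw, hw']⟩

theorem con_iff
    (hsurj₁ : Surjective (FreeMonoid.lift π₁)) (hsurj₂ : Surjective (FreeMonoid.lift π₂))
    (hcon₁ : ∀ u v, FreeMonoid.lift π₁ u = FreeMonoid.lift π₁ v ↔
      conGen (fun w w' => (w, w') ∈ R₁) u v)
    (hcon₂ : ∀ u v, FreeMonoid.lift π₂ u = FreeMonoid.lift π₂ v ↔
      conGen (fun w w' => (w, w') ∈ R₂) u v) :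
    ∀ u v, FreeMonoid.lift (piU π₁ π₂) u = FreeMonoid.lift (piU π₁ π₂) v ↔
      conGen (fun w w' => (w, w') ∈ RR R₁ R₂) u v := by
  set c : Con (FreeMonoid (α₁ ⊕ α₂)) := conGen (fun w w' => (w, w') ∈ RR R₁ R₂) with hc
  have hle : c ≤ Con.ker (FreeMonoid.lift (piU π₁ π₂)) :=
    Con.conGen_le.2 fun x y hxy => RR_pres hcon₁ hcon₂ x y hxy
  set e : c.Quotient →* Monoid.Coprod G₁ G₂ := c.lift _ hle with he
  -- the section homomorphisms
  have key₁ : ∀ a b : FreeMonoid α₁, FreeMonoid.lift π₁ a = FreeMonoid.lift π₁ b →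
      (c.mk' (ι₁ a) : c.Quotient) = c.mk' (ι₁ b) := by
    intro a b hab
    have h1 : conGen (fun w w' => (w, w') ∈ R₁) a b := (hcon₁ a b).1 hab
    have hle₁ : conGen (fun w w' => (w, w') ∈ R₁) ≤
        Con.ker (c.mk'.comp (ι₁ (α₂ := α₂))) := by
      apply Con.conGen_le.2
      intro x y hxy
      show c.mk' (ι₁ x) = c.mk' (ι₁ y)
      show ((_ : FreeMonoid (α₁ ⊕ α₂)) : c.Quotient) = ((_ : FreeMonoid (α₁ ⊕ α₂)) : c.Quotient)
      rw [Con.eq]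
      exact ConGen.Rel.of _ _ (Or.inl ⟨(x, y), hxy, rfl⟩)
    exact hle₁ h1
  have key₂ : ∀ a b : FreeMonoid α₂, FreeMonoid.lift π₂ a = FreeMonoid.lift π₂ b →
      (c.mk' (ι₂ a) : c.Quotient) = c.mk' (ι₂ b) := by
    intro a b hab
    have h1 : conGen (fun w w' => (w, w') ∈ R₂) a b := (hcon₂ a b).1 hab
    have hle₂ : conGen (fun w w' => (w, w') ∈ R₂) ≤
        Con.ker (c.mk'.comp (ι₂ (α₁ := α₁))) := by
      apply Con.conGen_le.2
      intro x y hxy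
      show c.mk' (ι₂ x) = c.mk' (ι₂ y)
      show ((_ : FreeMonoid (α₁ ⊕ α₂)) : c.Quotient) = ((_ : FreeMonoid (α₁ ⊕ α₂)) : c.Quotient)
      rw [Con.eq]
      exact ConGen.Rel.of _ _ (Or.inr ⟨(x, y), hxy, rfl⟩)
    exact hle₂ h1
  have hs₁ : ∀ w : FreeMonoid α₁,
      c.mk' (ι₁ (surjInv hsurj₁ (FreeMonoid.lift π₁ w))) = c.mk' (ι₁ w) :=
    fun w => key₁ _ _ (surjInv_eq hsurj₁ _)
  have hs₂ : ∀ w : FreeMonoid α₂,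
      c.mk' (ι₂ (surjInv hsurj₂ (FreeMonoid.lift π₂ w))) = c.mk' (ι₂ w) :=
    fun w => key₂ _ _ (surjInv_eq hsurj₂ _)
  set s₁ : G₁ →* c.Quotient :=
    { toFun := fun g => c.mk' (ι₁ (surjInv hsurj₁ g))
      map_one' := by
        have := hs₁ 1
        simp only [map_one] at this ⊢
        rw [this]
      map_mul' := by
        intro g h
        obtain ⟨a, rfl⟩ := hsurj₁ g
        obtain ⟨b, rfl⟩ := hsurj₁ h
        rw [← map_mul]
        rw [hs₁ a, hs₁ b, hs₁ (a * b), map_mul, map_mul] } with hs₁def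
  set s₂ : G₂ →* c.Quotient :=
    { toFun := fun g => c.mk' (ι₂ (surjInv hsurj₂ g))
      map_one' := by
        have := hs₂ 1
        simp only [map_one] at this ⊢
        rw [this]
      map_mul' := by
        intro g h
        obtain ⟨a, rfl⟩ := hsurj₂ g
        obtain ⟨b, rfl⟩ := hsurj₂ h
        rw [← map_mul]
        rw [hs₂ a, hs₂ b, hs₂ (a * b), map_mul, map_mul] } with hs₂def
  set s : Monoid.Coprod G₁ G₂ →* c.Quotient := Monoid.Coprod.lift s₁ s₂ with hs
  have hsw : ∀ w : FreeMonoid (α₁ ⊕ α₂), s (FreeMonoid.lift (piU π₁ π₂) w) = c.mk' w := by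
    intro w
    induction w using FreeMonoid.recOn with
    | one => simp
    | of_mul a w ihw =>
      rw [map_mul, map_mul, ihw, map_mul]
      congr 1
      rcases a with a₁ | a₂
      · have h1 : FreeMonoid.lift (piU π₁ π₂) (FreeMonoid.of (Sum.inl a₁)) =
          Monoid.Coprod.inl (π₁ a₁) := rfl
        rw [h1, hs, Monoid.Coprod.lift_apply_inl]
        have h2 : π₁ a₁ = FreeMonoid.lift π₁ (FreeMonoid.of a₁) := rfl
        show c.mk' (ι₁ (surjInv hsurj₁ (π₁ a₁))) = _
        rw [h2, hs₁ (FreeMonoid.of a₁)]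
        rfl
      · have h1 : FreeMonoid.lift (piU π₁ π₂) (FreeMonoid.of (Sum.inr a₂)) =
          Monoid.Coprod.inr (π₂ a₂) := rfl
        rw [h1, hs, Monoid.Coprod.lift_apply_inr]
        have h2 : π₂ a₂ = FreeMonoid.lift π₂ (FreeMonoid.of a₂) := rfl
        show c.mk' (ι₂ (surjInv hsurj₂ (π₂ a₂))) = _
        rw [h2, hs₂ (FreeMonoid.of a₂)]
        rfl
  have hsec : ∀ q : c.Quotient, s (e q) = q := by
    intro q
    obtain ⟨w, rfl⟩ := Con.mk'_surjective q
    exact hsw w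
  intro u v
  constructor
  · intro h
    have h1 : e (c.mk' u) = e (c.mk' v) := h
    have h2 : (c.mk' u : c.Quotient) = c.mk' v := by
      rw [← hsec (c.mk' u), ← hsec (c.mk' v), h1]
    have h3 : (u : c.Quotient) = (v : c.Quotient) := h2
    rwa [Con.eq] at h3
  · exact fun h => hle h

/-- A one-block step. -/
def BStep (R₁ : Set (FreeMonoid α₁ × FreeMonoid α₁)) (R₂ : Set (FreeMonoid α₂ × FreeMonoid α₂)) :
    Blk α₁ α₂ → Blk α₁ α₂ → Prop := fun b b' =>
  (∃ m m' : List α₁, b = .inl m ∧ b' = .inl m' ∧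
    RewStep R₁ (FreeMonoid.ofList m) (FreeMonoid.ofList m')) ∨
  (∃ m m' : List α₂, b = .inr m ∧ b' = .inr m' ∧
    RewStep R₂ (FreeMonoid.ofList m) (FreeMonoid.ofList m'))

lemma step_cases {w w' : FreeMonoid (α₁ ⊕ α₂)} (h : RewStep (RR R₁ R₂) w w') :
    (∃ (x y : List (α₁ ⊕ α₂)) (u v : FreeMonoid α₁), (u, v) ∈ R₁ ∧
      FreeMonoid.toList w = x ++ (FreeMonoid.toList u).map Sum.inl ++ y ∧
      FreeMonoid.toList w' = x ++ (FreeMonoid.toList v).map Sum.inl ++ y) ∨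
    (∃ (x y : List (α₁ ⊕ α₂)) (u v : FreeMonoid α₂), (u, v) ∈ R₂ ∧
      FreeMonoid.toList w = x ++ (FreeMonoid.toList u).map Sum.inr ++ y ∧
      FreeMonoid.toList w' = x ++ (FreeMonoid.toList v).map Sum.inr ++ y) := by
  obtain ⟨x, u', v', y, hR, rfl, rfl⟩ := h
  rcases hR with ⟨⟨u, v⟩, hR, heq⟩ | ⟨⟨u, v⟩, hR, heq⟩ <;> cases heq
  · refine Or.inl ⟨FreeMonoid.toList x, FreeMonoid.toList y, u, v, hR, ?_, ?_⟩ <;>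
      simp [FreeMonoid.toList_mul, ι₁, FreeMonoid.toList_map]
  · refine Or.inr ⟨FreeMonoid.toList x, FreeMonoid.toList y, u, v, hR, ?_, ?_⟩ <;>
      simp [FreeMonoid.toList_mul, ι₂, FreeMonoid.toList_map]

lemma step_blocks_main {w w' : FreeMonoid (α₁ ⊕ α₂)} (h : RewStep (RR R₁ R₂) w w')
    (h₁ : ∀ v, ((1 : FreeMonoid α₁), v) ∉ R₁) (h₂ : ∀ v, ((1 : FreeMonoid α₂), v) ∉ R₂) :
    (∃ (P Q : List (Blk α₁ α₂)) (b b' : Blk α₁ α₂),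
      blocks (FreeMonoid.toList w) = P ++ b :: Q ∧
      blocks (FreeMonoid.toList w') = P ++ b' :: Q ∧ BStep R₁ R₂ b b') ∨
    (blocks (FreeMonoid.toList w')).length < (blocks (FreeMonoid.toList w)).length := by
  rcases step_cases h with ⟨x, y, u, v, hR, hw, hw'⟩ | ⟨x, y, u, v, hR, hw, hw'⟩
  · have hu : FreeMonoid.toList u ≠ [] := by
      intro hnil
      exact h₁ v (by rwa [show u = 1 from FreeMonoid.toList.injective hnil] at hR)
    obtain ⟨P, Q, p, q, hgood, hshort⟩ := step_blocksL x y (FreeMonoid.toList u) hu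
    by_cases hv : p ++ FreeMonoid.toList v ++ q = []
    · right
      rw [hw, hw', hgood (FreeMonoid.toList u) (by simp [hu])]
      have := hshort (FreeMonoid.toList v) hv
      simp only [List.length_append, List.length_cons]
      omega
    · left
      refine ⟨P, Q, .inl (p ++ FreeMonoid.toList u ++ q), .inl (p ++ FreeMonoid.toList v ++ q),
        by rw [hw]; exact hgood _ (by simp [hu]), by rw [hw']; exact hgood _ hv, Or.inl
        ⟨_, _, rfl, rfl, FreeMonoid.ofList p, u, v, FreeMonoid.ofList q, hR, ?_, ?_⟩⟩ <;>
        apply FreeMonoid.toList.injective <;>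
        simp [FreeMonoid.toList_mul, List.append_assoc]
  · have hu : FreeMonoid.toList u ≠ [] := by
      intro hnil
      exact h₂ v (by rwa [show u = 1 from FreeMonoid.toList.injective hnil] at hR)
    obtain ⟨P, Q, p, q, hgood, hshort⟩ := step_blocksR x y (FreeMonoid.toList u) hu
    by_cases hv : p ++ FreeMonoid.toList v ++ q = []
    · right
      rw [hw, hw', hgood (FreeMonoid.toList u) (by simp [hu])]
      have := hshort (FreeMonoid.toList v) hv
      simp only [List.length_append, List.length_cons]
      omega
    · left
      refine ⟨P, Q, .inr (p ++ FreeMonoid.toList u ++ q), .inr (p ++ FreeMonoid.toList v ++ q),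
        by rw [hw]; exact hgood _ (by simp [hu]), by rw [hw']; exact hgood _ hv, Or.inr
        ⟨_, _, rfl, rfl, FreeMonoid.ofList p, u, v, FreeMonoid.ofList q, hR, ?_, ?_⟩⟩ <;>
        apply FreeMonoid.toList.injective <;>
        simp [FreeMonoid.toList_mul, List.append_assoc]

lemma getElem?_append_cons_ne {γ : Type*} (P Q : List γ) (b b' : γ) {i : ℕ}
    (h : i ≠ P.length) : (P ++ b :: Q)[i]? = (P ++ b' :: Q)[i]? := by
  rcases lt_or_gt_of_ne h with hlt | hgt
  · rw [List.getElem?_append, List.getElem?_append, if_pos hlt, if_pos hlt]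
  · have h1 : P.length ≤ i := le_of_lt hgt
    rw [List.getElem?_append_right h1, List.getElem?_append_right h1]
    obtain ⟨d, hd⟩ : ∃ d, i - P.length = d + 1 := ⟨i - P.length - 1, by omega⟩
    rw [hd]
    simp

lemma getElem?_append_cons_self {γ : Type*} (P Q : List γ) (b : γ) :
    (P ++ b :: Q)[P.length]? = some b := by
  rw [List.getElem?_append_right le_rfl]
  simp

theorem noInf_RR
    (hterm₁ : ∀ f : ℕ → FreeMonoid α₁, ¬ ∀ m, RewStep R₁ (f m) (f (m + 1)))
    (hterm₂ : ∀ f : ℕ → FreeMonoid α₂, ¬ ∀ m, RewStep R₂ (f m) (f (m + 1))) :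
    ∀ f : ℕ → FreeMonoid (α₁ ⊕ α₂), ¬ ∀ m, RewStep (RR R₁ R₂) (f m) (f (m + 1)) := by
  classical
  intro f hf
  have h₁ : ∀ v, ((1 : FreeMonoid α₁), v) ∉ R₁ := fun v => nil_not_lhs hterm₁ v
  have h₂ : ∀ v, ((1 : FreeMonoid α₂), v) ∉ R₂ := fun v => nil_not_lhs hterm₂ v
  set L : ℕ → List (Blk α₁ α₂) := fun m => blocks (FreeMonoid.toList (f m)) with hLdef
  have hstep : ∀ m, (∃ P Q b b', L m = P ++ b :: Q ∧ L (m + 1) = P ++ b' :: Q ∧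
      BStep R₁ R₂ b b') ∨ (L (m + 1)).length < (L m).length :=
    fun m => step_blocks_main (hf m) h₁ h₂
  have hmono : ∀ m, (L (m + 1)).length ≤ (L m).length := by
    intro m
    rcases hstep m with ⟨P, Q, b, b', hPQ, hPQ', -⟩ | hlt
    · rw [hPQ, hPQ']; simp
    · omega
  have hanti : ∀ a d, (L (a + d)).length ≤ (L a).length := by
    intro a d
    induction d with
    | zero => simp
    | succ d ih =>
      have := hmono (a + d)
      have he : a + (d + 1) = (a + d) + 1 := by omega
      rw [he]
      omega
  obtain ⟨N, hNmem⟩ : ∃ N, (L N).length = sInf (Set.range fun m => (L m).length) :=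
    Nat.sInf_mem (Set.range_nonempty _)
  have hN : ∀ m, N ≤ m → (L m).length = (L N).length := by
    intro m hm
    have hle : (L m).length ≤ (L N).length := by
      have := hanti N (m - N)
      rw [show N + (m - N) = m by omega] at this
      exact this
    have hge : (L N).length ≤ (L m).length := by
      rw [hNmem]
      exact Nat.sInf_le ⟨m, rfl⟩
    omega
  rcases Nat.eq_zero_or_pos (L N).length with hzero | hpos
  · have hnil : FreeMonoid.toList (f N) = [] := by
      have h0 : L N = [] := List.length_eq_zero_iff.1 hzero
      have hfb := flatMap_blocks (FreeMonoid.toList (f N))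
      rw [show blocks (FreeMonoid.toList (f N)) = L N from rfl, h0] at hfb
      simpa using hfb.symm
    obtain ⟨x, u, v, y, hR, hw, -⟩ := hf N
    have hxyz : FreeMonoid.toList x ++ FreeMonoid.toList u ++ FreeMonoid.toList y = [] := by
      rw [← FreeMonoid.toList_mul, ← FreeMonoid.toList_mul, ← hw]
      exact hnil
    have hu1 : FreeMonoid.toList u = [] := by
      rcases List.append_eq_nil_iff.1 hxyz with ⟨h3, -⟩
      exact (List.append_eq_nil_iff.1 h3).2
    have hu : u = 1 := FreeMonoid.toList.injective hu1
    subst hu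
    rcases hR with ⟨⟨a, c⟩, hac, heq⟩ | ⟨⟨a, c⟩, hac, heq⟩
    · have ha : ι₁ a = (1 : FreeMonoid (α₁ ⊕ α₂)) := congrArg Prod.fst heq
      have ha1 : a = 1 := by
        apply FreeMonoid.toList.injective
        have : (FreeMonoid.toList a).map Sum.inl = ([] : List (α₁ ⊕ α₂)) := by
          rw [← FreeMonoid.toList_map]
          exact congrArg FreeMonoid.toList ha
        simpa using this
      subst ha1
      exact h₁ c hac
    · have ha : ι₂ a = (1 : FreeMonoid (α₁ ⊕ α₂)) := congrArg Prod.fst heq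
      have ha1 : a = 1 := by
        apply FreeMonoid.toList.injective
        have : (FreeMonoid.toList a).map Sum.inr = ([] : List (α₁ ⊕ α₂)) := by
          rw [← FreeMonoid.toList_map]
          exact congrArg FreeMonoid.toList ha
        simpa using this
      subst ha1
      exact h₂ c hac
  · have hpt : ∀ k, ∃ P Q b b', L (N + k) = P ++ b :: Q ∧ L (N + k + 1) = P ++ b' :: Q ∧
        BStep R₁ R₂ b b' := by
      intro k
      rcases hstep (N + k) with h | hlt
      · exact h
      · exfalso
        have e1 := hN (N + k) (Nat.le_add_right _ _)
        have e2 := hN (N + k + 1) (by omega)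
        omega
    choose P Q b b' hPQ hPQ' hBS using hpt
    set j : ℕ → ℕ := fun k => (P k).length with hjdef
    have hlen : ∀ k, (L (N + k)).length = (L N).length := fun k => hN _ (Nat.le_add_right _ _)
    have hjlt : ∀ k, j k < (L N).length := by
      intro k
      have h1 := hlen k
      rw [hPQ k] at h1
      simp only [List.length_append, List.length_cons] at h1
      show (P k).length < (L N).length
      omega
    have hgb : ∀ k, (L (N + k))[j k]? = some (b k) := by
      intro k; rw [hPQ k]; exact getElem?_append_cons_self _ _ _
    have hgb' : ∀ k, (L (N + k + 1))[j k]? = some (b' k) := by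
      intro k; rw [hPQ' k]; exact getElem?_append_cons_self _ _ _
    have hother : ∀ k i, i ≠ j k → (L (N + k + 1))[i]? = (L (N + k))[i]? := by
      intro k i hi
      rw [hPQ k, hPQ' k]
      exact (getElem?_append_cons_ne _ _ _ _ hi).symm
    obtain ⟨i0, hi0⟩ :=
      Finite.exists_infinite_fiber (fun k => (⟨j k, hjlt k⟩ : Fin (L N).length))
    have hSinf : {k : ℕ | j k = i0.val}.Infinite := by
      refine Set.Infinite.mono ?_ (Set.infinite_coe_iff.1 hi0)
      intro k hk
      simp only [Set.mem_preimage, Set.mem_singleton_iff, Fin.ext_iff] at hk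
      exact hk
    set p : ℕ → Prop := fun k => j k = i0.val with hpdef
    have hexd : ∀ a : ℕ, ∃ t, a < t ∧ p t := by
      intro a
      obtain ⟨t, ht, hat⟩ := hSinf.exists_gt a
      exact ⟨t, hat, ht⟩
    set m : ℕ → ℕ := fun k => Nat.rec (Nat.find (hexd 0)) (fun _ prev => Nat.find (hexd prev)) k
      with hmdef
    have hmsucc_def : ∀ k, m (k + 1) = Nat.find (hexd (m k)) := fun k => rfl
    have hmp : ∀ k, p (m k) := by
      intro k
      cases k with
      | zero => exact (Nat.find_spec (hexd 0)).2
      | succ k => rw [hmsucc_def]; exact (Nat.find_spec (hexd (m k))).2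
    have hmlt : ∀ k, m k < m (k + 1) := by
      intro k
      rw [hmsucc_def]
      exact (Nat.find_spec (hexd (m k))).1
    have hgap : ∀ k t, m k < t → t < m (k + 1) → ¬ p t := by
      intro k t ht1 ht2 hp
      have := Nat.find_min (hexd (m k)) (by rw [← hmsucc_def]; exact ht2)
      exact this ⟨ht1, hp⟩
    have hstable : ∀ a d, (∀ t, a ≤ t → t < a + d → ¬ p t) →
        (L (N + (a + d)))[i0.val]? = (L (N + a))[i0.val]? := by
      intro a d
      induction d with
      | zero => intro _; rfl
      | succ d ih =>
        intro hno
        have h1 : (L (N + (a + d) + 1))[i0.val]? = (L (N + (a + d)))[i0.val]? := by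
          apply hother
          intro hcontra
          exact hno (a + d) (by omega) (by omega) hcontra.symm
        have h2 := ih (fun t ht1 ht2 => hno t ht1 (by omega))
        have he : N + (a + (d + 1)) = N + (a + d) + 1 := by omega
        rw [he, h1, h2]
    have hchain : ∀ k, b (m (k + 1)) = b' (m k) := by
      intro k
      have e1 : (L (N + m (k + 1)))[i0.val]? = some (b (m (k + 1))) := by
        have h3 := hgb (m (k + 1))
        rwa [show j (m (k + 1)) = i0.val from hmp (k + 1)] at h3
      have e2 : (L (N + (m k + 1)))[i0.val]? = some (b' (m k)) := by
        have h3 := hgb' (m k)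
        rw [show j (m k) = i0.val from hmp k] at h3
        rwa [show N + m k + 1 = N + (m k + 1) by omega] at h3
      have hd : m k + 1 + (m (k + 1) - (m k + 1)) = m (k + 1) := by
        have := hmlt k
        omega
      have e3 := hstable (m k + 1) (m (k + 1) - (m k + 1))
        (fun t ht1 ht2 => hgap k t (by omega) (by omega))
      rw [hd] at e3
      have := e1.symm.trans (e3.trans e2)
      exact Option.some.inj this
    have hgstep : ∀ k, BStep R₁ R₂ (b (m k)) (b (m (k + 1))) := by
      intro k
      rw [hchain k]
      exact hBS (m k)
    rcases hside0 : b (m 0) with u0 | u0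
    · have hall : ∀ k, ∃ ml, b (m k) = .inl ml := by
        intro k
        induction k with
        | zero => exact ⟨u0, hside0⟩
        | succ k ih =>
          obtain ⟨ml, hml⟩ := ih
          rcases hgstep k with ⟨a, a', ha, ha', hst⟩ | ⟨a, a', ha, ha', hst⟩
          · exact ⟨a', ha'⟩
          · rw [hml] at ha; cases ha
      choose ml hml using hall
      apply hterm₁ (fun k => FreeMonoid.ofList (ml k))
      intro k
      rcases hgstep k with ⟨a, a', ha, ha', hst⟩ | ⟨a, a', ha, ha', hst⟩
      · rw [hml k] at ha
        rw [hml (k + 1)] at ha'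
        obtain rfl := Sum.inl.inj ha
        obtain rfl := Sum.inl.inj ha'
        exact hst
      · rw [hml k] at ha; cases ha
    · have hall : ∀ k, ∃ ml, b (m k) = .inr ml := by
        intro k
        induction k with
        | zero => exact ⟨u0, hside0⟩
        | succ k ih =>
          obtain ⟨ml, hml⟩ := ih
          rcases hgstep k with ⟨a, a', ha, ha', hst⟩ | ⟨a, a', ha, ha', hst⟩
          · rw [hml] at ha; cases ha
          · exact ⟨a', ha'⟩
      choose ml hml using hall
      apply hterm₂ (fun k => FreeMonoid.ofList (ml k))
      intro k
      rcases hgstep k with ⟨a, a', ha, ha', hst⟩ | ⟨a, a', ha, ha', hst⟩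
      · rw [hml k] at ha; cases ha
      · rw [hml k] at ha
        rw [hml (k + 1)] at ha'
        obtain rfl := Sum.inr.inj ha
        obtain rfl := Sum.inr.inj ha'
        exact hst

lemma irred_one {α : Type} {R : Set (FreeMonoid α × FreeMonoid α)}
    (h₁ : ∀ v, ((1 : FreeMonoid α), v) ∉ R) : RewIrreducible R 1 := by
  rintro ⟨x, u, v, y, hR, heq⟩
  have : FreeMonoid.toList x ++ FreeMonoid.toList u ++ FreeMonoid.toList y = [] := by
    rw [← FreeMonoid.toList_mul, ← FreeMonoid.toList_mul, ← heq]; rfl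
  have hu : FreeMonoid.toList u = [] := by
    rcases List.append_eq_nil_iff.1 this with ⟨h3, -⟩
    exact (List.append_eq_nil_iff.1 h3).2
  have : u = 1 := FreeMonoid.toList.injective hu
  subst this
  exact h₁ v hR

lemma irred_val_one {α : Type} {G : Type} [Group G] {π : α → G}
    {R : Set (FreeMonoid α × FreeMonoid α)}
    (huniq : ∀ g : G, ∃! w : FreeMonoid α, FreeMonoid.lift π w = g ∧ RewIrreducible R w)
    (h₁ : ∀ v, ((1 : FreeMonoid α), v) ∉ R)
    {w : FreeMonoid α} (hw : FreeMonoid.lift π w = 1) (hirr : RewIrreducible R w) :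
    w = 1 := by
  obtain ⟨w0, -, hu⟩ := huniq 1
  have e1 := hu w ⟨hw, hirr⟩
  have e2 := hu 1 ⟨map_one _, irred_one h₁⟩
  rw [e1, e2]

lemma irred_blocks_inl {w : FreeMonoid (α₁ ⊕ α₂)} (hirr : RewIrreducible (RR R₁ R₂) w)
    {P Q : List (Blk α₁ α₂)} {mb : List α₁}
    (hb : blocks (FreeMonoid.toList w) = P ++ .inl mb :: Q) :
    RewIrreducible R₁ (FreeMonoid.ofList mb) := by
  rintro ⟨x, u, v, y, hR, heq⟩
  apply hirr
  refine ⟨FreeMonoid.ofList (P.flatMap emb ++ (FreeMonoid.toList x).map Sum.inl), ι₁ u, ι₁ v,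
    FreeMonoid.ofList ((FreeMonoid.toList y).map Sum.inl ++ Q.flatMap emb),
    Or.inl ⟨(u, v), hR, rfl⟩, ?_⟩
  have hmb : mb = FreeMonoid.toList x ++ FreeMonoid.toList u ++ FreeMonoid.toList y := by
    have := congrArg FreeMonoid.toList heq
    simpa [FreeMonoid.toList_mul] using this
  apply FreeMonoid.toList.injective
  conv_lhs => rw [← flatMap_blocks (FreeMonoid.toList w), hb]
  simp [FreeMonoid.toList_mul, ι₁, FreeMonoid.toList_map, hmb, emb]

lemma irred_blocks_inr {w : FreeMonoid (α₁ ⊕ α₂)} (hirr : RewIrreducible (RR R₁ R₂) w)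
    {P Q : List (Blk α₁ α₂)} {mb : List α₂}
    (hb : blocks (FreeMonoid.toList w) = P ++ .inr mb :: Q) :
    RewIrreducible R₂ (FreeMonoid.ofList mb) := by
  rintro ⟨x, u, v, y, hR, heq⟩
  apply hirr
  refine ⟨FreeMonoid.ofList (P.flatMap emb ++ (FreeMonoid.toList x).map Sum.inr), ι₂ u, ι₂ v,
    FreeMonoid.ofList ((FreeMonoid.toList y).map Sum.inr ++ Q.flatMap emb),
    Or.inr ⟨(u, v), hR, rfl⟩, ?_⟩
  have hmb : mb = FreeMonoid.toList x ++ FreeMonoid.toList u ++ FreeMonoid.toList y := by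
    have := congrArg FreeMonoid.toList heq
    simpa [FreeMonoid.toList_mul] using this
  apply FreeMonoid.toList.injective
  conv_lhs => rw [← flatMap_blocks (FreeMonoid.toList w), hb]
  simp [FreeMonoid.toList_mul, ι₂, FreeMonoid.toList_map, hmb, emb]

lemma map_inj_on {γ δ : Type*} (f : γ → δ) :
    ∀ l₁ l₂ : List γ, (∀ a ∈ l₁, ∀ b ∈ l₂, f a = f b → a = b) →
      l₁.map f = l₂.map f → l₁ = l₂ := by
  intro l₁
  induction l₁ with
  | nil =>
    intro l₂ _ h
    cases l₂
    · rfl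
    · simp at h
  | cons a l₁ ih =>
    intro l₂ hinj h
    cases l₂ with
    | nil => simp at h
    | cons b l₂ =>
      simp only [List.map_cons, List.cons.injEq] at h
      have hab : a = b := hinj a (by simp) b (by simp) h.1
      subst hab
      rw [ih l₂ (fun x hx y hy => hinj x (by simp [hx]) y (by simp [hy])) h.2]

abbrev Fb (G₁ G₂ : Type) : Bool → Type := fun t => cond t G₁ G₂

instance FbGroup : ∀ t, Group (Fb G₁ G₂ t) := fun t => by
  cases t
  · exact (inferInstance : Group G₂)
  · exact (inferInstance : Group G₁)

def toI : Monoid.Coprod G₁ G₂ →* Monoid.CoprodI (Fb G₁ G₂) :=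
  Monoid.Coprod.lift (Monoid.CoprodI.of (M := Fb G₁ G₂) (i := true))
    (Monoid.CoprodI.of (M := Fb G₁ G₂) (i := false))

def gOf (π₁ : α₁ → G₁) (π₂ : α₂ → G₂) : Blk α₁ α₂ → (Σ t, Fb G₁ G₂ t) := fun blk =>
  match blk with
  | .inl mb => ⟨true, FreeMonoid.lift π₁ (FreeMonoid.ofList mb)⟩
  | .inr mb => ⟨false, FreeMonoid.lift π₂ (FreeMonoid.ofList mb)⟩

lemma gOf_fst (blk : Blk α₁ α₂) : (gOf π₁ π₂ blk).1 = blk.isLeft := by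
  rcases blk with mb | mb <;> rfl

lemma lift_flatMap (l : List (Blk α₁ α₂)) :
    toI (FreeMonoid.lift (piU π₁ π₂) (FreeMonoid.ofList (l.flatMap emb))) =
      (l.map fun blk =>
        Monoid.CoprodI.of (i := (gOf π₁ π₂ blk).1) (gOf π₁ π₂ blk).2).prod := by
  induction l with
  | nil => simp
  | cons blk l ih =>
    have hsplit : FreeMonoid.ofList ((blk :: l).flatMap emb) =
        FreeMonoid.ofList (emb blk) * FreeMonoid.ofList (l.flatMap emb) := rfl
    rw [hsplit, map_mul, map_mul, ih, List.map_cons, List.prod_cons]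
    congr 1
    rcases blk with mb | mb
    · have h1 : FreeMonoid.ofList (emb (Sum.inl mb : Blk α₁ α₂)) = ι₁ (FreeMonoid.ofList mb) :=
        rfl
      rw [h1, lift_piU_ι₁]
      have h2 : (gOf π₁ π₂ (Sum.inl mb) : Σ t, Fb G₁ G₂ t) =
        ⟨true, FreeMonoid.lift π₁ (FreeMonoid.ofList mb)⟩ := rfl
      rw [h2]
      exact Monoid.Coprod.lift_apply_inl _ _ _
    · have h1 : FreeMonoid.ofList (emb (Sum.inr mb : Blk α₁ α₂)) = ι₂ (FreeMonoid.ofList mb) :=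
        rfl
      rw [h1, lift_piU_ι₂]
      have h2 : (gOf π₁ π₂ (Sum.inr mb) : Σ t, Fb G₁ G₂ t) =
        ⟨false, FreeMonoid.lift π₂ (FreeMonoid.ofList mb)⟩ := rfl
      rw [h2]
      exact Monoid.Coprod.lift_apply_inr _ _ _

lemma ofList_inj {γ : Type} {a b : List γ} (h : FreeMonoid.ofList a = FreeMonoid.ofList b) :
    a = b := by
  have := congrArg FreeMonoid.toList h
  simpa using this

lemma irred_eq_of_val_eq
    (hterm₁ : ∀ f : ℕ → FreeMonoid α₁, ¬ ∀ m, RewStep R₁ (f m) (f (m + 1)))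
    (hterm₂ : ∀ f : ℕ → FreeMonoid α₂, ¬ ∀ m, RewStep R₂ (f m) (f (m + 1)))
    (huniq₁ : ∀ g : G₁, ∃! w : FreeMonoid α₁, FreeMonoid.lift π₁ w = g ∧ RewIrreducible R₁ w)
    (huniq₂ : ∀ g : G₂, ∃! w : FreeMonoid α₂, FreeMonoid.lift π₂ w = g ∧ RewIrreducible R₂ w)
    {w w' : FreeMonoid (α₁ ⊕ α₂)}
    (hirr : RewIrreducible (RR R₁ R₂) w) (hirr' : RewIrreducible (RR R₁ R₂) w')
    (hval : FreeMonoid.lift (piU π₁ π₂) w = FreeMonoid.lift (piU π₁ π₂) w') : w = w' := by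
  classical
  have h₁ : ∀ v, ((1 : FreeMonoid α₁), v) ∉ R₁ := fun v => nil_not_lhs hterm₁ v
  have h₂ : ∀ v, ((1 : FreeMonoid α₂), v) ∉ R₂ := fun v => nil_not_lhs hterm₂ v
  have hcond : ∀ z : FreeMonoid (α₁ ⊕ α₂), RewIrreducible (RR R₁ R₂) z →
      ∀ s ∈ (blocks (FreeMonoid.toList z)).map (gOf π₁ π₂), s.2 ≠ 1 := by
    intro z hz s hs
    obtain ⟨blk, hblk, rfl⟩ := List.mem_map.1 hs
    have hne := (good_blocks (FreeMonoid.toList z)).ne _ hblk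
    obtain ⟨P, Q, hPQ⟩ := List.append_of_mem hblk
    rcases blk with mb | mb
    · intro hone
      have hirrb := irred_blocks_inl hz hPQ
      have hmb1 : FreeMonoid.ofList mb = 1 := irred_val_one huniq₁ h₁ hone hirrb
      exact hne (ofList_inj hmb1)
    · intro hone
      have hirrb := irred_blocks_inr hz hPQ
      have hmb1 : FreeMonoid.ofList mb = 1 := irred_val_one huniq₂ h₂ hone hirrb
      exact hne (ofList_inj hmb1)
  have hchain : ∀ z : FreeMonoid (α₁ ⊕ α₂),
      ((blocks (FreeMonoid.toList z)).map (gOf π₁ π₂)).IsChain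
        (fun s s' => s.1 ≠ s'.1) := by
    intro z
    rw [List.isChain_map]
    apply List.IsChain.imp ?_ (good_blocks _).alt
    intro a b hab
    simpa [gOf_fst] using hab
  set W : Monoid.CoprodI.Word (Fb G₁ G₂) :=
    ⟨(blocks (FreeMonoid.toList w)).map (gOf π₁ π₂), hcond w hirr, hchain w⟩ with hWdef
  set W' : Monoid.CoprodI.Word (Fb G₁ G₂) :=
    ⟨(blocks (FreeMonoid.toList w')).map (gOf π₁ π₂), hcond w' hirr', hchain w'⟩ with hW'def
  have hofl : ∀ z : FreeMonoid (α₁ ⊕ α₂),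
      z = FreeMonoid.ofList ((blocks (FreeMonoid.toList z)).flatMap emb) := by
    intro z
    rw [flatMap_blocks]
    rfl
  have hprodW : W.prod = toI (FreeMonoid.lift (piU π₁ π₂) w) := by
    have hdef : W.prod = (((blocks (FreeMonoid.toList w)).map (gOf π₁ π₂)).map
        (fun s => Monoid.CoprodI.of (M := Fb G₁ G₂) (i := s.1) s.2)).prod := rfl
    rw [hdef, List.map_map]
    conv_rhs => rw [hofl w]
    rw [lift_flatMap]
    rfl
  have hprodW' : W'.prod = toI (FreeMonoid.lift (piU π₁ π₂) w') := by
    have hdef : W'.prod = (((blocks (FreeMonoid.toList w')).map (gOf π₁ π₂)).map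
        (fun s => Monoid.CoprodI.of (M := Fb G₁ G₂) (i := s.1) s.2)).prod := rfl
    rw [hdef, List.map_map]
    conv_rhs => rw [hofl w']
    rw [lift_flatMap]
    rfl
  have hprod : W.prod = W'.prod := by rw [hprodW, hprodW', hval]
  have hW : W = W' := by
    apply (Monoid.CoprodI.Word.equiv (M := Fb G₁ G₂)).symm.injective
    exact hprod
  have hlists : (blocks (FreeMonoid.toList w)).map (gOf π₁ π₂) =
      (blocks (FreeMonoid.toList w')).map (gOf π₁ π₂) :=
    congrArg Monoid.CoprodI.Word.toList hW
  have hbl : blocks (FreeMonoid.toList w) = blocks (FreeMonoid.toList w') := by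
    apply map_inj_on _ _ _ ?_ hlists
    intro a ha c hc hac
    obtain ⟨Pa, Qa, hPa⟩ := List.append_of_mem ha
    obtain ⟨Pc, Qc, hPc⟩ := List.append_of_mem hc
    rcases a with ma | ma <;> rcases c with mc | mc
    · have hsnd : FreeMonoid.lift π₁ (FreeMonoid.ofList ma) =
          FreeMonoid.lift π₁ (FreeMonoid.ofList mc) := by
        have h1 := Sigma.ext_iff.mp hac
        exact eq_of_heq h1.2
      obtain ⟨z, -, hz⟩ := huniq₁ (FreeMonoid.lift π₁ (FreeMonoid.ofList ma))
      have e1 := hz _ ⟨rfl, irred_blocks_inl hirr hPa⟩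
      have e2 := hz _ ⟨hsnd.symm, irred_blocks_inl hirr' hPc⟩
      rw [ofList_inj (e1.trans e2.symm)]
    · exact absurd (congrArg Sigma.fst hac) (by simp [gOf])
    · exact absurd (congrArg Sigma.fst hac) (by simp [gOf])
    · have hsnd : FreeMonoid.lift π₂ (FreeMonoid.ofList ma) =
          FreeMonoid.lift π₂ (FreeMonoid.ofList mc) := by
        have h1 := Sigma.ext_iff.mp hac
        exact eq_of_heq h1.2
      obtain ⟨z, -, hz⟩ := huniq₂ (FreeMonoid.lift π₂ (FreeMonoid.ofList ma))
      have e1 := hz _ ⟨rfl, irred_blocks_inr hirr hPa⟩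
      have e2 := hz _ ⟨hsnd.symm, irred_blocks_inr hirr' hPc⟩
      rw [ofList_inj (e1.trans e2.symm)]
  apply FreeMonoid.toList.injective
  rw [← flatMap_blocks (FreeMonoid.toList w), ← flatMap_blocks (FreeMonoid.toList w'), hbl]

theorem uniq_RR
    (hsurj₁ : Surjective (FreeMonoid.lift π₁)) (hsurj₂ : Surjective (FreeMonoid.lift π₂))
    (hcon₁ : ∀ u v, FreeMonoid.lift π₁ u = FreeMonoid.lift π₁ v ↔
      conGen (fun w w' => (w, w') ∈ R₁) u v)
    (hcon₂ : ∀ u v, FreeMonoid.lift π₂ u = FreeMonoid.lift π₂ v ↔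
      conGen (fun w w' => (w, w') ∈ R₂) u v)
    (hterm₁ : ∀ f : ℕ → FreeMonoid α₁, ¬ ∀ m, RewStep R₁ (f m) (f (m + 1)))
    (hterm₂ : ∀ f : ℕ → FreeMonoid α₂, ¬ ∀ m, RewStep R₂ (f m) (f (m + 1)))
    (huniq₁ : ∀ g : G₁, ∃! w : FreeMonoid α₁, FreeMonoid.lift π₁ w = g ∧ RewIrreducible R₁ w)
    (huniq₂ : ∀ g : G₂, ∃! w : FreeMonoid α₂, FreeMonoid.lift π₂ w = g ∧ RewIrreducible R₂ w) :
    ∀ g : Monoid.Coprod G₁ G₂, ∃! w : FreeMonoid (α₁ ⊕ α₂),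
      FreeMonoid.lift (piU π₁ π₂) w = g ∧ RewIrreducible (RR R₁ R₂) w := by
  intro g
  obtain ⟨w0, hw0⟩ := piU_surj hsurj₁ hsurj₂ g
  obtain ⟨w, hreach, hirr⟩ := exists_irred (noInf_RR hterm₁ hterm₂) w0
  have hpres : ∀ {a b : FreeMonoid (α₁ ⊕ α₂)},
      Relation.ReflTransGen (RewStep (RR R₁ R₂)) a b →
        FreeMonoid.lift (piU π₁ π₂) a = FreeMonoid.lift (piU π₁ π₂) b := by
    intro a b h
    induction h with
    | refl => rfl
    | @tail b c _ hst ih => exact ih.trans (rtg_lift (RR_pres hcon₁ hcon₂) hst)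
  have hval : FreeMonoid.lift (piU π₁ π₂) w = g := by
    rw [← hw0]
    exact (hpres hreach).symm
  exact ⟨w, ⟨hval, hirr⟩, fun y hy =>
    irred_eq_of_val_eq hterm₁ hterm₂ huniq₁ huniq₂ hy.2 hirr (by rw [hy.1, hval])⟩

end Main
end FPRS

/-- The free product of two groups with finite complete rewriting
systems has a finite complete rewriting system. -/
theorem freeProduct_hasFiniteCompleteRewritingSystem
    (G₁ G₂ : Type) [Group G₁] [Group G₂]
    (h₁ : HasFiniteCompleteRewritingSystem G₁)
    (h₂ : HasFiniteCompleteRewritingSystem G₂) :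
    HasFiniteCompleteRewritingSystem (Monoid.Coprod G₁ G₂) := by
  obtain ⟨α₁, hfinα₁, π₁, R₁, hR₁fin, hsurj₁, hcon₁, hterm₁, huniq₁⟩ := h₁
  obtain ⟨α₂, hfinα₂, π₂, R₂, hR₂fin, hsurj₂, hcon₂, hterm₂, huniq₂⟩ := h₂
  haveI := hfinα₁
  haveI := hfinα₂
  refine ⟨α₁ ⊕ α₂, inferInstance, FPRS.piU π₁ π₂, FPRS.RR R₁ R₂,
    (hR₁fin.image _).union (hR₂fin.image _),
    FPRS.piU_surj hsurj₁ hsurj₂,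
    FPRS.con_iff hsurj₁ hsurj₂ hcon₁ hcon₂,
    FPRS.noInf_RR hterm₁ hterm₂,
    FPRS.uniq_RR hsurj₁ hsurj₂ hcon₁ hcon₂ hterm₁ hterm₂ huniq₁ huniq₂⟩
end

section
/- If a group G contains a subgroup of finite index isomorphic to ℤ, then G has a finite complete rewriting system. -/
namespace VZ
variable {β : Type} (c : β → Bool) (K : ℕ)

def cnt (l : List β) : ℕ := l.countP (fun a => c a)

def cost (x : β) (t : List β) : ℕ := if c x then K ^ (1 + cnt c t) else 0

def DD : List β → ℕ
  | [] => 0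
  | x :: t => cost c K x t + DD t

def meas : List β → ℕ
  | [] => 0
  | x :: t => 1 + cost c K x t + DD c K t + meas t

lemma cnt_nil : cnt c ([] : List β) = 0 := rfl

lemma cnt_append (l1 l2 : List β) : cnt c (l1 ++ l2) = cnt c l1 + cnt c l2 :=
  List.countP_append

lemma cnt_cons (x : β) (t : List β) : cnt c (x :: t) = (if c x then 1 else 0) + cnt c t := by
  simp only [cnt, List.countP_cons]
  split <;> omega

lemma Dbound (hK : 1 ≤ K) : ∀ t : List β, K * DD c K t + K ≤ K ^ (1 + cnt c t) + DD c K t := by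
  intro t
  induction t with
  | nil => simp only [DD, cnt_nil, pow_one, mul_zero, add_zero, zero_add]; nlinarith
  | cons x t ih =>
    rw [DD, cnt_cons, cost]
    by_cases hx : c x
    · rw [if_pos hx, if_pos hx]
      have : K ^ (1 + (1 + cnt c t)) = K * K ^ (1 + cnt c t) := by ring
      rw [this]
      nlinarith
    · rw [if_neg hx, if_neg hx]
      simpa using ih

lemma cost_mono (hK : 1 ≤ K) (x : β) {t t' : List β} (h : cnt c t' ≤ cnt c t) :
    cost c K x t' ≤ cost c K x t := by
  unfold cost; split
  · exact Nat.pow_le_pow_right hK (by omega)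
  · exact le_rfl

lemma DD_mono (hK : 1 ≤ K) (s : List β) {t t' : List β}
    (hc : cnt c t' ≤ cnt c t) (hd : DD c K t' ≤ DD c K t) :
    DD c K (s ++ t') ≤ DD c K (s ++ t) := by
  induction s with
  | nil => simpa using hd
  | cons x s ih =>
    simp only [List.cons_append, DD, List.append_eq]
    have hcost : cost c K x (s ++ t') ≤ cost c K x (s ++ t) := by
      apply cost_mono c K hK
      rw [cnt_append, cnt_append]; omega
    omega

lemma meas_mono (hK : 1 ≤ K) (s : List β) {t t' : List β}
    (hc : cnt c t' ≤ cnt c t) (hd : DD c K t' ≤ DD c K t) (hm : meas c K t' < meas c K t) :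
    meas c K (s ++ t') < meas c K (s ++ t) := by
  induction s with
  | nil => simpa using hm
  | cons x s ih =>
    simp only [List.cons_append, meas, List.append_eq]
    have hcost : cost c K x (s ++ t') ≤ cost c K x (s ++ t) := by
      apply cost_mono c K hK
      rw [cnt_append, cnt_append]; omega
    have hD : DD c K (s ++ t') ≤ DD c K (s ++ t) := DD_mono c K hK s hc hd
    omega

lemma cnt_replicate (x : β) (hx : c x = false) (n : ℕ) : cnt c (List.replicate n x) = 0 := by
  induction n with
  | zero => rfl
  | succ n ih => rw [List.replicate_succ, cnt_cons, hx]; simpa using ih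

lemma DD_replicate (x : β) (hx : c x = false) (n : ℕ) (t : List β) :
    DD c K (List.replicate n x ++ t) = DD c K t := by
  induction n with
  | zero => rfl
  | succ n ih => rw [List.replicate_succ, List.cons_append, DD, cost, hx]; simpa using ih

lemma meas_replicate (x : β) (hx : c x = false) (n : ℕ) (t : List β) :
    meas c K (List.replicate n x ++ t) = n * (1 + DD c K t) + meas c K t := by
  induction n with
  | zero => simp [meas]
  | succ n ih =>
    rw [List.replicate_succ, List.cons_append, meas]
    simp only [cost, hx, DD_replicate c K x hx, ih, if_false, Bool.false_eq_true]
    ring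

lemma core (Lb : ℕ) (hK : K = Lb + 2) (n : ℕ) (hn : n ≤ Lb) (t : List β) :
    n * (1 + DD c K t) < 1 + K ^ (1 + cnt c t) + DD c K t := by
  have hb := Dbound c K (by omega) t
  have h1 : n * (1 + DD c K t) ≤ Lb * (1 + DD c K t) :=
    Nat.mul_le_mul_right _ hn
  nlinarith [h1, hb]

lemma cnt_cons_true {y : β} (hy : c y = true) (t : List β) :
    cnt c (y :: t) = 1 + cnt c t := by rw [cnt_cons, hy]; simp

lemma cnt_cons_false {y : β} (hy : c y = false) (t : List β) :
    cnt c (y :: t) = cnt c t := by rw [cnt_cons, hy]; simp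

lemma ruleA (Lb : ℕ) (hK : K = Lb + 2) (x y x0 : β) (hy : c y = true) (hx0 : c x0 = false)
    (P : List β) (hP : P = [] ∨ ∃ p, P = [p] ∧ c p = true) (n : ℕ) (hn : n ≤ Lb) (t : List β) :
    cnt c (P ++ (List.replicate n x0 ++ t)) ≤ cnt c (x :: y :: t) ∧
    DD c K (P ++ (List.replicate n x0 ++ t)) ≤ DD c K (x :: y :: t) ∧
    meas c K (P ++ (List.replicate n x0 ++ t)) < meas c K (x :: y :: t) := by
  have hcr : cnt c (List.replicate n x0 ++ t) = cnt c t := by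
    rw [cnt_append, cnt_replicate c x0 hx0]; simp
  have hDr : DD c K (List.replicate n x0 ++ t) = DD c K t := DD_replicate c K x0 hx0 n t
  have hmr : meas c K (List.replicate n x0 ++ t) = n * (1 + DD c K t) + meas c K t :=
    meas_replicate c K x0 hx0 n t
  have hcore := core c K Lb hK n hn t
  have hDu : DD c K (x :: y :: t) = cost c K x (y :: t) + K ^ (1 + cnt c t) + DD c K t := by
    simp only [DD, cost, hy, if_true]; ring
  have hmu : meas c K (x :: y :: t) =
      2 + cost c K x (y :: t) + 2 * K ^ (1 + cnt c t) + 2 * DD c K t + meas c K t := by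
    simp only [meas, DD, cost, hy, if_true]; ring
  have hcu : cnt c (x :: y :: t) = (if c x then 1 else 0) + 1 + cnt c t := by
    rw [cnt_cons, cnt_cons_true c hy]; ring
  rcases hP with hP | ⟨p, hP, hp⟩
  · subst hP
    simp only [List.nil_append, hcr, hDr, hmr, hcu, hDu, hmu]
    refine ⟨by split <;> omega, by omega, by omega⟩
  · subst hP
    have hc1 : cnt c ([p] ++ (List.replicate n x0 ++ t)) = 1 + cnt c t := by
      rw [List.singleton_append, cnt_cons, hp, hcr]; simp
    have hD1 : DD c K ([p] ++ (List.replicate n x0 ++ t)) = K ^ (1 + cnt c t) + DD c K t := by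
      have hcons : ([p] ++ (List.replicate n x0 ++ t)) = p :: (List.replicate n x0 ++ t) := rfl
      rw [hcons, DD, cost, hp, if_pos rfl, hcr, hDr]
    have hm1 : meas c K ([p] ++ (List.replicate n x0 ++ t)) =
        1 + K ^ (1 + cnt c t) + DD c K t + (n * (1 + DD c K t) + meas c K t) := by
      rw [List.singleton_append, meas, cost, hp, if_pos rfl, hcr, hDr, hmr]
    rw [hc1, hD1, hm1, hcu, hDu, hmu]
    refine ⟨by split <;> omega, by omega, by omega⟩

lemma ruleB (x y : β) (hx : c x = false) (hy : c y = false) (t : List β) :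
    cnt c ([] ++ t) ≤ cnt c (x :: y :: t) ∧
    DD c K ([] ++ t) ≤ DD c K (x :: y :: t) ∧
    meas c K ([] ++ t) < meas c K (x :: y :: t) := by
  have h1 : cnt c (x :: y :: t) = cnt c t := by
    rw [cnt_cons_false c hx, cnt_cons_false c hy]
  have h2 : DD c K (x :: y :: t) = DD c K t := by
    simp only [DD, cost, hx, hy]; simp
  have h3 : meas c K (x :: y :: t) = 2 + 2 * DD c K t + meas c K t := by
    simp only [meas, DD, cost, hx, hy]; simp; ring
  simp only [List.nil_append, h1, h2, h3]
  refine ⟨le_rfl, by omega, by omega⟩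


variable {G : Type} [Group G]

abbrev A (H : Subgroup G) : Type := Bool ⊕ {q : G ⧸ H // q ≠ ((1 : G) : G ⧸ H)}

def isc {H : Subgroup G} : A H → Bool := Sum.isRight

variable {H : Subgroup G} (e : H ≃* Multiplicative ℤ)

noncomputable def zzH : H := e.symm (Multiplicative.ofAdd 1)

noncomputable def zz : G := (zzH e : G)

noncomputable def pi : A H → G
  | .inl true => zz e
  | .inl false => (zz e)⁻¹
  | .inr q => Quotient.out q.1

open scoped Classical in
noncomputable def rep (q : G ⧸ H) : G :=
  if q = ((1 : G) : G ⧸ H) then 1 else Quotient.out q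

lemma mk_rep (q : G ⧸ H) : ((rep q : G) : G ⧸ H) = q := by
  unfold rep
  split
  · rename_i h; exact h.symm
  · exact QuotientGroup.out_eq' q

lemma mem_rep (g : G) : (rep ((g : G ⧸ H)))⁻¹ * g ∈ H :=
  QuotientGroup.eq.mp (by rw [mk_rep])

noncomputable def kex (g : G) : ℤ :=
  Multiplicative.toAdd (e ⟨(rep ((g : G ⧸ H)))⁻¹ * g, mem_rep g⟩)

noncomputable def tl (H : Subgroup G) (k : ℤ) : List (A H) :=
  if 0 ≤ k then List.replicate k.toNat (Sum.inl true) else List.replicate (-k).toNat (Sum.inl false)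

open scoped Classical in
noncomputable def NF (g : G) : List (A H) :=
  (if h : (g : G ⧸ H) = ((1 : G) : G ⧸ H) then [] else [Sum.inr ⟨(g : G ⧸ H), h⟩]) ++
    tl H (kex e g)

lemma zz_zpow (k : ℤ) : ((zzH e ^ k : H) : G) = (zz e) ^ k := by
  push_cast; rfl

lemma decomp (g : G) : rep ((g : G ⧸ H)) * (zz e) ^ (kex e g) = g := by
  have h1 : zzH e ^ (kex e g) = ⟨(rep ((g : G ⧸ H)))⁻¹ * g, mem_rep g⟩ := by
    unfold kex zzH
    rw [← map_zpow]
    have : Multiplicative.ofAdd (1 : ℤ) ^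
        (Multiplicative.toAdd (e ⟨(rep ((g : G ⧸ H)))⁻¹ * g, mem_rep g⟩)) =
        e ⟨(rep ((g : G ⧸ H)))⁻¹ * g, mem_rep g⟩ := by
      simp [← ofAdd_zsmul]
    rw [this, MulEquiv.symm_apply_apply]
  have h2 : (zz e) ^ (kex e g) = (rep ((g : G ⧸ H)))⁻¹ * g := by
    rw [← zz_zpow, h1]
  rw [h2]; group

lemma zz_pow_mem (k : ℤ) : (zz e) ^ k ∈ H := zpow_mem (zzH e).2 k

lemma mk_rep_pow (q : G ⧸ H) (k : ℤ) : ((rep q * (zz e) ^ k : G) : G ⧸ H) = q := by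
  have h1 : ((rep q * (zz e) ^ k : G) : G ⧸ H) = ((rep q : G) : G ⧸ H) := by
    symm
    rw [QuotientGroup.eq]
    simpa using zz_pow_mem e k
  rw [h1, mk_rep]

lemma kex_rep_pow (q : G ⧸ H) (k : ℤ) : kex e (rep q * (zz e) ^ k) = k := by
  unfold kex
  have hq := mk_rep_pow e q k
  have harg : (⟨(rep (((rep q * zz e ^ k : G) : G ⧸ H)))⁻¹ * (rep q * (zz e) ^ k),
      mem_rep _⟩ : H) = zzH e ^ k := by
    apply Subtype.ext
    push_cast
    rw [hq]
    show (rep q)⁻¹ * (rep q * zz e ^ k) = zz e ^ k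
    group
  rw [harg, map_zpow]
  simp [zzH]

open scoped Classical in
lemma NF_rep_pow (q : G ⧸ H) (k : ℤ) :
    NF e (rep q * (zz e) ^ k) =
      (if h : q = ((1 : G) : G ⧸ H) then [] else [Sum.inr ⟨q, h⟩]) ++ tl H k := by
  unfold NF
  rw [kex_rep_pow]
  have hq := mk_rep_pow e q k
  congr 1
  · rw [hq]

noncomputable def ev (l : List (A H)) : G := (l.map (pi e)).prod

lemma ev_lift (l : List (A H)) : FreeMonoid.lift (pi e) (FreeMonoid.ofList l) = ev e l := by
  induction l with
  | nil => rfl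
  | cons x t ih =>
      rw [show FreeMonoid.ofList (x :: t) = FreeMonoid.of x * FreeMonoid.ofList t from rfl,
        map_mul, ih, FreeMonoid.lift_eval_of]
      simp [ev]

lemma ev_append (l l' : List (A H)) : ev e (l ++ l') = ev e l * ev e l' := by
  simp [ev]

lemma ev_replicate (n : ℕ) (x : A H) : ev e (List.replicate n x) = (pi e x) ^ n := by
  simp [ev]

lemma ev_tl (k : ℤ) : ev e (tl H k) = (zz e) ^ k := by
  unfold tl
  split
  · rename_i h
    rw [ev_replicate]
    show (zz e) ^ (k.toNat) = _
    rw [← zpow_natCast, Int.toNat_of_nonneg h]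
  · rename_i h
    rw [ev_replicate]
    show ((zz e)⁻¹) ^ ((-k).toNat) = _
    rw [inv_pow, ← zpow_natCast, Int.toNat_of_nonneg (by omega), ← zpow_neg, neg_neg]

lemma rep_one : (rep (((1 : G) : G ⧸ H)) : G) = 1 := if_pos rfl

open scoped Classical in
lemma ev_prefix (g : G) :
    ev e (if h : (g : G ⧸ H) = ((1 : G) : G ⧸ H) then ([] : List (A H))
      else [Sum.inr ⟨(g : G ⧸ H), h⟩]) = rep ((g : G ⧸ H)) := by
  split
  · rename_i h; rw [h, rep_one]; rfl
  · rename_i h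
    show (pi e (Sum.inr ⟨(g : G ⧸ H), h⟩)) * 1 = _
    rw [mul_one]
    show Quotient.out ((g : G ⧸ H)) = rep ((g : G ⧸ H))
    unfold rep
    rw [if_neg h]

lemma ev_NF (g : G) : ev e (NF e g) = g := by
  unfold NF
  rw [ev_append, ev_prefix, ev_tl, decomp]

lemma tl_natCast (n : ℕ) : tl H ((n : ℤ)) = List.replicate n (Sum.inl true) := by
  unfold tl
  rw [if_pos (by positivity)]
  simp

lemma tl_negCast (n : ℕ) : tl H (-(n : ℤ)) = List.replicate n (Sum.inl false) := by
  unfold tl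
  rcases Nat.eq_zero_or_pos n with h | h
  · subst h; simp
  · rw [if_neg (by omega)]
    simp

/-- The pair predicate defining rule left-hand sides. -/
def Sp {H : Subgroup G} (x y : A H) : Prop :=
  isc y = true ∨ (x = Sum.inl true ∧ y = Sum.inl false) ∨
    (x = Sum.inl false ∧ y = Sum.inl true)

noncomputable def Rset : Set (FreeMonoid (A H) × FreeMonoid (A H)) :=
  (fun xy : A H × A H =>
    (FreeMonoid.ofList [xy.1, xy.2], FreeMonoid.ofList (NF e (pi e xy.1 * pi e xy.2)))) ''
      {xy | Sp xy.1 xy.2}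

lemma NF_one : NF e (1 : G) = [] := by
  have h := NF_rep_pow e (((1 : G) : G ⧸ H)) 0
  rw [rep_one] at h
  simpa [tl] using h

/-- Shapes of irreducible words. -/
def Shp (w : List (A H)) : Prop :=
  (∃ n s, w = List.replicate n (Sum.inl s)) ∨
    (∃ cq n s, w = Sum.inr cq :: List.replicate n (Sum.inl s))

lemma classify (w : List (A H)) :
    (∃ (xs : List (A H)) (p q : A H) (ys : List (A H)), w = xs ++ p :: q :: ys ∧ Sp p q) ∨
      Shp w := by
  induction w with
  | nil => exact Or.inr (Or.inl ⟨0, true, rfl⟩)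
  | cons x w ih =>
    rcases ih with ⟨xs, p, q, ys, hw, hpq⟩ | hs
    · exact Or.inl ⟨x :: xs, p, q, ys, by rw [hw]; rfl, hpq⟩
    rcases hs with ⟨n, s, hw⟩ | ⟨cq, n, s, hw⟩
    · subst hw
      cases x with
      | inr cq => exact Or.inr (Or.inr ⟨cq, n, s, rfl⟩)
      | inl sx =>
        cases n with
        | zero => exact Or.inr (Or.inl ⟨1, sx, rfl⟩)
        | succ m =>
          by_cases hss : sx = s
          · subst hss
            exact Or.inr (Or.inl ⟨m + 2, sx, by
              simp [List.replicate_succ]⟩)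
          · refine Or.inl ⟨[], Sum.inl sx, Sum.inl s, List.replicate m (Sum.inl s),
              by rw [List.replicate_succ]; rfl, ?_⟩
            rcases sx <;> rcases s <;> simp_all [Sp]
    · subst hw
      refine Or.inl ⟨[], x, Sum.inr cq, List.replicate n (Sum.inl s), rfl, Or.inl rfl⟩

lemma sp_not_ll (s : Bool) : ¬ Sp (H := H) (Sum.inl s) (Sum.inl s) := by
  rcases s <;> simp [Sp, isc]

lemma sp_not_rl (cq : {q : G ⧸ H // q ≠ ((1 : G) : G ⧸ H)}) (s : Bool) :
    ¬ Sp (H := H) (Sum.inr cq) (Sum.inl s) := by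
  simp [Sp, isc]

lemma noBad {w : List (A H)} (hs : Shp w) (xs : List (A H)) (p q : A H) (ys : List (A H))
    (hw : w = xs ++ p :: q :: ys) : ¬ Sp p q := by
  rcases hs with ⟨n, s, hrep⟩ | ⟨cq, n, s, hrep⟩
  · have hp : p ∈ w := by rw [hw]; simp
    have hq : q ∈ w := by rw [hw]; simp
    rw [hrep] at hp hq
    rw [List.eq_of_mem_replicate hp, List.eq_of_mem_replicate hq]
    exact sp_not_ll s
  · cases xs with
    | nil =>
      rw [hrep] at hw
      simp only [List.nil_append, List.cons.injEq] at hw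
      have hq : q ∈ List.replicate n (Sum.inl s : A H) := by rw [hw.2]; simp
      rw [← hw.1, List.eq_of_mem_replicate hq]
      exact sp_not_rl cq s
    | cons a xs' =>
      rw [hrep] at hw
      simp only [List.cons_append, List.cons.injEq] at hw
      have hp : p ∈ List.replicate n (Sum.inl s : A H) := by rw [hw.2]; simp
      have hq : q ∈ List.replicate n (Sum.inl s : A H) := by rw [hw.2]; simp
      rw [List.eq_of_mem_replicate hp, List.eq_of_mem_replicate hq]
      exact sp_not_ll s

lemma ev_shape_true (n : ℕ) : ev e (List.replicate n (Sum.inl true) : List (A H)) =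
    rep (((1:G) : G ⧸ H)) * (zz e) ^ ((n : ℤ)) := by
  rw [ev_replicate, rep_one, one_mul, zpow_natCast]; rfl

lemma ev_shape_false (n : ℕ) : ev e (List.replicate n (Sum.inl false) : List (A H)) =
    rep (((1:G) : G ⧸ H)) * (zz e) ^ (-(n : ℤ)) := by
  rw [ev_replicate, rep_one, one_mul]
  show ((zz e)⁻¹) ^ n = _
  rw [inv_pow, ← zpow_natCast, ← zpow_neg]

lemma NF_of_shape {w : List (A H)} (hs : Shp w) : NF e (ev e w) = w := by
  rcases hs with ⟨n, s, hrep⟩ | ⟨cq, n, s, hrep⟩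
  · subst hrep
    rcases s
    · rw [ev_shape_false, NF_rep_pow, dif_pos rfl, List.nil_append, tl_negCast]
    · rw [ev_shape_true, NF_rep_pow, dif_pos rfl, List.nil_append, tl_natCast]
  · subst hrep
    have hev : ev e (Sum.inr cq :: List.replicate n (Sum.inl s)) =
        rep cq.1 * (zz e) ^ (if s then (n : ℤ) else -(n : ℤ)) := by
      have h1 : ev e (Sum.inr cq :: List.replicate n (Sum.inl s)) =
          pi e (Sum.inr cq) * ev e (List.replicate n (Sum.inl s)) := by
        simp [ev]
      rw [h1]
      have h2 : pi e (Sum.inr cq) = rep cq.1 := by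
        show Quotient.out cq.1 = _
        unfold rep
        rw [if_neg cq.2]
      rcases s
      · rw [ev_shape_false, rep_one, one_mul, h2]; norm_num
      · rw [ev_shape_true, rep_one, one_mul, h2]; norm_num
    rw [hev, NF_rep_pow, dif_neg cq.2]
    rcases s
    · simp only [if_false, Bool.false_eq_true, tl_negCast]; rfl
    · simp only [if_true, tl_natCast]; rfl

lemma isc_inl (s : Bool) : isc (Sum.inl s : A H) = false := rfl
lemma isc_inr (cq : {q : G ⧸ H // q ≠ ((1 : G) : G ⧸ H)}) : isc (Sum.inr cq : A H) = true := rfl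

open scoped Classical in
lemma NF_struct (g : G) :
    ∃ (P : List (A H)) (n : ℕ) (s : Bool),
      NF e g = P ++ List.replicate n (Sum.inl s) ∧
      (P = [] ∨ ∃ p, P = [p] ∧ isc p = true) ∧
      n ≤ (NF e g).length := by
  unfold NF
  set P := (if h : (g : G ⧸ H) = ((1 : G) : G ⧸ H) then ([] : List (A H))
    else [Sum.inr ⟨(g : G ⧸ H), h⟩]) with hP
  have hPP : P = [] ∨ ∃ p, P = [p] ∧ isc p = true := by
    rw [hP]; split
    · exact Or.inl rfl
    · exact Or.inr ⟨_, rfl, rfl⟩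
  unfold tl
  split
  · exact ⟨P, _, true, rfl, hPP, by simp⟩
  · exact ⟨P, _, false, rfl, hPP, by simp⟩

open scoped Classical in
lemma Shp_NF (g : G) : Shp (NF e g) := by
  unfold NF Shp tl
  by_cases h1 : (g : G ⧸ H) = ((1 : G) : G ⧸ H) <;>
    [rw [dif_pos h1]; rw [dif_neg h1]] <;>
    by_cases h2 : 0 ≤ kex e g <;> [rw [if_pos h2]; rw [if_neg h2]; rw [if_pos h2]; rw [if_neg h2]]
  · exact Or.inl ⟨_, _, rfl⟩
  · exact Or.inl ⟨_, _, rfl⟩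
  · exact Or.inr ⟨_, _, _, rfl⟩
  · exact Or.inr ⟨_, _, _, rfl⟩

section Rules
variable {G : Type} [Group G] {H : Subgroup G} (e : H ≃* Multiplicative ℤ)

lemma ev_pair (x y : A H) : ev e [x, y] = pi e x * pi e y := by simp [ev]

lemma rule_pres {u v : FreeMonoid (A H)} (huv : (u, v) ∈ Rset e) :
    FreeMonoid.lift (pi e) u = FreeMonoid.lift (pi e) v := by
  obtain ⟨⟨x, y⟩, _, hf⟩ := huv
  obtain ⟨hu, hv⟩ := Prod.mk.injEq .. ▸ hf
  rw [← hu, ← hv, ev_lift, ev_lift, ev_pair, ev_NF]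

lemma rule_core (Lb : ℕ)
    (hL : ∀ p ∈ Rset e, (FreeMonoid.toList p.2).length ≤ Lb)
    {u v : FreeMonoid (A H)} (huv : (u, v) ∈ Rset e) (t : List (A H)) :
    cnt isc (FreeMonoid.toList v ++ t) ≤ cnt isc (FreeMonoid.toList u ++ t) ∧
    DD isc (Lb + 2) (FreeMonoid.toList v ++ t) ≤ DD isc (Lb + 2) (FreeMonoid.toList u ++ t) ∧
    meas isc (Lb + 2) (FreeMonoid.toList v ++ t) <
      meas isc (Lb + 2) (FreeMonoid.toList u ++ t) := by
  obtain ⟨⟨x, y⟩, hxy, hf⟩ := huv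
  obtain ⟨hu, hv⟩ := Prod.mk.injEq .. ▸ hf
  have htu : FreeMonoid.toList u = [x, y] := by rw [← hu]; rfl
  have htv : FreeMonoid.toList v = NF e (pi e x * pi e y) := by rw [← hv]; rfl
  have hvlen : (NF e (pi e x * pi e y)).length ≤ Lb := by
    rw [← htv]; exact hL (u, v) ⟨⟨x, y⟩, hxy, hf⟩
  rw [htu, htv]
  rcases hxy with hy | ⟨hx, hy⟩ | ⟨hx, hy⟩
  · -- y is a coset letter
    obtain ⟨P, n, s, hNF, hPP, hlen⟩ := NF_struct e (pi e x * pi e y)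
    have hn : n ≤ Lb := le_trans hlen hvlen
    rw [hNF, List.append_assoc]
    have hshow : ([x, y] : List (A H)) ++ t = x :: y :: t := rfl
    rw [hshow]
    exact ruleA isc (Lb + 2) Lb rfl x y (Sum.inl s) hy (isc_inl s) P hPP n hn t
  · -- (a, b)
    subst hx; subst hy
    have h1 : pi e (Sum.inl true) * pi e (Sum.inl false) = 1 := mul_inv_cancel _
    rw [h1, NF_one]
    exact ruleB isc (Lb + 2) _ _ (isc_inl true) (isc_inl false) t
  · -- (b, a)
    subst hx; subst hy
    have h1 : pi e (Sum.inl false) * pi e (Sum.inl true) = 1 := inv_mul_cancel _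
    rw [h1, NF_one]
    exact ruleB isc (Lb + 2) _ _ (isc_inl false) (isc_inl true) t

lemma step_meas (Lb : ℕ)
    (hL : ∀ p ∈ Rset e, (FreeMonoid.toList p.2).length ≤ Lb)
    {w w' : FreeMonoid (A H)} (h : RewStep (Rset e) w w') :
    meas isc (Lb + 2) (FreeMonoid.toList w') < meas isc (Lb + 2) (FreeMonoid.toList w) := by
  obtain ⟨x, u, v, y, hR, hw, hw'⟩ := h
  have h1 : FreeMonoid.toList w =
      FreeMonoid.toList x ++ (FreeMonoid.toList u ++ FreeMonoid.toList y) := by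
    rw [hw]; simp [List.append_assoc]
  have h2 : FreeMonoid.toList w' =
      FreeMonoid.toList x ++ (FreeMonoid.toList v ++ FreeMonoid.toList y) := by
    rw [hw']; simp [List.append_assoc]
  rw [h1, h2]
  obtain ⟨hc, hd, hm⟩ := rule_core e Lb hL hR (FreeMonoid.toList y)
  exact meas_mono isc (Lb + 2) (by omega) (FreeMonoid.toList x)
    (by rw [cnt_append, cnt_append] at hc ⊢; exact hc) hd hm

lemma decomp_word {w : FreeMonoid (A H)} {xs ys : List (A H)} {p q : A H}
    (hsplit : FreeMonoid.toList w = xs ++ p :: q :: ys) :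
    w = FreeMonoid.ofList xs * FreeMonoid.ofList [p, q] * FreeMonoid.ofList ys := by
  have h0 : w = FreeMonoid.ofList (FreeMonoid.toList w) := rfl
  rw [h0, hsplit]
  exact congrArg FreeMonoid.ofList (by simp)

lemma toNF (Lb : ℕ)
    (hL : ∀ p ∈ Rset e, (FreeMonoid.toList p.2).length ≤ Lb)
    (w : FreeMonoid (A H)) :
    conGen (fun a b => (a, b) ∈ Rset e) w
      (FreeMonoid.ofList (NF e (FreeMonoid.lift (pi e) w))) := by
  set r := fun a b => (a, b) ∈ Rset e with hr
  suffices hall : ∀ m w, meas isc (Lb + 2) (FreeMonoid.toList w) = m →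
      conGen r w (FreeMonoid.ofList (NF e (FreeMonoid.lift (pi e) w))) from
    hall _ w rfl
  intro m
  induction m using Nat.strong_induction_on with
  | _ m ih =>
    intro w hm
    rcases classify (FreeMonoid.toList w) with ⟨xs, p, q, ys, hsplit, hpq⟩ | hs
    · have hmem : (FreeMonoid.ofList [p, q],
          FreeMonoid.ofList (NF e (pi e p * pi e q))) ∈ Rset e := ⟨(p, q), hpq, rfl⟩
      set w' := FreeMonoid.ofList xs * FreeMonoid.ofList (NF e (pi e p * pi e q)) *
        FreeMonoid.ofList ys with hw'
      have hw : w = FreeMonoid.ofList xs * FreeMonoid.ofList [p, q] * FreeMonoid.ofList ys :=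
        decomp_word hsplit
      have hstep : conGen r w w' := by
        rw [hw, hw']
        exact (conGen r).mul ((conGen r).mul ((conGen r).refl _) (ConGen.Rel.of _ _ hmem))
          ((conGen r).refl _)
      have hπ : FreeMonoid.lift (pi e) w' = FreeMonoid.lift (pi e) w := by
        rw [hw, hw']
        simp only [map_mul]
        rw [rule_pres e hmem]
      have hms : RewStep (Rset e) w w' :=
        ⟨FreeMonoid.ofList xs, _, _, FreeMonoid.ofList ys, hmem, hw, hw'⟩
      have hlt : meas isc (Lb + 2) (FreeMonoid.toList w') < m := by
        rw [← hm]; exact step_meas e Lb hL hms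
      have hrec := ih _ hlt w' rfl
      rw [hπ] at hrec
      exact (conGen r).trans hstep hrec
    · have hkey : FreeMonoid.ofList (NF e (FreeMonoid.lift (pi e) w)) = w := by
        have h2 : FreeMonoid.lift (pi e) w = ev e (FreeMonoid.toList w) :=
          ev_lift e (FreeMonoid.toList w)
        rw [h2, NF_of_shape e hs]
        rfl
      rw [hkey]
      exact (conGen r).refl w

end Rules

end VZ

/-- A group with a finite index subgroup isomorphic to ℤ has a finite
complete rewriting system. -/
theorem virtuallyZ_hasFiniteCompleteRewritingSystem
    (G : Type) [Group G] (H : Subgroup G) (hfi : H.FiniteIndex)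
    (e : H ≃* Multiplicative ℤ) :
    HasFiniteCompleteRewritingSystem G := by
  classical
  have hfinQ : Finite (G ⧸ H) := inferInstance
  have hfinA : Finite (VZ.A H) := inferInstance
  have hRfin : (VZ.Rset e).Finite := Set.Finite.image _ (Set.toFinite _)
  obtain ⟨Lb, hLb⟩ := (hRfin.image (fun p => (FreeMonoid.toList p.2).length)).bddAbove
  have hL : ∀ p ∈ VZ.Rset e, (FreeMonoid.toList p.2).length ≤ Lb := by
    intro p hp
    exact hLb ⟨p, hp, rfl⟩
  refine ⟨VZ.A H, hfinA, VZ.pi e, VZ.Rset e, hRfin, ?_, ?_, ?_, ?_⟩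
  · -- surjective
    intro g
    exact ⟨FreeMonoid.ofList (VZ.NF e g), by rw [VZ.ev_lift, VZ.ev_NF]⟩
  · -- congruence characterization
    intro u v
    constructor
    · intro h
      refine Con.trans _ (VZ.toNF e Lb hL u) ?_
      rw [h]
      exact Con.symm _ (VZ.toNF e Lb hL v)
    · intro h
      have hle : conGen (fun a b => (a, b) ∈ VZ.Rset e) ≤
          Con.ker (FreeMonoid.lift (VZ.pi e)) := by
        apply Con.conGen_le.mpr
        intro a b hab
        exact VZ.rule_pres e hab
      exact hle h
  · -- termination
    intro f hf
    have hdec : ∀ i, VZ.meas VZ.isc (Lb + 2) (FreeMonoid.toList (f (i + 1))) <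
        VZ.meas VZ.isc (Lb + 2) (FreeMonoid.toList (f i)) :=
      fun i => VZ.step_meas e Lb hL (hf i)
    have hb : ∀ i, VZ.meas VZ.isc (Lb + 2) (FreeMonoid.toList (f i)) + i ≤
        VZ.meas VZ.isc (Lb + 2) (FreeMonoid.toList (f 0)) := by
      intro i
      induction i with
      | zero => omega
      | succ n ihn => have := hdec n; omega
    have := hb (VZ.meas VZ.isc (Lb + 2) (FreeMonoid.toList (f 0)) + 1)
    omega
  · -- unique irreducible representatives
    intro g
    refine ⟨FreeMonoid.ofList (VZ.NF e g), ⟨by rw [VZ.ev_lift, VZ.ev_NF], ?_⟩, ?_⟩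
    · rintro ⟨x, u, v, y, ⟨⟨p, q⟩, hpq, hf⟩, hw⟩
      obtain ⟨hu, hv⟩ := Prod.mk.injEq .. ▸ hf
      have hsplit : VZ.NF e g = FreeMonoid.toList x ++ p :: q :: FreeMonoid.toList y := by
        have := congrArg FreeMonoid.toList hw
        simp only [FreeMonoid.toList_ofList] at this
        rw [this, ← hu]
        simp
      exact VZ.noBad (VZ.Shp_NF e g) _ p q _ hsplit hpq
    · rintro w' ⟨hlift, hirr⟩
      rcases VZ.classify (FreeMonoid.toList w') with ⟨xs, p, q, ys, hsplit, hpq⟩ | hs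
      · exfalso
        apply hirr
        exact ⟨FreeMonoid.ofList xs, FreeMonoid.ofList [p, q],
          FreeMonoid.ofList (VZ.NF e (VZ.pi e p * VZ.pi e q)), FreeMonoid.ofList ys,
          ⟨(p, q), hpq, rfl⟩, VZ.decomp_word hsplit⟩
      · have h2 : FreeMonoid.lift (VZ.pi e) w' = VZ.ev e (FreeMonoid.toList w') :=
          VZ.ev_lift e (FreeMonoid.toList w')
        have h3 : VZ.NF e g = FreeMonoid.toList w' := by
          rw [← hlift, h2, VZ.NF_of_shape e hs]
        rw [h3]
        rfl
end
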